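/- arXiv:2601.09646 — 8 statements merged into one kernel-verified Lean document; each statement's English description precedes it below -/
import Mathlib

section
/- Suppose lim_{x→a⁺} s(x) = ∞ and μ extends continuously to x = a with a finite value μ(a). Then μ(a) ≥ 0. Moreover, if μ(a) > 0, then lim_{x→a⁺} s(x)·M[a,x] = 1/μ(a), and consequently ∫_a^{y} M[a,x] s(x) dx < ∞ for every y ∈ (a,b) (the left boundary a is an entrance boundary). -/
open MeasureTheory Filter Set Topology
open scoped Classical

noncomputable section

/-- The state interval `(a, b)` where `a` is real and `b ∈ (a, ∞]`. -/
def stInt (a : ℝ) (b : EReal) : Set ℝ := {x : ℝ | a < x ∧ (x : EReal) < b}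

/-- The filter of approach to the right endpoint `b ∈ (a, ∞]`:
`atTop` when `b = ∞`, and the left-neighborhood filter of `b` otherwise. -/
def atB (b : EReal) : Filter ℝ :=
  if b = ⊤ then Filter.atTop else nhdsWithin b.toReal (Set.Iio b.toReal)

/-- The scale density `s(x) = exp(-∫_{x₀}^x 2μ/σ²)`. -/
def sDen (μ σ : ℝ → ℝ) (x₀ x : ℝ) : ℝ :=
  Real.exp (-(∫ y in x₀..x, 2 * μ y / (σ y) ^ 2))

/-- The speed density `m(x) = 2/(σ(x)² s(x))`. -/
def mDen (μ σ : ℝ → ℝ) (x₀ x : ℝ) : ℝ :=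
  2 / ((σ x) ^ 2 * sDen μ σ x₀ x)

/-- `M[a,x] = ∫_a^x m(u) du`. -/
def Mab (μ σ : ℝ → ℝ) (x₀ a x : ℝ) : ℝ :=
  ∫ u in Set.Ioo a x, mDen μ σ x₀ u

/-- The time potential `ξ(x) = ∫_{x₀}^x M[a,v] s(v) dv`. -/
def xiF (μ σ : ℝ → ℝ) (x₀ a x : ℝ) : ℝ :=
  ∫ v in x₀..x, Mab μ σ x₀ a v * sDen μ σ x₀ v

/-- The running reward potential `g(x) = ∫_{x₀}^x (∫_a^v c(u) m(u) du) s(v) dv`. -/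
def gF (μ σ c : ℝ → ℝ) (x₀ a x : ℝ) : ℝ :=
  ∫ v in x₀..x, (∫ u in Set.Ioo a v, c u * mDen μ σ x₀ u) * sDen μ σ x₀ v

/-- `h(x) = (∫_a^x (γ c(u) + p μ(u)) m(u) du) / M[a,x]`. -/
def hF (μ σ c : ℝ → ℝ) (x₀ a p γ x : ℝ) : ℝ :=
  (∫ u in Set.Ioo a x, (γ * c u + p * μ u) * mDen μ σ x₀ u) / Mab μ σ x₀ a x

/-- The long-term average reward `F(w,y)` of the `(w,y)`-impulse policy. -/
def FF (μ σ c : ℝ → ℝ) (x₀ a p K γ w y : ℝ) : ℝ :=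
  (p * (y - w) - K + γ * (gF μ σ c x₀ a y - gF μ σ c x₀ a w)) /
    (xiF μ σ x₀ a y - xiF μ σ x₀ a w)

/-- `c̄(b)`: equals `⟨c,π⟩` when `M[a,b] < ∞` and the boundary value `c(b)` otherwise. -/
def cbar (μ σ c : ℝ → ℝ) (x₀ a : ℝ) (b : EReal) (cb : ℝ) : ℝ :=
  if MeasureTheory.IntegrableOn (mDen μ σ x₀) (stInt a b) MeasureTheory.volume then
    (∫ u in stInt a b, c u * mDen μ σ x₀ u) / (∫ u in stInt a b, mDen μ σ x₀ u)
  else cb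

theorem statement0    (a : ℝ) (b : EReal) (hab : (a : EReal) < b)
    (μ σ : ℝ → ℝ) (x₀ : ℝ) (hx₀ : x₀ ∈ stInt a b)
    (hμcont : ContinuousOn μ (stInt a b)) (hσcont : ContinuousOn σ (stInt a b))
    (hσpos : ∀ x ∈ stInt a b, 0 < (σ x) ^ 2)
    (hMfin : ∀ x ∈ stInt a b, IntegrableOn (mDen μ σ x₀) (Set.Ioo a x))
    (hsa : Tendsto (sDen μ σ x₀) (𝓝[>] a) atTop)
    (μa : ℝ) (hμa : Tendsto μ (𝓝[>] a) (𝓝 μa))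
    :
    0 ≤ μa ∧
    (0 < μa →
      Tendsto (fun x => sDen μ σ x₀ x * Mab μ σ x₀ a x) (𝓝[>] a) (𝓝 (1 / μa)) ∧
      ∀ y ∈ stInt a b,
        IntegrableOn (fun x => Mab μ σ x₀ a x * sDen μ σ x₀ x) (Set.Ioo a y)) := by
  set I := stInt a b with hIdef
  have hIopen : IsOpen I := by
    have : I = Set.Ioi a ∩ ((↑) : ℝ → EReal) ⁻¹' Set.Iio b := rfl
    rw [this]
    exact isOpen_Ioi.inter (isOpen_Iio.preimage continuous_coe_real_ereal)
  have hOC : I.OrdConnected := by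
    constructor
    rintro x ⟨hx1, hx2⟩ z ⟨hz1, hz2⟩ u ⟨hu1, hu2⟩
    exact ⟨lt_of_lt_of_le hx1 hu1, lt_of_le_of_lt (EReal.coe_le_coe_iff.2 hu2) hz2⟩
  have hIooI : ∀ x ∈ I, Set.Ioo a x ⊆ I := by
    rintro x ⟨hx1, hx2⟩ u ⟨hu1, hu2⟩
    exact ⟨hu1, lt_trans (EReal.coe_lt_coe_iff.2 hu2) hx2⟩
  -- drift ratio
  set r : ℝ → ℝ := fun y => 2 * μ y / (σ y) ^ 2 with hrdef
  have hrcont : ContinuousOn r I :=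
    (continuousOn_const.mul hμcont).div (hσcont.pow 2) fun x hx => (hσpos x hx).ne'
  set F : ℝ → ℝ := fun x => ∫ y in x₀..x, r y with hFdef
  have hFderiv : ∀ x ∈ I, HasDerivAt F (r x) x := by
    intro x hx
    exact intervalIntegral.integral_hasDerivAt_right
      ((hrcont.mono (hOC.uIcc_subset hx₀ hx)).intervalIntegrable)
      (hrcont.stronglyMeasurableAtFilter hIopen x hx)
      (hrcont.continuousAt (hIopen.mem_nhds hx))
  have hseq : ∀ x, sDen μ σ x₀ x = Real.exp (-(F x)) := fun _ => rfl
  have hspos : ∀ x, 0 < sDen μ σ x₀ x := fun x => Real.exp_pos _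
  have hsderiv : ∀ x ∈ I, HasDerivAt (sDen μ σ x₀) (-(r x) * sDen μ σ x₀ x) x := by
    intro x hx
    have h := ((hFderiv x hx).neg).exp
    change HasDerivAt (sDen μ σ x₀) _ x at h
    convert h using 1
    rw [hseq, Pi.neg_apply]
    ring
  have hscont : ContinuousOn (sDen μ σ x₀) I :=
    fun x hx => ((hsderiv x hx).continuousAt).continuousWithinAt
  have hmcont : ContinuousOn (mDen μ σ x₀) I :=
    continuousOn_const.div ((hσcont.pow 2).mul hscont)
      (fun x hx => (mul_pos (hσpos x hx) (hspos x)).ne')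
  have hmnonneg : ∀ x ∈ I, 0 ≤ mDen μ σ x₀ x := fun x hx =>
    div_nonneg (by norm_num) (mul_pos (hσpos x hx) (hspos x)).le
  -- additivity of M
  have hMkey : ∀ x ∈ I, ∀ z ∈ I, x ≤ z →
      Mab μ σ x₀ a z = Mab μ σ x₀ a x + ∫ u in x..z, mDen μ σ x₀ u := by
    intro x hx z hz hxz
    have hIccI : Set.Icc x z ⊆ I := hOC.out hx hz
    have hint2 : IntegrableOn (mDen μ σ x₀) (Set.Ico x z) :=
      ((hmcont.mono hIccI).integrableOn_Icc).mono_set Set.Ico_subset_Icc_self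
    have hdisj : Disjoint (Set.Ioo a x) (Set.Ico x z) := by
      apply Set.disjoint_left.2
      rintro u ⟨_, hu2⟩ ⟨hu3, _⟩
      exact absurd hu3 (not_le.2 hu2)
    have hunion : Set.Ioo a x ∪ Set.Ico x z = Set.Ioo a z :=
      Set.Ioo_union_Ico_eq_Ioo hx.1 hxz
    rw [Mab, ← hunion, setIntegral_union hdisj measurableSet_Ico (hMfin x hx) hint2]
    rw [Mab, intervalIntegral.integral_of_le hxz, integral_Ico_eq_integral_Ioo,
      integral_Ioc_eq_integral_Ioo]
  have hMadd : ∀ x ∈ I, ∀ z ∈ I,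
      Mab μ σ x₀ a z = Mab μ σ x₀ a x + ∫ u in x..z, mDen μ σ x₀ u := by
    intro x hx z hz
    rcases le_total x z with h | h
    · exact hMkey x hx z hz h
    · have := hMkey z hz x hx h
      rw [intervalIntegral.integral_symm]
      linarith
  have hMderiv : ∀ x ∈ I, HasDerivAt (Mab μ σ x₀ a) (mDen μ σ x₀ x) x := by
    intro x hx
    have h1 : HasDerivAt (fun z => Mab μ σ x₀ a x + ∫ u in x..z, mDen μ σ x₀ u)
        (mDen μ σ x₀ x) x := by
      exact (intervalIntegral.integral_hasDerivAt_right
        (IntervalIntegrable.refl)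
        (hmcont.stronglyMeasurableAtFilter hIopen x hx)
        (hmcont.continuousAt (hIopen.mem_nhds hx))).const_add _
    exact h1.congr_of_eventuallyEq
      (Filter.eventuallyEq_of_mem (hIopen.mem_nhds hx) (fun z hz => hMadd x hx z hz))
  have hMcont : ContinuousOn (Mab μ σ x₀ a) I :=
    fun x hx => ((hMderiv x hx).continuousAt).continuousWithinAt
  -- M tends to 0 at a from the right
  have hm_int : IntegrableOn (mDen μ σ x₀) (Set.Ioo a x₀) := hMfin x₀ hx₀
  have hMtendsto : Tendsto (Mab μ σ x₀ a) (𝓝[>] a) (𝓝 0) := by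
    have key : Tendsto (fun x => ∫ u in Set.Ioo a x₀, (Set.Ioo a x).indicator (mDen μ σ x₀) u)
        (𝓝[>] a) (𝓝 (∫ _u in Set.Ioo a x₀, (0:ℝ))) := by
      apply tendsto_integral_filter_of_dominated_convergence (fun u => ‖mDen μ σ x₀ u‖)
      · exact Filter.Eventually.of_forall fun x =>
          (hm_int.aestronglyMeasurable).indicator measurableSet_Ioo
      · exact Filter.Eventually.of_forall fun x =>
          ae_of_all _ fun u => norm_indicator_le_norm_self _ _
      · exact hm_int.norm
      · apply ae_of_all
        intro u
        rcases le_or_gt u a with h | h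
        · refine tendsto_const_nhds.congr fun x => ?_
          exact (Set.indicator_of_notMem (fun hu => absurd hu.1 (not_lt.2 h)) _).symm
        · refine Tendsto.congr' ?_ tendsto_const_nhds
          filter_upwards [Ioo_mem_nhdsGT h] with x hx
          exact (Set.indicator_of_notMem (fun hu => absurd hu.2 (not_lt.2 hx.2.le)) _).symm
    rw [integral_zero] at key
    refine Tendsto.congr' ?_ key
    filter_upwards [Ioo_mem_nhdsGT hx₀.1] with x hx
    rw [setIntegral_indicator measurableSet_Ioo, Set.Ioo_inter_Ioo, sup_idem,
      min_eq_right hx.2.le, Mab]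
  have hevI : ∀ᶠ x in 𝓝[>] a, x ∈ I := by
    filter_upwards [Ioo_mem_nhdsGT hx₀.1] with x hx
    exact hIooI x₀ hx₀ hx
  constructor
  · -- μa ≥ 0
    by_contra hneg
    push_neg at hneg
    have hμneg : ∀ᶠ x in 𝓝[>] a, μ x < 0 := hμa.eventually (eventually_lt_nhds hneg)
    have hS : {x | μ x < 0 ∧ x ∈ I} ∈ 𝓝[>] a := (hμneg.and hevI)
    rw [mem_nhdsGT_iff_exists_Ioo_subset] at hS
    obtain ⟨u, hu, hsub⟩ := hS
    set a₂ := min u x₀ with ha₂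
    have ha₂a : a < a₂ := lt_min hu hx₀.1
    set a₃ := (a + a₂) / 2 with ha₃
    have h1 : a < a₃ := by simp only [ha₃]; linarith
    have h2 : a₃ < a₂ := by simp only [ha₃]; linarith
    have ha₃u : a₃ ∈ Set.Ioo a u := ⟨h1, lt_of_lt_of_le h2 (min_le_left _ _)⟩
    have ha₃I : a₃ ∈ I := (hsub ha₃u).2
    set C := ∫ y in a₃..x₀, r y with hC
    have hbound : ∀ x ∈ Set.Ioo a a₃, sDen μ σ x₀ x ≤ Real.exp C := by
      intro x hx
      have hxu : x ∈ Set.Ioo a u := ⟨hx.1, lt_trans hx.2 ha₃u.2⟩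
      have hxI : x ∈ I := (hsub hxu).2
      have hint1 : IntervalIntegrable r volume x a₃ :=
        (hrcont.mono (hOC.uIcc_subset hxI ha₃I)).intervalIntegrable
      have hint2 : IntervalIntegrable r volume a₃ x₀ :=
        (hrcont.mono (hOC.uIcc_subset ha₃I hx₀)).intervalIntegrable
      have hle : (∫ y in x..a₃, r y) ≤ 0 := by
        have h0 : 0 ≤ ∫ y in x..a₃, -(r y) := by
          apply intervalIntegral.integral_nonneg hx.2.le
          intro y hy
          have hyu : y ∈ Set.Ioo a u := ⟨lt_of_lt_of_le hx.1 hy.1,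
            lt_of_le_of_lt hy.2 ha₃u.2⟩
          have hμy := (hsub hyu).1
          have : r y ≤ 0 :=
            div_nonpos_of_nonpos_of_nonneg (by linarith) (hσpos y (hsub hyu).2).le
          linarith
        rw [intervalIntegral.integral_neg] at h0
        linarith
      have hFx : -(F x) = (∫ y in x..a₃, r y) + C := by
        rw [hC, intervalIntegral.integral_add_adjacent_intervals hint1 hint2]
        simp only [hFdef]
        rw [intervalIntegral.integral_symm, neg_neg]
      rw [hseq, hFx]
      exact Real.exp_le_exp.2 (by linarith)
    obtain ⟨x, hx1, hx2⟩ := ((hsa.eventually (eventually_gt_atTop (Real.exp C))).and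
      (Ioo_mem_nhdsGT h1 : Set.Ioo a a₃ ∈ 𝓝[>] a)).exists
    exact absurd (hbound x hx2) (not_le.2 hx1)
  · intro hpos
    have hμev : ∀ᶠ x in 𝓝[>] a, 0 < μ x := hμa.eventually (eventually_gt_nhds hpos)
    have hff' : ∀ᶠ x in 𝓝[>] a, HasDerivAt (Mab μ σ x₀ a) (mDen μ σ x₀ x) x := by
      filter_upwards [hevI] with x hx; exact hMderiv x hx
    have hgg' : ∀ᶠ x in 𝓝[>] a,
        HasDerivAt (fun z => (sDen μ σ x₀ z)⁻¹) (r x / sDen μ σ x₀ x) x := by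
      filter_upwards [hevI] with x hx
      have h := (hsderiv x hx).inv (hspos x).ne'
      refine HasDerivAt.congr_deriv h ?_
      have hs := (hspos x).ne'
      rw [div_eq_div_iff (pow_ne_zero 2 hs) hs]
      ring
    have hg' : ∀ᶠ x in 𝓝[>] a, r x / sDen μ σ x₀ x ≠ 0 := by
      filter_upwards [hevI, hμev] with x hx hμx
      exact (div_pos (div_pos (by linarith) (hσpos x hx)) (hspos x)).ne'
    have hga : Tendsto (fun x => (sDen μ σ x₀ x)⁻¹) (𝓝[>] a) (𝓝 0) :=
      hsa.inv_tendsto_atTop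
    have hdiv : Tendsto (fun x => mDen μ σ x₀ x / (r x / sDen μ σ x₀ x)) (𝓝[>] a)
        (𝓝 (1 / μa)) := by
      refine Tendsto.congr' ?_ (tendsto_const_nhds.div hμa hpos.ne')
      filter_upwards [hevI, hμev] with x hx hμx
      have hs := (hspos x).ne'
      have hσ := (hσpos x hx).ne'
      have hμ := hμx.ne'
      rw [mDen]
      show (1:ℝ) / μ x = 2 / (σ x ^ 2 * sDen μ σ x₀ x) / (2 * μ x / σ x ^ 2 / sDen μ σ x₀ x)
      field_simp
      exact (div_self (fun h => hσ (by simp [h]))).symm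
    have hlim0 := HasDerivAt.lhopital_zero_nhdsGT hff' hgg' hg' hMtendsto hga hdiv
    have hlim : Tendsto (fun x => sDen μ σ x₀ x * Mab μ σ x₀ a x) (𝓝[>] a) (𝓝 (1 / μa)) := by
      refine hlim0.congr fun x => ?_
      rw [div_eq_mul_inv, inv_inv, mul_comm]
    refine ⟨hlim, ?_⟩
    intro y hy
    set C := ‖1 / μa‖ + 1 with hCdef
    have hev2 : ∀ᶠ x in 𝓝[>] a, ‖sDen μ σ x₀ x * Mab μ σ x₀ a x‖ ≤ C :=
      hlim.norm.eventually (eventually_le_nhds (lt_add_one _))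
    have hS : {x | ‖sDen μ σ x₀ x * Mab μ σ x₀ a x‖ ≤ C ∧ x ∈ I} ∈ 𝓝[>] a :=
      hev2.and hevI
    rw [mem_nhdsGT_iff_exists_Ioo_subset] at hS
    obtain ⟨u, hu, hsub⟩ := hS
    set c := min u y with hcdef
    have hca : a < c := lt_min hu hy.1
    have hcy : c ≤ y := min_le_right _ _
    have hcI : c ∈ I := ⟨hca, lt_of_le_of_lt (EReal.coe_le_coe_iff.2 hcy) hy.2⟩
    have hPcont : ContinuousOn (fun x => Mab μ σ x₀ a x * sDen μ σ x₀ x) I :=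
      hMcont.mul hscont
    have hint1 : IntegrableOn (fun x => Mab μ σ x₀ a x * sDen μ σ x₀ x) (Set.Ioo a c) := by
      have hb : IntegrableOn (fun _ : ℝ => C) (Set.Ioo a c) volume :=
        integrableOn_const measure_Ioo_lt_top.ne
      refine Integrable.mono' hb
        ((hPcont.mono (fun x hx => hIooI c hcI hx)).aestronglyMeasurable measurableSet_Ioo) ?_
      refine (ae_restrict_iff' measurableSet_Ioo).2 (ae_of_all _ fun x hx => ?_)
      have hxu : x ∈ Set.Ioo a u := ⟨hx.1, lt_of_lt_of_le hx.2 (min_le_left _ _)⟩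
      calc ‖Mab μ σ x₀ a x * sDen μ σ x₀ x‖
          = ‖sDen μ σ x₀ x * Mab μ σ x₀ a x‖ := by rw [mul_comm]
        _ ≤ C := (hsub hxu).1
    have hint2 : IntegrableOn (fun x => Mab μ σ x₀ a x * sDen μ σ x₀ x) (Set.Ico c y) :=
      ((hPcont.mono (hOC.out hcI hy)).integrableOn_Icc).mono_set Set.Ico_subset_Icc_self
    refine (hint1.union hint2).mono_set ?_
    intro x hx
    rcases lt_or_ge x c with h | h
    · exact Or.inl ⟨hx.1, h⟩
    · exact Or.inr ⟨h, hx.2⟩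
end
end

section
/- Suppose lim_{x→a⁺} s(x) = ∞, lim_{x→b} s(x)·M[a,x] = ∞, μ extends continuously to x = a with a finite value μ(a), and μ(x) converges to a limit in [−∞,∞] as x → b. If M[a,b] = ∫_a^b m(u) du < ∞, then the integral ∫_a^b μ(u) m(u) du converges and equals 0; equivalently, the mean of μ with respect to the probability measure π(du) = m(u) du / M[a,b] on (a,b) is zero. -/
open MeasureTheory Filter Set Topology
open scoped Classical

noncomputable section

theorem statement2    (a : ℝ) (b : EReal) (hab : (a : EReal) < b)
    (μ σ : ℝ → ℝ) (x₀ : ℝ) (hx₀ : x₀ ∈ stInt a b)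
    (hμcont : ContinuousOn μ (stInt a b)) (hσcont : ContinuousOn σ (stInt a b))
    (hσpos : ∀ x ∈ stInt a b, 0 < (σ x) ^ 2)
    (hMfin : ∀ x ∈ stInt a b, IntegrableOn (mDen μ σ x₀) (Set.Ioo a x))
    (hsa : Tendsto (sDen μ σ x₀) (𝓝[>] a) atTop)
    (hsMb : Tendsto (fun x => sDen μ σ x₀ x * Mab μ σ x₀ a x) (atB b) atTop)
    (μa : ℝ) (hμa : Tendsto μ (𝓝[>] a) (𝓝 μa))
    (hμb : ∃ L : EReal, Tendsto (fun x => ((μ x : ℝ) : EReal)) (atB b) (𝓝 L))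
    (hMint : IntegrableOn (mDen μ σ x₀) (stInt a b)) :
    IntegrableOn (fun u => μ u * mDen μ σ x₀ u) (stInt a b) ∧
    ∫ u in stInt a b, μ u * mDen μ σ x₀ u = 0 := by
  obtain ⟨hax₀, hx₀b⟩ := hx₀
  set S := stInt a b with hS_def
  set q : ℝ → ℝ := fun y => 2 * μ y / σ y ^ 2 with hq_def
  set F : ℝ → ℝ := fun x => ∫ y in x₀..x, q y with hF_def
  set f : ℝ → ℝ := fun x => Real.exp (F x) with hf_def
  set g : ℝ → ℝ := fun u => μ u * mDen μ σ x₀ u with hg_def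
  have hbbot : b ≠ ⊥ := by
    intro h; rw [h] at hab; exact (not_lt_bot hab)
  -- basic set facts
  have hSopen : IsOpen S := by
    have : S = Ioi a ∩ ((↑) : ℝ → EReal) ⁻¹' Iio b := rfl
    rw [this]
    exact isOpen_Ioi.inter (isOpen_Iio.preimage continuous_coe_real_ereal)
  have hSconn : ∀ {x y : ℝ}, x ∈ S → y ∈ S → Icc x y ⊆ S := by
    intro x y hx hy z hz
    exact ⟨lt_of_lt_of_le hx.1 hz.1, lt_of_le_of_lt (EReal.coe_le_coe_iff.2 hz.2) hy.2⟩
  have hSsub : ∀ {x : ℝ}, x ∈ S → Ioo a x ⊆ S := by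
    intro x hx y hy
    exact ⟨hy.1, lt_trans (EReal.coe_lt_coe_iff.2 hy.2) hx.2⟩
  have hx₀S : x₀ ∈ S := ⟨hax₀, hx₀b⟩
  -- filter facts
  have hBne : (atB b).NeBot := by
    rcases eq_or_ne b ⊤ with rfl | hbne
    · rw [atB, if_pos rfl]; infer_instance
    · rw [atB, if_neg hbne]; infer_instance
  have hBcg : (atB b).IsCountablyGenerated := by
    rcases eq_or_ne b ⊤ with rfl | hbne
    · rw [atB, if_pos rfl]; infer_instance
    · rw [atB, if_neg hbne]; infer_instance
  have hev : ∀ y ∈ S, ∀ᶠ x in atB b, y < x ∧ x ∈ S := by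
    intro y hy
    rcases eq_or_ne b ⊤ with rfl | hbne
    · rw [atB, if_pos rfl]
      filter_upwards [eventually_gt_atTop y] with x hx
      exact ⟨hx, lt_trans hy.1 hx, EReal.coe_lt_top _⟩
    · rw [atB, if_neg hbne]
      have hbr : b = ((b.toReal : ℝ) : EReal) := (EReal.coe_toReal hbne hbbot).symm
      have hyr : y < b.toReal := EReal.coe_lt_coe_iff.1 (hbr ▸ hy.2)
      filter_upwards [Ioo_mem_nhdsLT_of_mem ⟨hyr, le_refl _⟩] with x hx
      exact ⟨hx.1, lt_trans hy.1 hx.1, hbr ▸ EReal.coe_lt_coe_iff.2 hx.2⟩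
  have hslice : ∀ P : ℝ → Prop, (∀ᶠ x in atB b, P x) →
      ∃ c ∈ S, x₀ ≤ c ∧ ∀ x ∈ S, c < x → P x := by
    intro P hP
    rcases eq_or_ne b ⊤ with rfl | hbne
    · rw [atB, if_pos rfl] at hP
      obtain ⟨c₀, hc₀⟩ := eventually_atTop.1 hP
      refine ⟨max c₀ x₀, ⟨lt_of_lt_of_le hax₀ (le_max_right _ _), EReal.coe_lt_top _⟩,
        le_max_right _ _, fun x _ hcx => hc₀ x (le_of_lt (lt_of_le_of_lt (le_max_left _ _) hcx))⟩
    · rw [atB, if_neg hbne] at hP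
      have hbr : b = ((b.toReal : ℝ) : EReal) := (EReal.coe_toReal hbne hbbot).symm
      have hx₀r : x₀ < b.toReal := EReal.coe_lt_coe_iff.1 (hbr ▸ hx₀b)
      obtain ⟨l, hl, hsub⟩ := mem_nhdsLT_iff_exists_Ioo_subset.1 hP
      refine ⟨max l x₀, ⟨lt_of_lt_of_le hax₀ (le_max_right _ _),
        hbr ▸ EReal.coe_lt_coe_iff.2 (max_lt hl hx₀r)⟩, le_max_right _ _, ?_⟩
      intro x hx hcx
      exact hsub ⟨lt_of_le_of_lt (le_max_left _ _) hcx, EReal.coe_lt_coe_iff.1 (hbr ▸ hx.2)⟩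
  -- continuity facts
  have hqcont : ContinuousOn q S := by
    exact (continuousOn_const.mul hμcont).div (hσcont.pow 2) (fun x hx => (hσpos x hx).ne')
  have hSOC : Set.OrdConnected S := ⟨fun x hx y hy => hSconn hx hy⟩
  have hderivF : ∀ x ∈ S, HasDerivAt F (q x) x := by
    intro x hx
    exact intervalIntegral.integral_hasDerivAt_right
      ((hqcont.mono (hSOC.uIcc_subset hx₀S hx)).intervalIntegrable)
      (hqcont.stronglyMeasurableAtFilter hSopen x hx)
      (hqcont.continuousAt (hSopen.mem_nhds hx))
  have hsden : ∀ x : ℝ, sDen μ σ x₀ x = (f x)⁻¹ := by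
    intro x
    rw [sDen, hf_def, ← Real.exp_neg]
  have hfpos : ∀ x : ℝ, 0 < f x := fun x => Real.exp_pos _
  have hf' : ∀ x ∈ S, HasDerivAt f (g x) x := by
    intro x hx
    have h1 : HasDerivAt f (Real.exp (F x) * q x) x := (hderivF x hx).exp
    convert h1 using 1
    have hσx : (σ x) ^ 2 ≠ 0 := (hσpos x hx).ne'
    have hsx : sDen μ σ x₀ x = (Real.exp (F x))⁻¹ := by rw [← Real.exp_neg]; rfl
    show μ x * (2 / ((σ x) ^ 2 * sDen μ σ x₀ x)) = Real.exp (F x) * (2 * μ x / (σ x) ^ 2)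
    rw [hsx]
    field_simp
  have hFcont : ContinuousOn F S := fun x hx => ((hderivF x hx).continuousAt).continuousWithinAt
  have hmcont : ContinuousOn (mDen μ σ x₀) S := by
    have h1 : ContinuousOn (fun x => 2 / (σ x ^ 2 * Real.exp (-(F x)))) S :=
      continuousOn_const.div ((hσcont.pow 2).mul
        (Real.continuous_exp.comp_continuousOn hFcont.neg))
        (fun x hx => ne_of_gt (mul_pos (hσpos x hx) (Real.exp_pos _)))
    exact h1.congr fun x _ => rfl
  have hgcont : ContinuousOn g S := hμcont.mul hmcont
  have hmpos : ∀ x ∈ S, 0 < mDen μ σ x₀ x := by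
    intro x hx
    rw [mDen]
    exact div_pos two_pos (mul_pos (hσpos x hx) (Real.exp_pos _))
  -- limits of f
  have hfa : Tendsto f (𝓝[>] a) (𝓝 0) := by
    have h1 : Tendsto (fun x => (sDen μ σ x₀ x)⁻¹) (𝓝[>] a) (𝓝 0) := hsa.inv_tendsto_atTop
    refine h1.congr fun x => ?_
    rw [hsden x, inv_inv]
  have hsb : Tendsto (sDen μ σ x₀) (atB b) atTop := by
    set C := ∫ u in S, mDen μ σ x₀ u with hC
    have hmnn : 0 ≤ᵐ[volume.restrict S] mDen μ σ x₀ :=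
      (ae_restrict_iff' hSopen.measurableSet).2 (ae_of_all _ fun x hx => (hmpos x hx).le)
    have hMle : ∀ x ∈ S, Mab μ σ x₀ a x ≤ C := fun x hx =>
      setIntegral_mono_set hMint hmnn (HasSubset.Subset.eventuallyLE (hSsub hx))
    obtain ⟨ε, hε, hball⟩ := Metric.isOpen_iff.1 hSopen x₀ hx₀S
    have hx₁S : x₀ + ε / 2 ∈ S := by
      apply hball
      rw [Metric.mem_ball, Real.dist_eq]
      rw [abs_of_pos (by linarith)]
      linarith
    have hM₁pos : 0 < Mab μ σ x₀ a (x₀ + ε / 2) := by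
      rw [Mab]
      refine (setIntegral_pos_iff_support_of_nonneg_ae ?_ (hMfin _ hx₁S)).2 ?_
      · exact (ae_restrict_iff' measurableSet_Ioo).2
          (ae_of_all _ fun y hy => (hmpos y (hSsub hx₁S hy)).le)
      · have hsub : Ioo a (x₀ + ε / 2) ⊆
            Function.support (mDen μ σ x₀) ∩ Ioo a (x₀ + ε / 2) := fun y hy =>
          ⟨ne_of_gt (hmpos y (hSsub hx₁S hy)), hy⟩
        refine lt_of_lt_of_le ?_ (measure_mono hsub)
        rw [Real.volume_Ioo]
        exact ENNReal.ofReal_pos.2 (by linarith)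
    have hCpos : 0 < C := lt_of_lt_of_le hM₁pos (hMle _ hx₁S)
    have h1 : Tendsto (fun x => sDen μ σ x₀ x * Mab μ σ x₀ a x / C) (atB b) atTop :=
      hsMb.atTop_div_const hCpos
    refine tendsto_atTop_mono' _ ?_ h1
    filter_upwards [hev x₀ hx₀S] with x hx
    have hsp : 0 < sDen μ σ x₀ x := Real.exp_pos _
    rw [div_le_iff₀ hCpos]
    exact mul_le_mul_of_nonneg_left (hMle x hx.2) hsp.le
  have hfb : Tendsto f (atB b) (𝓝 0) := by
    have h1 : Tendsto (fun x => (sDen μ σ x₀ x)⁻¹) (atB b) (𝓝 0) := hsb.inv_tendsto_atTop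
    refine h1.congr fun x => ?_
    rw [hsden x, inv_inv]
  -- FTC on compact subintervals
  have hFTC : ∀ t x : ℝ, t ∈ S → x ∈ S → t ≤ x →
      ∫ u in Ioc t x, g u = f x - f t := by
    intro t x ht hx htx
    have hs : Icc t x ⊆ S := hSconn ht hx
    have huIcc : uIcc t x = Icc t x := uIcc_of_le htx
    have h1 : ∫ u in t..x, g u = f x - f t := by
      refine intervalIntegral.integral_eq_sub_of_hasDerivAt
        (fun y hy => hf' y (hs (huIcc ▸ hy))) ?_
      exact (hgcont.mono (huIcc ▸ hs)).intervalIntegrable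
    rwa [intervalIntegral.integral_of_le htx] at h1
  -- integrability
  -- piece near a : boundedness of μ
  obtain ⟨c₁, hc₁a, hc₁S, hc₁le, hc₁bd⟩ :
      ∃ c₁, a < c₁ ∧ c₁ ∈ S ∧ c₁ ≤ x₀ ∧ ∀ x ∈ Ioo a c₁, |μ x| ≤ |μa| + 1 := by
    have h1 : ∀ᶠ x in 𝓝[>] a, |μ x| ≤ |μa| + 1 := by
      filter_upwards [Metric.tendsto_nhds.1 hμa 1 one_pos] with x hx
      rw [Real.dist_eq] at hx
      calc |μ x| = |μ x - μa + μa| := by ring_nf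
        _ ≤ |μ x - μa| + |μa| := abs_add_le _ _
        _ ≤ |μa| + 1 := by linarith
    obtain ⟨u, hu, hsub⟩ := mem_nhdsGT_iff_exists_Ioo_subset.1 h1
    refine ⟨min u x₀, lt_min hu hax₀, ⟨lt_min hu hax₀,
      lt_of_le_of_lt (EReal.coe_le_coe_iff.2 (min_le_right _ _)) hx₀b⟩,
      min_le_right _ _, fun x hx => hsub ⟨hx.1, lt_of_lt_of_le hx.2 (min_le_left _ _)⟩⟩
  have hIa : IntegrableOn g (Ioo a c₁) := by
    have hle : ∀ᵐ u ∂(volume.restrict (Ioo a c₁)),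
        ‖g u‖ ≤ ‖(|μa| + 1) * mDen μ σ x₀ u‖ := by
      refine (ae_restrict_iff' measurableSet_Ioo).2 (ae_of_all _ fun u hu => ?_)
      have hm := hmpos u (hSsub hc₁S hu)
      simp only [hg_def, norm_mul, Real.norm_eq_abs]
      rw [abs_of_pos hm, abs_of_nonneg (by positivity : (0:ℝ) ≤ |μa| + 1)]
      exact mul_le_mul_of_nonneg_right (hc₁bd u hu) hm.le
    exact Integrable.mono ((hMint.mono_set (hSsub hc₁S)).const_mul (|μa| + 1))
      ((hgcont.mono (hSsub hc₁S)).aestronglyMeasurable measurableSet_Ioo) hle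
  -- piece near b
  have key : ∀ c₂ ∈ S, ((∃ e : ℝ, |e| = 1 ∧ ∀ x ∈ S, c₂ < x → 0 ≤ e * μ x) ∨
      (∃ B : ℝ, ∀ x ∈ S, c₂ < x → |μ x| ≤ B)) → IntegrableOn g (S ∩ Ioi c₂) := by
    haveI := hBne
    haveI := hBcg
    intro c₂ hc₂S hcase
    have hmeasR : MeasurableSet (S ∩ Ioi c₂) := hSopen.measurableSet.inter measurableSet_Ioi
    rcases hcase with ⟨e, he, hsgn⟩ | ⟨B, hB⟩
    · set φ : ℝ → Set ℝ := fun x => if x ∈ S ∧ c₂ < x then Ioc c₂ x else ∅ with hφ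
      have hφmeas : ∀ x, MeasurableSet (φ x) := by
        intro x; simp only [hφ]; split_ifs
        · exact measurableSet_Ioc
        · exact MeasurableSet.empty
      have hcover : AECover (volume.restrict (S ∩ Ioi c₂)) (atB b) φ := by
        refine ⟨?_, hφmeas⟩
        filter_upwards [ae_restrict_mem hmeasR] with y hy
        filter_upwards [hev y hy.1] with x hx
        have hxcond : x ∈ S ∧ c₂ < x := ⟨hx.2, lt_trans hy.2 hx.1⟩
        simp only [hφ, if_pos hxcond]
        exact ⟨hy.2, hx.1.le⟩
      have hfi : ∀ x, IntegrableOn g (φ x) (volume.restrict (S ∩ Ioi c₂)) := by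
        intro x
        have h0 : IntegrableOn g (φ x) volume := by
          simp only [hφ]; split_ifs with h
          · exact ((hgcont.mono (hSconn hc₂S h.1)).integrableOn_compact
              isCompact_Icc).mono_set Ioc_subset_Icc_self
          · exact integrableOn_empty
        rw [IntegrableOn, Measure.restrict_restrict (hφmeas x)]
        exact h0.mono_set inter_subset_left
      refine hcover.integrable_of_integral_norm_bounded (f c₂ + 1) hfi ?_
      filter_upwards [hev c₂ hc₂S, hfb.eventually (gt_mem_nhds one_pos)] with x hx hfx
      have hxcond : x ∈ S ∧ c₂ < x := ⟨hx.2, hx.1⟩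
      have hsub2 : Ioc c₂ x ⊆ S := fun y hy => hSconn hc₂S hx.2 ⟨hy.1.le, hy.2⟩
      simp only [hφ, if_pos hxcond]
      have hIocsub : Ioc c₂ x ⊆ S ∩ Ioi c₂ := fun y hy => ⟨hsub2 hy, hy.1⟩
      rw [Measure.restrict_restrict measurableSet_Ioc, inter_eq_left.2 hIocsub]
      have hnorm : ∀ y ∈ Ioc c₂ x, ‖g y‖ = e * (g y) := by
        intro y hy
        have hyS : y ∈ S := hsub2 hy
        have h1 : 0 ≤ e * μ y := hsgn y hyS hy.1
        have habs : |μ y| = e * μ y := by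
          rcases (abs_eq one_pos.le).1 he with rfl | rfl
          · rw [one_mul] at h1 ⊢; exact abs_of_nonneg h1
          · rw [neg_one_mul] at h1 ⊢
            rw [abs_of_nonpos (by linarith)]
        simp only [hg_def, norm_mul, Real.norm_eq_abs]
        rw [abs_of_pos (hmpos y hyS), habs]
        ring
      rw [setIntegral_congr_fun measurableSet_Ioc hnorm, integral_const_mul,
        hFTC c₂ x hc₂S hx.2 hx.1.le]
      have h3 : |f x - f c₂| ≤ |f x| + |f c₂| := by
        rw [sub_eq_add_neg]
        exact (abs_add_le _ _).trans (by rw [abs_neg])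
      rw [abs_of_pos (hfpos x), abs_of_pos (hfpos c₂)] at h3
      have h4 : e * (f x - f c₂) ≤ |e * (f x - f c₂)| := le_abs_self _
      rw [abs_mul, he, one_mul] at h4
      linarith
    · have hle : ∀ᵐ u ∂(volume.restrict (S ∩ Ioi c₂)),
          ‖g u‖ ≤ ‖B * mDen μ σ x₀ u‖ := by
        refine (ae_restrict_iff' hmeasR).2 (ae_of_all _ fun u hu => ?_)
        have hm := hmpos u hu.1
        simp only [hg_def, norm_mul, Real.norm_eq_abs]
        rw [abs_of_pos hm]
        exact mul_le_mul_of_nonneg_right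
          (le_trans (hB u hu.1 hu.2) (le_abs_self B)) hm.le
      exact Integrable.mono ((hMint.mono_set inter_subset_left).const_mul B)
        ((hgcont.mono inter_subset_left).aestronglyMeasurable hmeasR) hle
  obtain ⟨c₂, hc₂S, hc₂x₀, hc₂int⟩ :
      ∃ c₂ ∈ S, x₀ ≤ c₂ ∧ IntegrableOn g (S ∩ Ioi c₂) := by
    obtain ⟨L, hL⟩ := hμb
    by_cases hLb : L = ⊥
    · subst hLb
      have hev0 : ∀ᶠ x in atB b, μ x < 0 := by
        have := (EReal.tendsto_nhds_bot_iff_real.1 hL) 0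
        filter_upwards [this] with x hx
        exact_mod_cast hx
      obtain ⟨c₂, hc₂S, hc₂x₀, hP⟩ := hslice _ hev0
      exact ⟨c₂, hc₂S, hc₂x₀, key c₂ hc₂S (Or.inl ⟨-1, by norm_num,
        fun x hx hcx => by nlinarith [hP x hx hcx]⟩)⟩
    · by_cases hLt : L = ⊤
      · subst hLt
        have hev0 : ∀ᶠ x in atB b, 0 < μ x := by
          have := (EReal.tendsto_nhds_top_iff_real.1 hL) 0
          filter_upwards [this] with x hx
          exact_mod_cast hx
        obtain ⟨c₂, hc₂S, hc₂x₀, hP⟩ := hslice _ hev0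
        exact ⟨c₂, hc₂S, hc₂x₀, key c₂ hc₂S (Or.inl ⟨1, by norm_num,
          fun x hx hcx => by nlinarith [hP x hx hcx]⟩)⟩
      · have hLr : L = ((L.toReal : ℝ) : EReal) := (EReal.coe_toReal hLt hLb).symm
        rw [hLr] at hL
        have hμb' : Tendsto μ (atB b) (𝓝 L.toReal) := EReal.tendsto_coe.1 hL
        have hev0 : ∀ᶠ x in atB b, |μ x| ≤ |L.toReal| + 1 := by
          filter_upwards [Metric.tendsto_nhds.1 hμb' 1 one_pos] with x hx
          rw [Real.dist_eq] at hx
          calc |μ x| = |μ x - L.toReal + L.toReal| := by ring_nf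
            _ ≤ |μ x - L.toReal| + |L.toReal| := abs_add_le _ _
            _ ≤ |L.toReal| + 1 := by linarith
        obtain ⟨c₂, hc₂S, hc₂x₀, hP⟩ := hslice _ hev0
        exact ⟨c₂, hc₂S, hc₂x₀, key c₂ hc₂S (Or.inr ⟨|L.toReal| + 1, hP⟩)⟩
  have hInt : IntegrableOn g S := by
    have hsub3 : S ⊆ Ioo a c₁ ∪ (Icc c₁ c₂ ∪ S ∩ Ioi c₂) := by
      intro x hx
      rcases lt_or_ge x c₁ with h | h
      · exact Or.inl ⟨hx.1, h⟩
      rcases le_or_gt x c₂ with h2 | h2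
      · exact Or.inr (Or.inl ⟨h, h2⟩)
      · exact Or.inr (Or.inr ⟨hx, h2⟩)
    refine (hIa.union (((hgcont.mono (hSconn hc₁S hc₂S)).integrableOn_compact
      isCompact_Icc).union hc₂int)).mono_set hsub3
  -- value on left pieces
  haveI := hBne
  haveI := hBcg
  have hL1 : ∀ x ∈ S, ∫ u in Ioc a x, g u = f x := by
    intro x hx
    have hIoo : IntegrableOn g (Ioc a x) := by
      rw [integrableOn_Ioc_iff_integrableOn_Ioo]
      exact hInt.mono_set (hSsub hx)
    have hcover : AECover (volume.restrict (Ioc a x)) (𝓝[>] a) (fun t => Ioc t x) := by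
      refine ⟨?_, fun t => measurableSet_Ioc⟩
      filter_upwards [ae_restrict_mem measurableSet_Ioc] with y hy
      filter_upwards [Ioo_mem_nhdsGT_of_mem ⟨le_refl a, hy.1⟩] with t ht
      exact ⟨ht.2, hy.2⟩
    have hA := hcover.integral_tendsto_of_countably_generated hIoo
    have hA' : Tendsto (fun t => ∫ u in Ioc t x, g u) (𝓝[>] a)
        (𝓝 (∫ u in Ioc a x, g u)) := by
      refine hA.congr' ?_
      filter_upwards [self_mem_nhdsWithin] with t ht
      rw [Measure.restrict_restrict measurableSet_Ioc,
        inter_eq_left.2 (Ioc_subset_Ioc_left (le_of_lt ht))]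
    have hB : Tendsto (fun t => ∫ u in Ioc t x, g u) (𝓝[>] a) (𝓝 (f x - 0)) := by
      refine Tendsto.congr' ?_ (tendsto_const_nhds.sub hfa)
      filter_upwards [Ioo_mem_nhdsGT_of_mem ⟨le_refl a, hx.1⟩] with t ht
      exact (hFTC t x (hSsub hx ht) hx ht.2.le).symm
    have := tendsto_nhds_unique hA' hB
    rwa [sub_zero] at this
  -- limit of left pieces
  have hL2 : Tendsto (fun x => ∫ u in Ioc a x, g u) (atB b) (𝓝 (∫ u in S, g u)) := by
    have hcover : AECover (volume.restrict S) (atB b) (fun x => Ioc a x ∩ S) := by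
      refine ⟨?_, fun x => measurableSet_Ioc.inter hSopen.measurableSet⟩
      filter_upwards [ae_restrict_mem hSopen.measurableSet] with y hy
      filter_upwards [hev y hy] with x hx
      exact ⟨⟨hy.1, hx.1.le⟩, hy⟩
    have hA := hcover.integral_tendsto_of_countably_generated hInt
    refine hA.congr' ?_
    filter_upwards [hev x₀ hx₀S] with x hx
    have hsub2 : Ioc a x ⊆ S := fun y hy =>
      ⟨hy.1, lt_of_le_of_lt (EReal.coe_le_coe_iff.2 hy.2) hx.2.2⟩
    rw [Measure.restrict_restrict (measurableSet_Ioc.inter hSopen.measurableSet)]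
    have heq : Ioc a x ∩ S ∩ S = Ioc a x := by
      rw [inter_assoc, inter_self, inter_eq_left.2 hsub2]
    rw [heq]
  refine ⟨hInt, ?_⟩
  have : Tendsto (fun x => ∫ u in Ioc a x, g u) (atB b) (𝓝 0) := by
    refine hfb.congr' ?_
    filter_upwards [hev x₀ hx₀S] with x hx
    exact (hL1 x hx.2).symm
  exact tendsto_nhds_unique hL2 this
end
end

section
/- Suppose lim_{x→a⁺} s(x) = ∞, lim_{x→b} s(x)·M[a,x] = ∞, μ extends continuously to x = a with a finite value μ(a), and μ(x) converges to a limit in [−∞,∞] as x → b. If M[a,b] = ∫_a^b m(u) du = ∞, then lim_{x→b} μ(x) = 0. -/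
open MeasureTheory Filter Set Topology
open scoped Classical

noncomputable section

theorem statement3    (a : ℝ) (b : EReal) (hab : (a : EReal) < b)
    (μ σ : ℝ → ℝ) (x₀ : ℝ) (hx₀ : x₀ ∈ stInt a b)
    (hμcont : ContinuousOn μ (stInt a b)) (hσcont : ContinuousOn σ (stInt a b))
    (hσpos : ∀ x ∈ stInt a b, 0 < (σ x) ^ 2)
    (hMfin : ∀ x ∈ stInt a b, IntegrableOn (mDen μ σ x₀) (Set.Ioo a x))
    (hsa : Tendsto (sDen μ σ x₀) (𝓝[>] a) atTop)
    (hsMb : Tendsto (fun x => sDen μ σ x₀ x * Mab μ σ x₀ a x) (atB b) atTop)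
    (μa : ℝ) (hμa : Tendsto μ (𝓝[>] a) (𝓝 μa))
    (hμb : ∃ L : EReal, Tendsto (fun x => ((μ x : ℝ) : EReal)) (atB b) (𝓝 L))
    (hMinf : ¬ IntegrableOn (mDen μ σ x₀) (stInt a b)) :
    Tendsto μ (atB b) (𝓝 (0 : ℝ)) := by
  obtain ⟨L, hL⟩ := hμb
  set S : Set ℝ := stInt a b with hSdef
  set F : Filter ℝ := atB b with hFdef
  -- basic facts about S
  have hSmem : ∀ {x : ℝ}, x ∈ S ↔ a < x ∧ (x : EReal) < b := Iff.rfl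
  have hsub : ∀ {x y z : ℝ}, x ∈ S → z ∈ S → x ≤ y → y ≤ z → y ∈ S := by
    intro x y z hx hz hxy hyz
    exact ⟨lt_of_lt_of_le hx.1 hxy, lt_of_le_of_lt (EReal.coe_le_coe_iff.2 hyz) hz.2⟩
  have hOC : S.OrdConnected := ⟨fun x hx z hz y hy => hsub hx hz hy.1 hy.2⟩
  have hIooS : ∀ {x : ℝ}, x ∈ S → Set.Ioo a x ⊆ S := by
    intro x hx u hu
    exact ⟨hu.1, lt_of_le_of_lt (EReal.coe_le_coe_iff.2 hu.2.le) hx.2⟩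
  have hSopen : IsOpen S := by
    have : S = Set.Ioi a ∩ (fun x : ℝ => (x : EReal)) ⁻¹' (Set.Iio b) := by
      ext x; simp [hSdef, stInt, Set.mem_setOf_eq, Set.mem_Ioi, Set.mem_Iio]
    rw [this]
    exact isOpen_Ioi.inter (isOpen_Iio.preimage continuous_coe_real_ereal)
  -- case analysis on b
  have hbne : b ≠ ⊥ := fun h => absurd (h ▸ hab) (by simp)
  have hcase : (b = ⊤ ∧ F = atTop) ∨
      ∃ bR : ℝ, a < bR ∧ b = (bR : EReal) ∧ F = 𝓝[<] bR := by
    by_cases hb : b = ⊤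
    · exact Or.inl ⟨hb, by simp [hFdef, atB, hb]⟩
    · refine Or.inr ⟨b.toReal, ?_, (EReal.coe_toReal hb hbne).symm, by simp [hFdef, atB, hb]⟩
      exact EReal.coe_lt_coe_iff.1 (by rw [EReal.coe_toReal hb hbne]; exact hab)
  have hFne : F.NeBot := by
    rcases hcase with ⟨hb, hFeq⟩ | ⟨bR, habR, hbeq, hFeq⟩
    · rw [hFeq]; exact atTop_neBot
    · rw [hFeq]; exact inferInstance
  have hFS : ∀ᶠ x in F, x ∈ S := by
    rcases hcase with ⟨hb, hFeq⟩ | ⟨bR, habR, hbeq, hFeq⟩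
    · rw [hFeq]
      filter_upwards [eventually_gt_atTop a] with x hx
      exact ⟨hx, hb ▸ EReal.coe_lt_top x⟩
    · rw [hFeq]
      have h1 : ∀ᶠ x in 𝓝[<] bR, x ∈ Set.Ioi a :=
        eventually_nhdsWithin_of_eventually_nhds
          ((isOpen_Ioi.eventually_mem (show a < bR from habR)))
      filter_upwards [h1, self_mem_nhdsWithin] with x h1x h2x
      exact ⟨h1x, hbeq ▸ EReal.coe_lt_coe_iff.2 h2x⟩
  have hF2 : ∀ y ∈ S, ∀ᶠ x in F, y < x := by
    intro y hy
    rcases hcase with ⟨hb, hFeq⟩ | ⟨bR, habR, hbeq, hFeq⟩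
    · rw [hFeq]; exact eventually_gt_atTop y
    · rw [hFeq]
      have hyb : y < bR := EReal.coe_lt_coe_iff.1 (hbeq ▸ hy.2)
      exact eventually_nhdsWithin_of_eventually_nhds (isOpen_Ioi.eventually_mem hyb)
  have hFtail : ∀ p : ℝ → Prop, (∀ᶠ x in F, p x) →
      ∃ c ∈ S, ∀ x ∈ S, c < x → p x := by
    intro p hp
    rcases hcase with ⟨hb, hFeq⟩ | ⟨bR, habR, hbeq, hFeq⟩
    · rw [hFeq] at hp
      obtain ⟨c₀, hc₀⟩ := eventually_atTop.1 hp
      refine ⟨max x₀ c₀, ⟨lt_of_lt_of_le hx₀.1 (le_max_left _ _), hb ▸ EReal.coe_lt_top _⟩,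
        fun x _ hx => hc₀ x (le_of_lt (lt_of_le_of_lt (le_max_right _ _) hx))⟩
    · rw [hFeq] at hp
      have hx₀b : x₀ < bR := EReal.coe_lt_coe_iff.1 (hbeq ▸ hx₀.2)
      obtain ⟨c₀, hc₀b, hc₀⟩ := (mem_nhdsLT_iff_exists_Ioo_subset' hx₀b).1 hp
      refine ⟨max x₀ c₀, ⟨lt_of_lt_of_le hx₀.1 (le_max_left _ _),
        hbeq ▸ EReal.coe_lt_coe_iff.2 (max_lt hx₀b hc₀b)⟩, fun x hxS hx => ?_⟩
      have hxb : x < bR := EReal.coe_lt_coe_iff.1 (hbeq ▸ hxS.2)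
      exact hc₀ ⟨lt_of_le_of_lt (le_max_right _ _) hx, hxb⟩
  -- densities
  have hsPos : ∀ x, 0 < sDen μ σ x₀ x := fun x => Real.exp_pos _
  have hmPos : ∀ x ∈ S, 0 < mDen μ σ x₀ x := fun x hx =>
    div_pos two_pos (mul_pos (hσpos x hx) (hsPos x))
  set f : ℝ → ℝ := fun y => 2 * μ y / σ y ^ 2 with hfdef
  have hfc : ContinuousOn f S :=
    (continuousOn_const.mul hμcont).div (hσcont.pow 2) fun x hx => ne_of_gt (hσpos x hx)
  have hfint : ∀ x₁ ∈ S, ∀ x₂ ∈ S, IntervalIntegrable f volume x₁ x₂ := fun x₁ h₁ x₂ h₂ =>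
    (hfc.mono (hOC.uIcc_subset h₁ h₂)).intervalIntegrable
  set G : ℝ → ℝ := fun x => ∫ y in x₀..x, f y with hGdef
  have hGderiv : ∀ t ∈ S, HasDerivAt G (f t) t := fun t ht =>
    intervalIntegral.integral_hasDerivAt_right (hfint x₀ hx₀ t ht)
      (hfc.stronglyMeasurableAtFilter hSopen t ht)
      (hfc.continuousAt (hSopen.mem_nhds ht))
  have hGcont : ContinuousOn G S := fun t ht =>
    ((hGderiv t ht).continuousAt).continuousWithinAt
  set E : ℝ → ℝ := fun x => Real.exp (G x) with hEdef
  have hEpos : ∀ x, 0 < E x := fun x => Real.exp_pos _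
  have hEderiv : ∀ t ∈ S, HasDerivAt E (f t * E t) t := by
    intro t ht
    have := (hGderiv t ht).exp
    simpa [hEdef, mul_comm] using this
  have hsden_eq : ∀ x, sDen μ σ x₀ x = (E x)⁻¹ := by
    intro x
    rw [hEdef]
    simp only [← Real.exp_neg]
    rfl
  have hmden_eq : ∀ x ∈ S, mDen μ σ x₀ x = 2 * E x / σ x ^ 2 := by
    intro x hx
    have hσne : σ x ^ 2 ≠ 0 := ne_of_gt (hσpos x hx)
    have hEne : E x ≠ 0 := ne_of_gt (hEpos x)
    rw [mDen, hsden_eq x]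
    field_simp
  have hmc : ContinuousOn (mDen μ σ x₀) S := by
    have : ContinuousOn (fun x => 2 * E x / σ x ^ 2) S :=
      (continuousOn_const.mul (Real.continuous_exp.comp_continuousOn hGcont)).div
        (hσcont.pow 2) fun x hx => ne_of_gt (hσpos x hx)
    exact this.congr hmden_eq
  have hmint : ∀ x₁ ∈ S, ∀ x₂ ∈ S, IntervalIntegrable (mDen μ σ x₀) volume x₁ x₂ :=
    fun x₁ h₁ x₂ h₂ => (hmc.mono (hOC.uIcc_subset h₁ h₂)).intervalIntegrable
  -- key FTC identity
  have hkey : ∀ x₁ ∈ S, ∀ x ∈ S, x₁ ≤ x →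
      (∫ u in x₁..x, μ u * mDen μ σ x₀ u) = E x - E x₁ := by
    intro x₁ h₁ x h₂ hle
    have hsubU : Set.uIcc x₁ x ⊆ S := hOC.uIcc_subset h₁ h₂
    refine intervalIntegral.integral_eq_sub_of_hasDerivAt (fun t ht => ?_) ?_
    · have htS : t ∈ S := hsubU ht
      have := hEderiv t htS
      have heq : μ t * mDen μ σ x₀ t = f t * E t := by
        rw [hmden_eq t htS, hfdef]
        have hσne : σ t ^ 2 ≠ 0 := ne_of_gt (hσpos t htS)
        field_simp
      rw [heq]
      exact this
    · exact ((hμcont.mono hsubU).mul (hmc.mono hsubU)).intervalIntegrable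
  -- difference of M
  have hMdiff : ∀ x₁ ∈ S, ∀ x ∈ S, x₁ ≤ x →
      Mab μ σ x₀ a x - Mab μ σ x₀ a x₁ = ∫ u in x₁..x, mDen μ σ x₀ u := by
    intro x₁ h₁ x h₂ hle
    have hU : Set.Ioo a x₁ ∪ Set.Ico x₁ x = Set.Ioo a x := Set.Ioo_union_Ico_eq_Ioo h₁.1 hle
    have hdisj : Disjoint (Set.Ioo a x₁) (Set.Ico x₁ x) := by
      apply Set.disjoint_left.2
      rintro u ⟨_, hu2⟩ ⟨hu3, _⟩
      exact absurd hu3 (not_le.2 hu2)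
    have hint : IntegrableOn (mDen μ σ x₀) (Set.Ioo a x) := hMfin x h₂
    have h1 : IntegrableOn (mDen μ σ x₀) (Set.Ioo a x₁) :=
      hint.mono_set (hU ▸ Set.subset_union_left)
    have h2 : IntegrableOn (mDen μ σ x₀) (Set.Ico x₁ x) :=
      hint.mono_set (hU ▸ Set.subset_union_right)
    have := setIntegral_union hdisj measurableSet_Ico h1 h2
    rw [hU] at this
    rw [Mab, Mab, this, MeasureTheory.integral_Ico_eq_integral_Ioo,
      intervalIntegral.integral_of_le hle, MeasureTheory.integral_Ioc_eq_integral_Ioo]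
    ring
  have hMnonneg : ∀ x ∈ S, 0 ≤ Mab μ σ x₀ a x := fun x hx =>
    setIntegral_nonneg measurableSet_Ioo fun u hu => (hmPos u (hIooS hx hu)).le
  have hMmono : ∀ x₁ ∈ S, ∀ x ∈ S, x₁ ≤ x → Mab μ σ x₀ a x₁ ≤ Mab μ σ x₀ a x := by
    intro x₁ h₁ x h₂ hle
    have hd := hMdiff x₁ h₁ x h₂ hle
    have hnn : 0 ≤ ∫ u in x₁..x, mDen μ σ x₀ u := by
      apply intervalIntegral.integral_nonneg hle
      intro u hu
      exact (hmPos u (hsub h₁ h₂ hu.1 hu.2)).le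
    linarith
  -- unboundedness of M
  have hMub : ∀ C : ℝ, ∃ x ∈ S, C ≤ Mab μ σ x₀ a x := by
    intro C
    by_contra hcon
    push_neg at hcon
    apply hMinf
    have hbound : ∀ x ∈ S, (∫ u in Set.Ioo a x, ‖mDen μ σ x₀ u‖) ≤ C := by
      intro x hx
      have : (∫ u in Set.Ioo a x, ‖mDen μ σ x₀ u‖) = ∫ u in Set.Ioo a x, mDen μ σ x₀ u := by
        apply setIntegral_congr_fun measurableSet_Ioo
        intro u hu
        exact Real.norm_of_nonneg (hmPos u (hIooS hx hu)).le
      rw [this]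
      exact (hcon x hx).le
    rcases hcase with ⟨hb, hFeq⟩ | ⟨bR, habR, hbeq, hFeq⟩
    · have hSeq : S = Set.Ioi a := by
        ext x; simp [hSdef, stInt, hb, Set.mem_Ioi]
      rw [hSdef] at hSeq ⊢
      rw [hSeq]
      have hmemn : ∀ n : ℕ, x₀ + n ∈ S := fun n =>
        ⟨lt_of_lt_of_le hx₀.1 (le_add_of_nonneg_right n.cast_nonneg), hb ▸ EReal.coe_lt_top _⟩
      refine integrableOn_Ioi_of_intervalIntegral_norm_bounded (l := (atTop : Filter ℕ)) C a
        (b := fun n : ℕ => x₀ + n) (fun n => ?_) ?_ (Filter.Eventually.of_forall fun n => ?_)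
      · exact (integrableOn_Ioc_iff_integrableOn_Ioo).2 (hMfin _ (hmemn n))
      · exact tendsto_atTop_add_const_left _ _ tendsto_natCast_atTop_atTop
      · have hle : a ≤ x₀ + n := le_of_lt (hmemn n).1
        rw [intervalIntegral.integral_of_le hle, MeasureTheory.integral_Ioc_eq_integral_Ioo]
        exact hbound _ (hmemn n)
    · have hSeq : S = Set.Ioo a bR := by
        ext x; simp [hSdef, stInt, hbeq, Set.mem_Ioo, EReal.coe_lt_coe_iff]
      have hx₀b : x₀ < bR := EReal.coe_lt_coe_iff.1 (hbeq ▸ hx₀.2)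
      set u : ℕ → ℝ := fun n => bR - (bR - x₀) / (n + 1) with hudef
      have humem : ∀ n : ℕ, u n ∈ S := by
        intro n
        have h1 : (0:ℝ) < bR - x₀ := by linarith
        have h2 : (0:ℝ) < (n:ℝ) + 1 := by positivity
        have h3 : (bR - x₀) / (n + 1) ≤ bR - x₀ := by
          rw [div_le_iff₀ h2]
          nlinarith [(n.cast_nonneg : (0:ℝ) ≤ (n:ℝ))]
        have h4 : (0:ℝ) < (bR - x₀) / (n + 1) := div_pos h1 h2
        refine ⟨lt_of_lt_of_le hx₀.1 ?_, hbeq ▸ EReal.coe_lt_coe_iff.2 (by simp [hudef]; linarith)⟩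
        simp only [hudef]
        linarith
      have hulim : Tendsto u atTop (𝓝 bR) := by
        have h0 : Tendsto (fun n : ℕ => (bR - x₀) / (n + 1)) atTop (𝓝 0) := by
          apply Tendsto.const_div_atTop
          exact tendsto_atTop_add_const_right _ _ tendsto_natCast_atTop_atTop
        have := (tendsto_const_nhds (x := bR) (f := atTop (α := ℕ))).sub h0
        simpa using this
      rw [hSdef] at hSeq ⊢
      rw [hSeq]
      have hIoc : IntegrableOn (mDen μ σ x₀) (Set.Ioc a bR) := by
        refine integrableOn_Ioc_of_intervalIntegral_norm_bounded_right (I := C)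
          (fun n => (integrableOn_Ioc_iff_integrableOn_Ioo).2 (hMfin _ (humem n)))
          hulim (Filter.Eventually.of_forall fun n => ?_)
        rw [MeasureTheory.integral_Ioc_eq_integral_Ioo]
        exact hbound _ (humem n)
      exact hIoc.mono_set Set.Ioo_subset_Ioc_self
  have hMtop : Tendsto (fun x => Mab μ σ x₀ a x) F atTop := by
    rw [tendsto_atTop]
    intro C
    obtain ⟨x₁, hx₁, hC⟩ := hMub C
    filter_upwards [hFS, hF2 x₁ hx₁] with x hx hlt
    exact le_trans hC (hMmono x₁ hx₁ x hx hlt.le)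
  -- main argument: L = 0
  rcases lt_trichotomy L 0 with hL0 | hL0 | hL0
  · exfalso
    obtain ⟨r, hLr, hr0'⟩ := EReal.exists_between_coe_real hL0
    have hr0 : r < 0 := by exact_mod_cast hr0'
    have hev : ∀ᶠ x in F, μ x < r := by
      filter_upwards [hL.eventually_lt_const hLr] with x hx
      exact_mod_cast hx
    obtain ⟨c, hcS, hc⟩ := hFtail _ hev
    obtain ⟨x₁, hx₁S, hx₁c⟩ := (hFS.and (hF2 c hcS)).exists
    obtain ⟨x, hxS, hxgt, hxM⟩ := (hFS.and ((hF2 x₁ hx₁S).and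
      (hMtop.eventually_ge_atTop (Mab μ σ x₀ a x₁ + E x₁ / (-r) + 1)))).exists
    have hU : Set.uIcc x₁ x ⊆ S := hOC.uIcc_subset hx₁S hxS
    have hIccS : Set.Icc x₁ x ⊆ S := fun u hu => hsub hx₁S hxS hu.1 hu.2
    have hle1 : (∫ u in x₁..x, μ u * mDen μ σ x₀ u) ≤ ∫ u in x₁..x, r * mDen μ σ x₀ u := by
      apply intervalIntegral.integral_mono_on hxgt.le
      · exact ((hμcont.mono hU).mul (hmc.mono hU)).intervalIntegrable
      · exact (continuousOn_const.mul (hmc.mono hU)).intervalIntegrable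
      · intro u hu
        have huS : u ∈ S := hIccS hu
        have hμu : μ u < r := hc u huS (lt_of_lt_of_le hx₁c hu.1)
        exact mul_le_mul_of_nonneg_right hμu.le (hmPos u huS).le
    have hconst : (∫ u in x₁..x, r * mDen μ σ x₀ u)
        = r * (Mab μ σ x₀ a x - Mab μ σ x₀ a x₁) := by
      rw [intervalIntegral.integral_const_mul, ← hMdiff x₁ hx₁S x hxS hxgt.le]
    have hk := hkey x₁ hx₁S x hxS hxgt.le
    set D := Mab μ σ x₀ a x - Mab μ σ x₀ a x₁ with hDdef
    have hD : E x₁ / (-r) + 1 ≤ D := by rw [hDdef]; linarith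
    have h1 : E x - E x₁ ≤ r * D := by rw [← hk, ← hDdef] at *; linarith [hle1, hconst]
    have h2 : r * D ≤ r * (E x₁ / (-r) + 1) := mul_le_mul_of_nonpos_left hD hr0.le
    have h3 : r * (E x₁ / (-r) + 1) = -E x₁ + r := by
      have hrne : r ≠ 0 := ne_of_lt hr0
      rw [mul_add, mul_one, div_neg, mul_neg, mul_div_cancel₀ _ hrne]
    have h4 : E x - E x₁ ≤ -E x₁ + r := h1.trans (h2.trans_eq h3)
    have h5 : 0 < E x := hEpos x
    linarith
  · subst hL0
    rw [show (𝓝 (0:EReal)) = 𝓝 (((0:ℝ) : EReal)) by norm_num] at hL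
    exact EReal.tendsto_coe.1 hL
  · exfalso
    obtain ⟨r, hr0', hLr⟩ := EReal.exists_between_coe_real hL0
    have hr0 : (0:ℝ) < r := by exact_mod_cast hr0'
    have hev : ∀ᶠ x in F, r < μ x := by
      filter_upwards [hL.eventually_const_lt hLr] with x hx
      exact_mod_cast hx
    obtain ⟨c, hcS, hc⟩ := hFtail _ hev
    obtain ⟨x₁, hx₁S, hx₁c⟩ := (hFS.and (hF2 c hcS)).exists
    obtain ⟨x, hxS, hxgt, hxM, hxsM⟩ := (hFS.and ((hF2 x₁ hx₁S).and
      ((hMtop.eventually_ge_atTop (Mab μ σ x₀ a x₁ + 1 / r)).and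
        (hsMb.eventually_ge_atTop (Mab μ σ x₀ a x₁ + 1 / r + 1))))).exists
    have hU : Set.uIcc x₁ x ⊆ S := hOC.uIcc_subset hx₁S hxS
    have hIccS : Set.Icc x₁ x ⊆ S := fun u hu => hsub hx₁S hxS hu.1 hu.2
    have hle1 : (∫ u in x₁..x, r * mDen μ σ x₀ u) ≤ ∫ u in x₁..x, μ u * mDen μ σ x₀ u := by
      apply intervalIntegral.integral_mono_on hxgt.le
      · exact (continuousOn_const.mul (hmc.mono hU)).intervalIntegrable
      · exact ((hμcont.mono hU).mul (hmc.mono hU)).intervalIntegrable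
      · intro u hu
        have huS : u ∈ S := hIccS hu
        have hμu : r < μ u := hc u huS (lt_of_lt_of_le hx₁c hu.1)
        exact mul_le_mul_of_nonneg_right hμu.le (hmPos u huS).le
    have hconst : (∫ u in x₁..x, r * mDen μ σ x₀ u)
        = r * (Mab μ σ x₀ a x - Mab μ σ x₀ a x₁) := by
      rw [intervalIntegral.integral_const_mul, ← hMdiff x₁ hx₁S x hxS hxgt.le]
    have hk := hkey x₁ hx₁S x hxS hxgt.le
    set D := Mab μ σ x₀ a x - Mab μ σ x₀ a x₁ with hDdef
    have hD : 1 / r ≤ D := by rw [hDdef]; linarith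
    have h1 : r * D ≤ E x - E x₁ := by rw [← hk, ← hDdef] at *; linarith [hle1, hconst]
    have hrD : (1:ℝ) ≤ r * D := by
      have : r * (1 / r) ≤ r * D := mul_le_mul_of_nonneg_left hD hr0.le
      rwa [mul_one_div_cancel hr0.ne'] at this
    have hE1 : (1:ℝ) ≤ E x := by linarith [hEpos x₁]
    have hsx_le : sDen μ σ x₀ x ≤ 1 := by
      rw [hsden_eq]
      exact inv_le_one_of_one_le₀ hE1
    have hsE : sDen μ σ x₀ x * E x = 1 := by
      rw [hsden_eq]; exact inv_mul_cancel₀ (hEpos x).ne'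
    have hMle : Mab μ σ x₀ a x ≤ Mab μ σ x₀ a x₁ + E x / r := by
      have hrd : D ≤ E x / r := by
        rw [le_div_iff₀ hr0]
        have := hEpos x₁
        nlinarith
      rw [hDdef] at hrd
      linarith
    have hfin : sDen μ σ x₀ x * Mab μ σ x₀ a x ≤ Mab μ σ x₀ a x₁ + 1 / r := by
      have e1 : sDen μ σ x₀ x * (E x / r) = 1 / r := by
        rw [← mul_div_assoc, hsE]
      calc sDen μ σ x₀ x * Mab μ σ x₀ a x
          ≤ sDen μ σ x₀ x * (Mab μ σ x₀ a x₁ + E x / r) :=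
            mul_le_mul_of_nonneg_left hMle (hsPos x).le
        _ = sDen μ σ x₀ x * Mab μ σ x₀ a x₁ + sDen μ σ x₀ x * (E x / r) := by ring
        _ ≤ Mab μ σ x₀ a x₁ + 1 / r := by
            rw [e1]
            have := mul_le_of_le_one_left (hMnonneg x₁ hx₁S) hsx_le
            linarith
    linarith
end
end

section
/- Suppose lim_{x→a⁺} s(x) = ∞, lim_{x→b} s(x)·M[a,x] = ∞, and μ extends continuously to x = a with a finite value μ(a). Then lim_{x→a⁺} 1/(s(x)·M[a,x]) = μ(a), and z₀ := sup_{x∈(a,b)} 1/(s(x)·M[a,x]) = sup_{x∈(a,b)} 1/ξ′(x) is finite. -/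
open MeasureTheory Filter Set Topology
open scoped Classical

noncomputable section

set_option linter.unusedSectionVars false

section aux
variable {a : ℝ} {b : EReal} {μ σ : ℝ → ℝ} {x₀ : ℝ}

lemma isOpen_stInt : IsOpen (stInt a b) := by
  have : stInt a b = Set.Ioi a ∩ ((↑) : ℝ → EReal) ⁻¹' (Set.Iio b) := rfl
  rw [this]
  exact isOpen_Ioi.inter (isOpen_Iio.preimage continuous_coe_real_ereal)

lemma mem_stInt {x : ℝ} : x ∈ stInt a b ↔ a < x ∧ (x : EReal) < b := Iff.rfl

lemma Ioc_subset_stInt {x : ℝ} (hx : x ∈ stInt a b) : Set.Ioc a x ⊆ stInt a b := by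
  intro t ht
  exact ⟨ht.1, lt_of_le_of_lt (EReal.coe_le_coe_iff.2 ht.2) hx.2⟩

lemma ordConnected_stInt : (stInt a b).OrdConnected := by
  constructor
  intro x hx y hy t ht
  exact ⟨lt_of_lt_of_le hx.1 ht.1, lt_of_le_of_lt (EReal.coe_le_coe_iff.2 ht.2) hy.2⟩

lemma stInt_mem_nhdsWithin (hab : (a : EReal) < b) : stInt a b ∈ 𝓝[>] a := by
  have h1 : ((↑) : ℝ → EReal) ⁻¹' (Set.Iio b) ∈ 𝓝 a :=
    continuous_coe_real_ereal.continuousAt.preimage_mem_nhds (Iio_mem_nhds hab)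
  have : stInt a b = Set.Ioi a ∩ ((↑) : ℝ → EReal) ⁻¹' (Set.Iio b) := rfl
  rw [this]
  exact Filter.inter_mem self_mem_nhdsWithin (mem_nhdsWithin_of_mem_nhds h1)

lemma sDen_pos (x : ℝ) : 0 < sDen μ σ x₀ x := Real.exp_pos _

lemma mDen_nonneg (x : ℝ) : 0 ≤ mDen μ σ x₀ x := by
  apply div_nonneg (by norm_num)
  exact mul_nonneg (sq_nonneg _) (sDen_pos _).le


variable (hμcont : ContinuousOn μ (stInt a b)) (hσcont : ContinuousOn σ (stInt a b))
    (hσpos : ∀ x ∈ stInt a b, 0 < (σ x) ^ 2) (hx₀ : x₀ ∈ stInt a b)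

include hμcont hσcont hσpos in
lemma drift_cont : ContinuousOn (fun y => 2 * μ y / (σ y) ^ 2) (stInt a b) := by
  apply ContinuousOn.div (continuousOn_const.mul hμcont) (hσcont.pow 2)
  exact fun x hx => (hσpos x hx).ne'

include hμcont hσcont hσpos hx₀ in
lemma hasDerivAt_F {x : ℝ} (hx : x ∈ stInt a b) :
    HasDerivAt (fun t => ∫ y in x₀..t, 2 * μ y / (σ y) ^ 2)
      (2 * μ x / (σ x) ^ 2) x := by
  have hcont := drift_cont hμcont hσcont hσpos
  have hsub : Set.uIcc x₀ x ⊆ stInt a b := (ordConnected_stInt).uIcc_subset hx₀ hx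
  refine intervalIntegral.integral_hasDerivAt_right
    (hcont.mono hsub |>.intervalIntegrable) ?_ ?_
  · exact ⟨stInt a b, isOpen_stInt.mem_nhds hx,
      (hcont.aestronglyMeasurable isOpen_stInt.measurableSet)⟩
  · exact hcont.continuousAt (isOpen_stInt.mem_nhds hx)

include hμcont hσcont hσpos hx₀ in
lemma continuousOn_sDen : ContinuousOn (sDen μ σ x₀) (stInt a b) := by
  intro x hx
  have := ((hasDerivAt_F hμcont hσcont hσpos hx₀ hx).continuousAt).neg.rexp
  exact this.continuousWithinAt

include hμcont hσcont hσpos hx₀ in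
lemma continuousOn_mDen : ContinuousOn (mDen μ σ x₀) (stInt a b) := by
  apply ContinuousOn.div continuousOn_const
    ((hσcont.pow 2).mul (continuousOn_sDen hμcont hσcont hσpos hx₀))
  exact fun x hx => (mul_pos (hσpos x hx) (sDen_pos x)).ne'

include hμcont hσcont hσpos hx₀ in
lemma hasDerivAt_inv_sDen {x : ℝ} (hx : x ∈ stInt a b) :
    HasDerivAt (fun t => (sDen μ σ x₀ t)⁻¹) (μ x * mDen μ σ x₀ x) x := by
  have hF := hasDerivAt_F hμcont hσcont hσpos hx₀ hx
  have h1 : HasDerivAt (fun t => Real.exp (∫ y in x₀..t, 2 * μ y / (σ y) ^ 2))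
      (2 * μ x / (σ x) ^ 2 * Real.exp (∫ y in x₀..x, 2 * μ y / (σ y) ^ 2)) x := by
    simpa [mul_comm] using hF.exp
  have heq : ∀ t, (sDen μ σ x₀ t)⁻¹ = Real.exp (∫ y in x₀..t, 2 * μ y / (σ y) ^ 2) := by
    intro t; rw [sDen, ← Real.exp_neg, neg_neg]
  have hd : 2 * μ x / (σ x) ^ 2 * Real.exp (∫ y in x₀..x, 2 * μ y / (σ y) ^ 2)
      = μ x * mDen μ σ x₀ x := by
    rw [mDen, sDen, Real.exp_neg]
    rcases eq_or_ne ((σ x) ^ 2) 0 with h | h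
    · simp [h]
    · have he := Real.exp_pos (∫ y in x₀..x, 2 * μ y / (σ y) ^ 2)
      field_simp
  have hfe : (fun t => (sDen μ σ x₀ t)⁻¹)
      = fun t => Real.exp (∫ y in x₀..t, 2 * μ y / (σ y) ^ 2) := funext heq
  rw [hfe, ← hd]
  exact h1

variable {μa : ℝ} (hμa : Tendsto μ (𝓝[>] a) (𝓝 μa))
    (hMfin : ∀ x ∈ stInt a b, IntegrableOn (mDen μ σ x₀) (Set.Ioo a x))
    (hsa : Tendsto (sDen μ σ x₀) (𝓝[>] a) atTop)

include hμcont hμa in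
lemma mu_bdd {x : ℝ} (hx : x ∈ stInt a b) :
    ∃ C : ℝ, 0 < C ∧ ∀ u ∈ Set.Ioo a x, |μ u| ≤ C := by
  have h1 : ∀ᶠ y in 𝓝[>] a, |μ y - μa| < 1 := by
    have := hμa (Metric.ball_mem_nhds μa one_pos)
    filter_upwards [this] with y hy
    simpa [Real.dist_eq] using hy
  obtain ⟨u, hu, hsub⟩ := mem_nhdsGT_iff_exists_Ioo_subset.1 h1
  have hball : ∀ v ∈ Set.Ioo a u, |μ v| ≤ |μa| + 1 := by
    intro v hv
    have h2 : |μ v - μa| < 1 := hsub hv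
    calc |μ v| = |μ v - μa + μa| := by ring_nf
      _ ≤ |μ v - μa| + |μa| := abs_add_le _ _
      _ ≤ |μa| + 1 := by linarith
  by_cases hux : u ≤ x
  · have hicc : Set.Icc u x ⊆ stInt a b := by
      intro t ht
      exact (Ioc_subset_stInt hx) ⟨lt_of_lt_of_le hu ht.1, ht.2⟩
    obtain ⟨C₂, hC₂⟩ := (isCompact_Icc (a := u) (b := x)).exists_bound_of_continuousOn
      (hμcont.mono hicc)
    refine ⟨max (|μa| + 1) (max C₂ 1), lt_of_lt_of_le one_pos (le_trans (le_max_right _ _) (le_max_right _ _)), fun v hv => ?_⟩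
    by_cases hvu : v < u
    · exact le_trans (hball v ⟨hv.1, hvu⟩) (le_max_left _ _)
    · have : |μ v| ≤ C₂ := by
        simpa using hC₂ v ⟨le_of_not_gt hvu, hv.2.le⟩
      exact le_trans this (le_trans (le_max_left _ _) (le_max_right _ _))
  · refine ⟨|μa| + 1, by positivity, fun v hv => ?_⟩
    exact hball v ⟨hv.1, lt_of_lt_of_le hv.2 (le_of_not_ge hux)⟩

include hμcont hσcont hσpos hx₀ hμa hMfin in
lemma integrable_mu_m {x : ℝ} (hx : x ∈ stInt a b) :
    IntegrableOn (fun u => μ u * mDen μ σ x₀ u) (Set.Ioo a x) := by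
  obtain ⟨C, hC0, hC⟩ := mu_bdd hμcont hμa hx
  have hm := hMfin x hx
  have hsubS : Set.Ioo a x ⊆ stInt a b := fun t ht => (Ioc_subset_stInt hx) ⟨ht.1, ht.2.le⟩
  have hmeas : AEStronglyMeasurable (fun u => μ u * mDen μ σ x₀ u)
      (volume.restrict (Set.Ioo a x)) := by
    exact ((hμcont.mono hsubS).aestronglyMeasurable measurableSet_Ioo).mul
      (((continuousOn_mDen hμcont hσcont hσpos hx₀).mono hsubS).aestronglyMeasurable
        measurableSet_Ioo)
  refine (hm.const_mul C).mono hmeas ?_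
  rw [ae_restrict_iff' measurableSet_Ioo]
  filter_upwards with u hu
  have h1 : |μ u * mDen μ σ x₀ u| ≤ C * mDen μ σ x₀ u := by
    rw [abs_mul]
    calc |μ u| * |mDen μ σ x₀ u| ≤ C * |mDen μ σ x₀ u| :=
          mul_le_mul_of_nonneg_right (hC u hu) (abs_nonneg _)
      _ = C * mDen μ σ x₀ u := by rw [abs_of_nonneg (mDen_nonneg u)]
  calc ‖μ u * mDen μ σ x₀ u‖ = |μ u * mDen μ σ x₀ u| := rfl
    _ ≤ C * mDen μ σ x₀ u := h1
    _ ≤ ‖C * mDen μ σ x₀ u‖ := le_abs_self _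

include hμcont hσcont hσpos hx₀ hMfin in
lemma Mab_pos {x : ℝ} (hx : x ∈ stInt a b) : 0 < Mab μ σ x₀ a x := by
  rw [Mab]
  rw [setIntegral_pos_iff_support_of_nonneg_ae]
  · have hsubS : Set.Ioo a x ⊆ stInt a b := fun t ht => (Ioc_subset_stInt hx) ⟨ht.1, ht.2.le⟩
    have : Set.Ioo a x ⊆ Function.support (mDen μ σ x₀) ∩ Set.Ioo a x := by
      intro t ht
      refine ⟨?_, ht⟩
      have : 0 < mDen μ σ x₀ t :=
        div_pos two_pos (mul_pos (hσpos t (hsubS ht)) (sDen_pos t))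
      exact this.ne'
    calc (0 : ENNReal) < volume (Set.Ioo a x) := by
          simp [Real.volume_Ioo, hx.1, sub_pos]
      _ ≤ volume (Function.support (mDen μ σ x₀) ∩ Set.Ioo a x) := measure_mono this
  · exact Filter.Eventually.of_forall fun u => mDen_nonneg u
  · exact hMfin x hx

include hμcont hσcont hσpos hx₀ in
lemma ftc_inv_s {y x : ℝ} (hy : y ∈ stInt a b) (hx : x ∈ stInt a b) :
    ∫ u in y..x, μ u * mDen μ σ x₀ u = (sDen μ σ x₀ x)⁻¹ - (sDen μ σ x₀ y)⁻¹ := by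
  have hsub : Set.uIcc y x ⊆ stInt a b := (ordConnected_stInt).uIcc_subset hy hx
  refine intervalIntegral.integral_eq_sub_of_hasDerivAt
    (f := fun t => (sDen μ σ x₀ t)⁻¹) (fun t ht => ?_) ?_
  · exact hasDerivAt_inv_sDen hμcont hσcont hσpos hx₀ (hsub ht)
  · refine ContinuousOn.intervalIntegrable ?_
    exact ((hμcont.mono hsub).mul
      ((continuousOn_mDen hμcont hσcont hσpos hx₀).mono hsub))

include hμcont hσcont hσpos hx₀ hμa hMfin hsa in
lemma inv_s_eq {x : ℝ} (hx : x ∈ stInt a b) :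
    (sDen μ σ x₀ x)⁻¹ = ∫ u in Set.Ioo a x, μ u * mDen μ σ x₀ u := by
  set f : ℝ → ℝ := fun u => μ u * mDen μ σ x₀ u with hf
  have hax : a < x := hx.1
  set y : ℕ → ℝ := fun n => a + (x - a) / (n + 2) with hy
  have hy_mem : ∀ n, y n ∈ Set.Ioo a x := by
    intro n
    constructor
    · have : 0 < (x - a) / ((n : ℝ) + 2) :=
        div_pos (by linarith) (by positivity)
      simpa [hy] using this
    · have h2 : (x - a) / ((n : ℝ) + 2) < x - a := by
        apply div_lt_self (by linarith)
        have : (0:ℝ) ≤ (n:ℝ) := Nat.cast_nonneg n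
        linarith
      simp only [hy]
      linarith
  have hyS : ∀ n, y n ∈ stInt a b := fun n =>
    (Ioc_subset_stInt hx) ⟨(hy_mem n).1, (hy_mem n).2.le⟩
  have hmono : Monotone (fun n => Set.Ioo (y n) x) := by
    intro n m hnm
    apply Set.Ioo_subset_Ioo_left
    simp only [hy]
    have : (x - a) / ((m : ℝ) + 2) ≤ (x - a) / ((n : ℝ) + 2) := by
      apply div_le_div_of_nonneg_left (by linarith) (by positivity) (by exact_mod_cast by linarith)
    linarith
  have hUnion : (⋃ n, Set.Ioo (y n) x) = Set.Ioo a x := by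
    apply Set.Subset.antisymm
    · exact Set.iUnion_subset fun n => Set.Ioo_subset_Ioo_left (hy_mem n).1.le
    · intro t ht
      obtain ⟨n, hn⟩ := exists_nat_gt ((x - a) / (t - a))
      refine Set.mem_iUnion.2 ⟨n, ?_, ht.2⟩
      have hta : 0 < t - a := by linarith [ht.1]
      rw [div_lt_iff₀ hta] at hn
      have : (x - a) / ((n : ℝ) + 2) < t - a := by
        rw [div_lt_iff₀ (by positivity)]
        calc x - a < (n : ℝ) * (t - a) := hn
          _ ≤ (t - a) * ((n : ℝ) + 2) := by nlinarith
      simp only [hy]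
      linarith
  have hint : IntegrableOn f (Set.Ioo a x) :=
    integrable_mu_m hμcont hσcont hσpos hx₀ hμa hMfin hx
  have hT1 : Tendsto (fun n => ∫ u in Set.Ioo (y n) x, f u) atTop
      (𝓝 (∫ u in Set.Ioo a x, f u)) := by
    have := MeasureTheory.tendsto_setIntegral_of_monotone
      (fun n => measurableSet_Ioo) hmono (hUnion ▸ hint)
    rwa [hUnion] at this
  have hEq : ∀ n, ∫ u in Set.Ioo (y n) x, f u
      = (sDen μ σ x₀ x)⁻¹ - (sDen μ σ x₀ (y n))⁻¹ := by
    intro n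
    rw [← ftc_inv_s hμcont hσcont hσpos hx₀ (hyS n) hx,
      intervalIntegral.integral_of_le (hy_mem n).2.le,
      MeasureTheory.integral_Ioc_eq_integral_Ioo]
  have hyTendsto : Tendsto y atTop (𝓝[>] a) := by
    rw [tendsto_nhdsWithin_iff]
    constructor
    · have : Tendsto (fun n : ℕ => (x - a) / ((n : ℝ) + 2)) atTop (𝓝 0) := by
        apply Tendsto.div_atTop (tendsto_const_nhds)
        exact tendsto_atTop_add_const_right _ 2 tendsto_natCast_atTop_atTop
      have := this.const_add a
      simpa [hy] using this
    · exact Filter.Eventually.of_forall fun n => (hy_mem n).1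
  have hsinv : Tendsto (fun n => (sDen μ σ x₀ (y n))⁻¹) atTop (𝓝 0) :=
    (hsa.comp hyTendsto).inv_tendsto_atTop
  have hT2 : Tendsto (fun n => ∫ u in Set.Ioo (y n) x, f u) atTop
      (𝓝 ((sDen μ σ x₀ x)⁻¹ - 0)) := by
    simp only [hEq]
    exact tendsto_const_nhds.sub hsinv
  have := tendsto_nhds_unique hT1 hT2
  rw [this, sub_zero]

include hμcont hσcont hσpos hx₀ hμa hMfin in
lemma f_eq_avg (hab : (a : EReal) < b) (hsa : Tendsto (sDen μ σ x₀) (𝓝[>] a) atTop)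
    {x : ℝ} (hx : x ∈ stInt a b) :
    1 / (sDen μ σ x₀ x * Mab μ σ x₀ a x)
      = (∫ u in Set.Ioo a x, μ u * mDen μ σ x₀ u) / Mab μ σ x₀ a x := by
  rw [one_div, mul_inv, ← inv_s_eq hμcont hσcont hσpos hx₀ hμa hMfin hsa hx, div_eq_mul_inv]

include hμcont hσcont hσpos hx₀ hμa hMfin in
lemma main_tendsto (hab : (a : EReal) < b)
    (hsa : Tendsto (sDen μ σ x₀) (𝓝[>] a) atTop) :
    Tendsto (fun x => 1 / (sDen μ σ x₀ x * Mab μ σ x₀ a x)) (𝓝[>] a) (𝓝 μa) := by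
  rw [Metric.tendsto_nhdsWithin_nhds]
  intro ε hε
  have h1 : ∀ᶠ y in 𝓝[>] a, |μ y - μa| < ε / 2 := by
    have := hμa (Metric.ball_mem_nhds μa (by linarith : 0 < ε / 2))
    filter_upwards [this] with y hy
    simpa [Real.dist_eq] using hy
  have h2 : ∀ᶠ y in 𝓝[>] a, y ∈ stInt a b := stInt_mem_nhdsWithin hab
  obtain ⟨u, hu, hsub⟩ := mem_nhdsGT_iff_exists_Ioo_subset.1 (h1.and h2)
  refine ⟨u - a, by simpa using hu, fun x hxa hdist => ?_⟩
  have hxu : x ∈ Set.Ioo a u := by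
    constructor
    · exact hxa
    · rw [Real.dist_eq, abs_of_pos (by simpa using (hxa : a < x))] at hdist
      linarith
  have hxS : x ∈ stInt a b := (hsub hxu).2
  have hM := Mab_pos hμcont hσcont hσpos hx₀ hMfin hxS
  have hμm := integrable_mu_m hμcont hσcont hσpos hx₀ hμa hMfin hxS
  have hm := hMfin x hxS
  rw [f_eq_avg hμcont hσcont hσpos hx₀ hμa hMfin hab hsa hxS]
  have hsplit : (∫ v in Set.Ioo a x, (μ v - μa) * mDen μ σ x₀ v)
      = (∫ v in Set.Ioo a x, μ v * mDen μ σ x₀ v) - μa * Mab μ σ x₀ a x := by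
    rw [Mab, ← integral_const_mul, ← integral_sub hμm (hm.const_mul μa)]
    congr 1; ext v; ring
  have hbound : |∫ v in Set.Ioo a x, (μ v - μa) * mDen μ σ x₀ v|
      ≤ ε / 2 * Mab μ σ x₀ a x := by
    calc |∫ v in Set.Ioo a x, (μ v - μa) * mDen μ σ x₀ v|
        ≤ ∫ v in Set.Ioo a x, |μ v - μa| * |mDen μ σ x₀ v| := by
          simpa [abs_mul] using norm_integral_le_integral_norm (μ := volume.restrict (Set.Ioo a x))
            (fun v => (μ v - μa) * mDen μ σ x₀ v)
      _ ≤ ∫ v in Set.Ioo a x, ε / 2 * mDen μ σ x₀ v := by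
          apply setIntegral_mono_on
          · have h' : IntegrableOn (fun v => (μ v - μa) * mDen μ σ x₀ v) (Set.Ioo a x) := by
              have h2 := hμm.sub (hm.const_mul μa)
              apply h2.congr
              filter_upwards with v
              simp only [Pi.sub_apply]
              ring
            have h'' := h'.abs
            apply h''.congr
            filter_upwards with v
            rw [abs_mul]
          · exact hm.const_mul _
          · exact measurableSet_Ioo
          · intro v hv
            rw [abs_of_nonneg (mDen_nonneg v)]
            apply mul_le_mul_of_nonneg_right _ (mDen_nonneg v)
            exact (hsub ⟨hv.1, lt_trans hv.2 hxu.2⟩).1.le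
      _ = ε / 2 * Mab μ σ x₀ a x := by rw [Mab, integral_const_mul]
  rw [Real.dist_eq, div_sub' hM.ne', mul_comm (Mab μ σ x₀ a x) μa, ← hsplit]
  rw [abs_div, abs_of_pos hM, div_lt_iff₀ hM]
  calc |∫ v in Set.Ioo a x, (μ v - μa) * mDen μ σ x₀ v|
      ≤ ε / 2 * Mab μ σ x₀ a x := hbound
    _ < ε * Mab μ σ x₀ a x := by
        apply mul_lt_mul_of_pos_right (by linarith) hM

include hμcont hσcont hσpos hx₀ hμa hMfin in
lemma main_bdd (hab : (a : EReal) < b)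
    (hsa : Tendsto (sDen μ σ x₀) (𝓝[>] a) atTop)
    (hsMb : Tendsto (fun x => sDen μ σ x₀ x * Mab μ σ x₀ a x) (atB b) atTop) :
    BddAbove ((fun x => 1 / (sDen μ σ x₀ x * Mab μ σ x₀ a x)) '' stInt a b) := by
  set f : ℝ → ℝ := fun x => 1 / (sDen μ σ x₀ x * Mab μ σ x₀ a x) with hff
  -- region near a
  have h1 : ∀ᶠ x in 𝓝[>] a, f x < μa + 1 :=
    (main_tendsto hμcont hσcont hσpos hx₀ hμa hMfin hab hsa).eventually
      (eventually_lt_nhds (lt_add_one μa))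
  obtain ⟨u0, hu0, hsub0⟩ := mem_nhdsGT_iff_exists_Ioo_subset.1
    (h1.and (stInt_mem_nhdsWithin hab))
  set a₁ : ℝ := (a + u0) / 2 with ha₁
  have ha₁mem : a₁ ∈ Set.Ioo a u0 := by
    constructor <;> · simp only [ha₁]; rw [Set.mem_Ioi] at hu0; linarith
  have ha₁S : a₁ ∈ stInt a b := (hsub0 ha₁mem).2
  -- region near b
  have hclaim : ∃ c' : ℝ, a₁ ≤ c' ∧ (c' : EReal) < b ∧
      ∀ x ∈ stInt a b, c' < x → 1 ≤ sDen μ σ x₀ x * Mab μ σ x₀ a x := by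
    induction b with
    | bot => simp at hab
    | coe B =>
      have hBne : (B : EReal) ≠ ⊤ := EReal.coe_ne_top B
      rw [atB, if_neg hBne] at hsMb
      simp only [EReal.toReal_coe] at hsMb
      obtain ⟨l, hl, hsubl⟩ := mem_nhdsLT_iff_exists_Ioo_subset.1
        (hsMb.eventually (eventually_ge_atTop 1))
      have ha₁B : a₁ < B := EReal.coe_lt_coe_iff.1 ha₁S.2
      refine ⟨max a₁ l, le_max_left _ _, ?_, ?_⟩
      · rw [EReal.coe_lt_coe_iff]
        exact max_lt ha₁B hl
      · intro x hx hcx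
        have hxB : x < B := EReal.coe_lt_coe_iff.1 hx.2
        exact hsubl ⟨lt_of_le_of_lt (le_max_right _ _) hcx, hxB⟩
    | top =>
      rw [atB, if_pos rfl] at hsMb
      obtain ⟨c₀, hc₀⟩ := (hsMb.eventually (eventually_ge_atTop 1)).exists_forall_of_atTop
      refine ⟨max a₁ c₀, le_max_left _ _, EReal.coe_lt_top _, fun x _ hcx => ?_⟩
      exact hc₀ x (le_of_lt (lt_of_le_of_lt (le_max_right _ _) hcx))
  obtain ⟨c', hac', hc'b, hcb⟩ := hclaim
  -- compact middle
  have hIccS : Set.Icc a₁ c' ⊆ stInt a b := by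
    intro t ht
    exact ⟨lt_of_lt_of_le ha₁S.1 ht.1, lt_of_le_of_lt (EReal.coe_le_coe_iff.2 ht.2) hc'b⟩
  obtain ⟨z, hz, hzmin⟩ := (isCompact_Icc (a := a₁) (b := c')).exists_isMinOn
    (Set.nonempty_Icc.2 hac') ((continuousOn_sDen hμcont hσcont hσpos hx₀).mono hIccS)
  have hεs : 0 < sDen μ σ x₀ z := sDen_pos z
  have hMa₁ : 0 < Mab μ σ x₀ a a₁ := Mab_pos hμcont hσcont hσpos hx₀ hMfin ha₁S
  refine ⟨max (μa + 1) (max 1 (1 / (sDen μ σ x₀ z * Mab μ σ x₀ a a₁))), ?_⟩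
  rintro v ⟨x, hxS, rfl⟩
  rcases lt_or_ge x a₁ with hxa₁ | hxa₁
  · exact le_trans (hsub0 ⟨hxS.1, lt_trans hxa₁ ha₁mem.2⟩).1.le (le_max_left _ _)
  · rcases le_or_gt x c' with hxc | hxc
    · have hsx : sDen μ σ x₀ z ≤ sDen μ σ x₀ x := hzmin ⟨hxa₁, hxc⟩
      have hMx : Mab μ σ x₀ a a₁ ≤ Mab μ σ x₀ a x := by
        apply setIntegral_mono_set (hMfin x hxS)
          (Filter.Eventually.of_forall fun u => mDen_nonneg u)
        exact (Set.Ioo_subset_Ioo_right hxa₁).eventuallyLE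
      have hprod : sDen μ σ x₀ z * Mab μ σ x₀ a a₁ ≤ sDen μ σ x₀ x * Mab μ σ x₀ a x :=
        mul_le_mul hsx hMx hMa₁.le (sDen_pos x).le
      have := one_div_le_one_div_of_le (mul_pos hεs hMa₁) hprod
      exact le_trans this (le_trans (le_max_right _ _) (le_max_right _ _))
    · have h1le : 1 ≤ sDen μ σ x₀ x * Mab μ σ x₀ a x := hcb x hxS hxc
      have : f x ≤ 1 := by
        rw [hff]
        simp only
        rw [div_le_one (lt_of_lt_of_le one_pos h1le)]
        exact h1le
      exact le_trans this (le_trans (le_max_left _ _) (le_max_right _ _))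

end aux

theorem statement4    (a : ℝ) (b : EReal) (hab : (a : EReal) < b)
    (μ σ : ℝ → ℝ) (x₀ : ℝ) (hx₀ : x₀ ∈ stInt a b)
    (hμcont : ContinuousOn μ (stInt a b)) (hσcont : ContinuousOn σ (stInt a b))
    (hσpos : ∀ x ∈ stInt a b, 0 < (σ x) ^ 2)
    (hMfin : ∀ x ∈ stInt a b, IntegrableOn (mDen μ σ x₀) (Set.Ioo a x))
    (hsa : Tendsto (sDen μ σ x₀) (𝓝[>] a) atTop)
    (hsMb : Tendsto (fun x => sDen μ σ x₀ x * Mab μ σ x₀ a x) (atB b) atTop)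
    (μa : ℝ) (hμa : Tendsto μ (𝓝[>] a) (𝓝 μa))
    :
    Tendsto (fun x => 1 / (sDen μ σ x₀ x * Mab μ σ x₀ a x)) (𝓝[>] a) (𝓝 μa) ∧
    BddAbove ((fun x => 1 / (sDen μ σ x₀ x * Mab μ σ x₀ a x)) '' stInt a b) := by
  exact ⟨main_tendsto hμcont hσcont hσpos hx₀ hμa hMfin hab hsa,
    main_bdd hμcont hσcont hσpos hx₀ hμa hMfin hab hsa hsMb⟩
end
end

section
/- Suppose lim_{x→a⁺} s(x) = ∞, lim_{x→b} s(x)·M[a,x] = ∞, and μ extends continuously to x = a with a finite value μ(a). Set z₀ := sup_{x∈(a,b)} 1/(s(x)·M[a,x]), which is finite. Then for every z ∈ (0, z₀) there exists a pair (w,y) with a < w < y < b such that (y − w)/(ξ(y) − ξ(w)) = z. -/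
open MeasureTheory Filter Set Topology
open scoped Classical

noncomputable section

theorem statement5    (a : ℝ) (b : EReal) (hab : (a : EReal) < b)
    (μ σ : ℝ → ℝ) (x₀ : ℝ) (hx₀ : x₀ ∈ stInt a b)
    (hμcont : ContinuousOn μ (stInt a b)) (hσcont : ContinuousOn σ (stInt a b))
    (hσpos : ∀ x ∈ stInt a b, 0 < (σ x) ^ 2)
    (hMfin : ∀ x ∈ stInt a b, IntegrableOn (mDen μ σ x₀) (Set.Ioo a x))
    (hsa : Tendsto (sDen μ σ x₀) (𝓝[>] a) atTop)
    (hsMb : Tendsto (fun x => sDen μ σ x₀ x * Mab μ σ x₀ a x) (atB b) atTop)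
    (μa : ℝ) (hμa : Tendsto μ (𝓝[>] a) (𝓝 μa))
    :
    ∀ z : ℝ, 0 < z →
      z < sSup ((fun x => 1 / (sDen μ σ x₀ x * Mab μ σ x₀ a x)) '' stInt a b) →
      ∃ w y : ℝ, a < w ∧ w < y ∧ (y : EReal) < b ∧
        (y - w) / (xiF μ σ x₀ a y - xiF μ σ x₀ a w) = z := by
  intro z hz hzsup
  -- Notation
  set S := stInt a b with hS
  set s : ℝ → ℝ := sDen μ σ x₀ with hsdef
  set m : ℝ → ℝ := mDen μ σ x₀ with hmdef
  set M : ℝ → ℝ := Mab μ σ x₀ a with hMdef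
  set ξ : ℝ → ℝ := xiF μ σ x₀ a with hxidef
  have hSopen : IsOpen S := by
    have h : S = Set.Ioi a ∩ ((↑) : ℝ → EReal) ⁻¹' Set.Iio b := by
      ext x; exact Iff.rfl
    rw [h]
    exact isOpen_Ioi.inter (isOpen_Iio.preimage continuous_coe_real_ereal)
  have hIccS : ∀ {x y : ℝ}, x ∈ S → y ∈ S → Set.Icc x y ⊆ S := by
    intro x y hx hy t ht
    exact ⟨lt_of_lt_of_le hx.1 ht.1, lt_of_le_of_lt (EReal.coe_le_coe_iff.2 ht.2) hy.2⟩
  have huIccS : ∀ {x y : ℝ}, x ∈ S → y ∈ S → Set.uIcc x y ⊆ S := by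
    intro x y hx hy
    rcases le_total x y with h | h
    · rw [Set.uIcc_of_le h]; exact hIccS hx hy
    · rw [Set.uIcc_of_ge h]; exact hIccS hy hx
  have hs_pos : ∀ x, 0 < s x := fun x => Real.exp_pos _
  have hm_nonneg : ∀ x, 0 ≤ m x := by
    intro x
    exact div_nonneg (by norm_num) (mul_nonneg (sq_nonneg _) (hs_pos x).le)
  have hm_pos : ∀ x ∈ S, 0 < m x := by
    intro x hx
    exact div_pos (by norm_num) (mul_pos (hσpos x hx) (hs_pos x))
  -- continuity of the drift integrand
  have hgcont : ContinuousOn (fun y => 2 * μ y / σ y ^ 2) S := by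
    exact (continuousOn_const.mul hμcont).div (hσcont.pow 2)
      (fun x hx => (hσpos x hx).ne')
  -- continuity of s on S
  have hIcont : ∀ x ∈ S, ContinuousAt (fun u => ∫ y in x₀..u, 2 * μ y / σ y ^ 2) x := by
    intro x hx
    exact (intervalIntegral.integral_hasDerivAt_right
      ((hgcont.mono (huIccS hx₀ hx)).intervalIntegrable)
      ⟨S, hSopen.mem_nhds hx, hgcont.aestronglyMeasurable hSopen.measurableSet⟩
      (hgcont.continuousAt (hSopen.mem_nhds hx))).continuousAt
  have hscont : ContinuousOn s S := by
    intro x hx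
    exact (Real.continuous_exp.continuousAt.comp ((hIcont x hx).neg)).continuousWithinAt
  -- additivity of M and continuity of M on S
  have hmcont : ContinuousOn m S := by
    apply continuousOn_const.div ((hσcont.pow 2).mul hscont)
    intro x hx
    exact (mul_pos (hσpos x hx) (hs_pos x)).ne'
  have hMadd : ∀ c ∈ S, ∀ d ∈ S, M d = M c + ∫ t in c..d, m t := by
    have key : ∀ c ∈ S, ∀ d ∈ S, c ≤ d → M d = M c + ∫ t in c..d, m t := by
      intro c hc d hd hcd
      have hIco : Set.Ico c d ⊆ Set.Ioo a d := fun t ht => ⟨lt_of_lt_of_le hc.1 ht.1, ht.2⟩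
      have hunion : Set.Ioo a c ∪ Set.Ico c d = Set.Ioo a d := Set.Ioo_union_Ico_eq_Ioo hc.1 hcd
      have hdisj : Disjoint (Set.Ioo a c) (Set.Ico c d) := by
        rw [Set.disjoint_left]
        intro t ht1 ht2
        exact absurd ht2.1 (not_le.2 ht1.2)
      have h1 : M d = (∫ t in Set.Ioo a c, m t) + ∫ t in Set.Ico c d, m t := by
        rw [hMdef, Mab, ← hunion]
        exact setIntegral_union hdisj measurableSet_Ico (hMfin c hc)
          ((hMfin d hd).mono_set hIco)
      rw [h1, intervalIntegral.integral_of_le hcd,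
        MeasureTheory.integral_Ioc_eq_integral_Ioo, MeasureTheory.integral_Ico_eq_integral_Ioo]
      rfl
    intro c hc d hd
    rcases le_total c d with h | h
    · exact key c hc d hd h
    · have := key d hd c hc h
      rw [intervalIntegral.integral_symm d c]
      linarith
  have hMcont : ContinuousOn M S := by
    intro x hx
    have h1 : ContinuousAt (fun u => M x + ∫ t in x..u, m t) x := by
      apply continuousAt_const.add
      exact (intervalIntegral.integral_hasDerivAt_right
        ((hmcont.mono (huIccS hx hx)).intervalIntegrable)
        ⟨S, hSopen.mem_nhds hx, hmcont.aestronglyMeasurable hSopen.measurableSet⟩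
        (hmcont.continuousAt (hSopen.mem_nhds hx))).continuousAt
    have h2 : (fun u => M x + ∫ t in x..u, m t) =ᶠ[𝓝 x] M := by
      filter_upwards [hSopen.mem_nhds hx] with u hu
      exact (hMadd x hx u hu).symm
    exact (h1.congr h2).continuousWithinAt
  have hMpos : ∀ x ∈ S, 0 < M x := by
    intro x hx
    have hsub : Set.Ioo a x ⊆ S := fun t ht => ⟨ht.1, lt_trans (EReal.coe_lt_coe_iff.2 ht.2) hx.2⟩
    have hpos : 0 < volume (Function.support m ∩ Set.Ioo a x) := by
      have hsupp : Set.Ioo a x ⊆ Function.support m ∩ Set.Ioo a x :=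
        fun t ht => ⟨(hm_pos t (hsub ht)).ne', ht⟩
      calc (0:ENNReal) < volume (Set.Ioo a x) := by
            rw [Real.volume_Ioo]; simp [hx.1]
        _ ≤ volume (Function.support m ∩ Set.Ioo a x) := measure_mono hsupp
    exact (setIntegral_pos_iff_support_of_nonneg_ae
      (ae_of_all _ hm_nonneg) (hMfin x hx)).2 hpos
  -- the derivative of ξ
  set f : ℝ → ℝ := fun v => M v * s v with hfdef
  have hfcont : ContinuousOn f S := hMcont.mul hscont
  have hfpos : ∀ x ∈ S, 0 < f x := fun x hx => mul_pos (hMpos x hx) (hs_pos x)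
  have hxi' : ∀ x ∈ S, HasDerivAt ξ (f x) x := by
    intro x hx
    exact intervalIntegral.integral_hasDerivAt_right
      ((hfcont.mono (huIccS hx₀ hx)).intervalIntegrable)
      ⟨S, hSopen.mem_nhds hx, hfcont.aestronglyMeasurable hSopen.measurableSet⟩
      (hfcont.continuousAt (hSopen.mem_nhds hx))
  have hxicont : ContinuousOn ξ S := fun x hx => ((hxi' x hx).continuousAt).continuousWithinAt
  -- ξ increments as interval integrals
  have hxisub : ∀ w ∈ S, ∀ y ∈ S, ξ y - ξ w = ∫ v in w..y, f v := by
    intro w hw y hy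
    have h1 : ((∫ v in x₀..w, f v) + ∫ v in w..y, f v) = ∫ v in x₀..y, f v :=
      intervalIntegral.integral_add_adjacent_intervals
        ((hfcont.mono (huIccS hx₀ hw)).intervalIntegrable)
        ((hfcont.mono (huIccS hw hy)).intervalIntegrable)
    have h2 : ξ y = ∫ v in x₀..y, f v := rfl
    have h3 : ξ w = ∫ v in x₀..w, f v := rfl
    rw [h2, h3, ← h1]; ring
  have hximono : ∀ w ∈ S, ∀ y ∈ S, w < y → ξ w < ξ y := by
    intro w hw y hy hwy
    have h1 : ξ y - ξ w = ∫ v in w..y, f v := hxisub w hw y hy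
    have h2 : 0 < ∫ v in w..y, f v := by
      apply intervalIntegral.intervalIntegral_pos_of_pos_on
      · exact (hfcont.mono (huIccS hw hy)).intervalIntegrable
      · intro t ht
        exact hfpos t (hIccS hw hy ⟨ht.1.le, ht.2.le⟩)
      · exact hwy
    linarith
  -- Step 2 : find x* with 1/(s x* * M x*) > z
  obtain ⟨xst, hxstS, hxst⟩ : ∃ x ∈ S, z < 1 / (s x * M x) := by
    obtain ⟨v, hv, hzv⟩ := exists_lt_of_lt_csSup (Set.Nonempty.image _ ⟨x₀, hx₀⟩) hzsup
    obtain ⟨x, hx, rfl⟩ := hv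
    exact ⟨x, hx, hzv⟩
  have hfxst : z < 1 / f xst := by
    simpa only [hfdef, mul_comm] using hxst
  -- Step 3 : near-diagonal point with ratio > z
  obtain ⟨y₁, hy₁S, hy₁gt, hy₁ratio⟩ :
      ∃ y₁, y₁ ∈ S ∧ xst < y₁ ∧ z < (y₁ - xst) / (ξ y₁ - ξ xst) := by
    have hD := hxi' xst hxstS
    have hslope : Tendsto (slope ξ xst) (𝓝[>] xst) (𝓝 (f xst)) :=
      (hasDerivAt_iff_tendsto_slope.1 hD).mono_left
        (nhdsWithin_mono _ (fun y hy => ne_of_gt hy))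
    have hinv : Tendsto (fun y => (slope ξ xst y)⁻¹) (𝓝[>] xst) (𝓝 (f xst)⁻¹) :=
      hslope.inv₀ (hfpos xst hxstS).ne'
    have hz' : z < (f xst)⁻¹ := by rwa [← one_div]
    have hev1 : ∀ᶠ y in 𝓝[>] xst, z < (slope ξ xst y)⁻¹ :=
      hinv.eventually (eventually_gt_nhds hz')
    have hev2 : ∀ᶠ y in 𝓝[>] xst, y ∈ S :=
      mem_nhdsWithin_of_mem_nhds (hSopen.mem_nhds hxstS)
    obtain ⟨y₁, ⟨hr1, hyS⟩, hygt⟩ := ((hev1.and hev2).and self_mem_nhdsWithin).exists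
    refine ⟨y₁, hyS, hygt, ?_⟩
    rwa [slope_def_field, inv_div] at hr1
  -- Step 4 : far point with ratio < z
  obtain ⟨w₂, y₂, hw₂S, hy₂S, hy₁w₂, hw₂y₂, hratio₂⟩ :
      ∃ w₂ y₂, w₂ ∈ S ∧ y₂ ∈ S ∧ y₁ < w₂ ∧ w₂ < y₂ ∧
        (y₂ - w₂) / (ξ y₂ - ξ w₂) < z := by
    have hsMb' : Tendsto f (atB b) atTop := by
      simpa only [hfdef, mul_comm] using hsMb
    have hev : ∀ᶠ x in atB b, 2/z < f x := hsMb'.eventually_gt_atTop _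
    have hsmall : ∀ w y : ℝ, w ∈ S → y ∈ S → w < y → (∀ t ∈ Set.Icc w y, 2/z ≤ f t) →
        (y - w) / (ξ y - ξ w) < z := by
      intro w y hw hy hwy hbound
      have hz2 : (0:ℝ) < 2/z := by positivity
      have hle : (2/z) * (y - w) ≤ ξ y - ξ w := by
        rw [hxisub w hw y hy]
        calc (2/z) * (y - w) = (y - w) • (2/z) := by rw [smul_eq_mul]; ring
          _ = ∫ _ in w..y, (2/z) := (intervalIntegral.integral_const _).symm
          _ ≤ ∫ v in w..y, f v := intervalIntegral.integral_mono_on hwy.le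
              (intervalIntegrable_const) ((hfcont.mono (huIccS hw hy)).intervalIntegrable)
              hbound
      have hpos : 0 < (2/z) * (y - w) := mul_pos hz2 (sub_pos.2 hwy)
      have h1 : (y - w) / (ξ y - ξ w) ≤ (y - w) / ((2/z) * (y - w)) :=
        div_le_div_of_nonneg_left (sub_pos.2 hwy).le hpos hle
      have h2 : (y - w) / ((2/z) * (y - w)) = z/2 := by
        rw [div_eq_iff hpos.ne']
        field_simp
      linarith
    by_cases hb : b = ⊤
    · rw [atB, if_pos hb, eventually_atTop] at hev
      obtain ⟨N, hN⟩ := hev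
      refine ⟨max N (max y₁ a) + 1, max N (max y₁ a) + 2, ?_, ?_, ?_, by linarith, ?_⟩
      · exact ⟨by have := le_max_right y₁ a; have := le_max_right N (max y₁ a); linarith,
          by rw [hb]; exact EReal.coe_lt_top _⟩
      · exact ⟨by have := le_max_right y₁ a; have := le_max_right N (max y₁ a); linarith,
          by rw [hb]; exact EReal.coe_lt_top _⟩
      · have := le_max_left y₁ a; have := le_max_right N (max y₁ a); linarith
      · apply hsmall _ _ ?_ ?_ (by linarith) ?_
        · exact ⟨by have := le_max_right y₁ a; have := le_max_right N (max y₁ a); linarith,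
            by rw [hb]; exact EReal.coe_lt_top _⟩
        · exact ⟨by have := le_max_right y₁ a; have := le_max_right N (max y₁ a); linarith,
            by rw [hb]; exact EReal.coe_lt_top _⟩
        · intro t ht
          have hNt : N ≤ t := by
            have := le_max_left N (max y₁ a); have := ht.1; linarith
          exact (hN t hNt).le
    · rw [atB, if_neg hb] at hev
      set B := b.toReal with hB
      have hbne : b ≠ ⊥ := ne_of_gt (lt_trans (EReal.bot_lt_coe a) hab)
      have hBb : (B : EReal) = b := EReal.coe_toReal hb hbne
      have hy₁B : y₁ < B := by
        have : (y₁ : EReal) < (B : EReal) := by rw [hBb]; exact hy₁S.2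
        exact EReal.coe_lt_coe_iff.1 this
      obtain ⟨l, hl, hsub⟩ := mem_nhdsLT_iff_exists_Ioo_subset.1 hev
      set l' := max l y₁ with hl'
      have hl'B : l' < B := max_lt hl hy₁B
      set w₂ := (l' + B)/2 with hw₂
      set y₂ := (w₂ + B)/2 with hy₂
      have h1 : l' < w₂ := by rw [hw₂]; linarith
      have h2 : w₂ < B := by rw [hw₂]; linarith
      have h3 : w₂ < y₂ := by rw [hy₂]; linarith
      have h4 : y₂ < B := by rw [hy₂]; linarith
      have hmemS : ∀ t : ℝ, y₁ < t → t < B → t ∈ S := by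
        intro t ht1 ht2
        exact ⟨lt_trans hy₁S.1 ht1, by rw [← hBb]; exact EReal.coe_lt_coe_iff.2 ht2⟩
      have hy₁w₂ : y₁ < w₂ := lt_of_le_of_lt (le_max_right l y₁) h1
      have hfbig : ∀ t ∈ Set.Icc w₂ y₂, 2/z ≤ f t := by
        intro t ht
        have htl : l < t := by
          have := le_max_left l y₁
          have := ht.1; linarith
        have htB : t < B := lt_of_le_of_lt ht.2 h4
        exact (hsub ⟨htl, htB⟩).le
      exact ⟨w₂, y₂, hmemS w₂ hy₁w₂ h2, hmemS y₂ (by linarith) h4, hy₁w₂, h3,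
        hsmall _ _ (hmemS w₂ hy₁w₂ h2) (hmemS y₂ (by linarith) h4) h3 hfbig⟩
  -- Step 5 : intermediate value theorem
  have hy₁y₂ : y₁ < y₂ := lt_trans hy₁w₂ hw₂y₂
  set g₁ : ℝ → ℝ := fun y => (y - xst) / (ξ y - ξ xst) with hg₁
  have hg₁cont : ContinuousOn g₁ (Set.Icc y₁ y₂) := by
    apply ContinuousOn.div
    · exact (continuousOn_id).sub continuousOn_const
    · exact ((hxicont.mono (hIccS hy₁S hy₂S)).sub continuousOn_const)
    · intro t ht
      have htS : t ∈ S := hIccS hy₁S hy₂S ht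
      exact ne_of_gt (sub_pos.2 (hximono xst hxstS t htS (lt_of_lt_of_le hy₁gt ht.1)))
  by_cases hcase : g₁ y₂ ≤ z
  · obtain ⟨y, hyIcc, hyz⟩ := intermediate_value_Icc' hy₁y₂.le hg₁cont ⟨hcase, hy₁ratio.le⟩
    have hyS : y ∈ S := hIccS hy₁S hy₂S hyIcc
    exact ⟨xst, y, hxstS.1, lt_of_lt_of_le hy₁gt hyIcc.1, hyS.2, hyz⟩
  · push_neg at hcase
    set h₁ : ℝ → ℝ := fun w => (y₂ - w) / (ξ y₂ - ξ w) with hh₁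
    have hxstw₂ : xst ≤ w₂ := (lt_trans hy₁gt hy₁w₂).le
    have hh₁cont : ContinuousOn h₁ (Set.Icc xst w₂) := by
      apply ContinuousOn.div
      · exact continuousOn_const.sub continuousOn_id
      · exact continuousOn_const.sub (hxicont.mono (hIccS hxstS hw₂S))
      · intro t ht
        have htS : t ∈ S := hIccS hxstS hw₂S ht
        exact ne_of_gt (sub_pos.2 (hximono t htS y₂ hy₂S (lt_of_le_of_lt ht.2 hw₂y₂)))
    have hA : z < h₁ xst := hcase
    have hB : h₁ w₂ < z := hratio₂
    obtain ⟨w, hwIcc, hwz⟩ := intermediate_value_Icc' hxstw₂ hh₁cont ⟨hB.le, hA.le⟩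
    have hwS : w ∈ S := hIccS hxstS hw₂S hwIcc
    exact ⟨w, y₂, hwS.1, lt_of_le_of_lt hwIcc.2 hw₂y₂, hy₂S.2, hwz⟩
end
end

section
/- Suppose lim_{x→a⁺} s(x) = ∞, lim_{x→b} s(x)·M[a,x] = ∞, and μ extends continuously to x = a with a finite value μ(a). Set z₀ := sup_{x∈(a,b)} 1/(s(x)·M[a,x]). Then for every pair (w,y) with a < w < y < b one has (y − w)/(ξ(y) − ξ(w)) ≤ z₀. If in addition there exists x̂ ∈ (a,b) such that μ is strictly increasing on (a, x̂) and concave on (x̂, b), then the inequality is strict: (y − w)/(ξ(y) − ξ(w)) < z₀ for every such pair. -/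
open MeasureTheory Filter Set Topology
open scoped Classical

noncomputable section

set_option maxHeartbeats 1000000 in
theorem statement6    (a : ℝ) (b : EReal) (hab : (a : EReal) < b)
    (μ σ : ℝ → ℝ) (x₀ : ℝ) (hx₀ : x₀ ∈ stInt a b)
    (hμcont : ContinuousOn μ (stInt a b)) (hσcont : ContinuousOn σ (stInt a b))
    (hσpos : ∀ x ∈ stInt a b, 0 < (σ x) ^ 2)
    (hMfin : ∀ x ∈ stInt a b, IntegrableOn (mDen μ σ x₀) (Set.Ioo a x))
    (hsa : Tendsto (sDen μ σ x₀) (𝓝[>] a) atTop)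
    (hsMb : Tendsto (fun x => sDen μ σ x₀ x * Mab μ σ x₀ a x) (atB b) atTop)
    (μa : ℝ) (hμa : Tendsto μ (𝓝[>] a) (𝓝 μa))
    :
    (∀ w y : ℝ, a < w → w < y → (y : EReal) < b →
      (y - w) / (xiF μ σ x₀ a y - xiF μ σ x₀ a w) ≤
        sSup ((fun x => 1 / (sDen μ σ x₀ x * Mab μ σ x₀ a x)) '' stInt a b)) ∧
    ((∃ xh ∈ stInt a b, StrictMonoOn μ (Set.Ioo a xh) ∧
        ConcaveOn ℝ {x : ℝ | xh < x ∧ (x : EReal) < b} μ) →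
      ∀ w y : ℝ, a < w → w < y → (y : EReal) < b →
        (y - w) / (xiF μ σ x₀ a y - xiF μ σ x₀ a w) <
          sSup ((fun x => 1 / (sDen μ σ x₀ x * Mab μ σ x₀ a x)) '' stInt a b)) := by
  classical
  set I := stInt a b with hIdef
  set s : ℝ → ℝ := sDen μ σ x₀ with hsdef
  set m : ℝ → ℝ := mDen μ σ x₀ with hmdef
  set M : ℝ → ℝ := Mab μ σ x₀ a with hMdef
  have hmemI : ∀ {x : ℝ}, a < x → (x : EReal) < b → x ∈ I := fun h1 h2 => ⟨h1, h2⟩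
  have hsubI : ∀ x ∈ I, a < x := fun x hx => hx.1
  have hsubI' : ∀ x ∈ I, (x : EReal) < b := fun x hx => hx.2
  have hax₀ : a < x₀ := hx₀.1
  have hIopen : IsOpen I := by
    have : I = Ioi a ∩ ((↑) : ℝ → EReal) ⁻¹' (Iio b) := by
      ext t; simp [hIdef, stInt, mem_Ioi, and_comm]
    rw [this]
    exact isOpen_Ioi.inter (isOpen_Iio.preimage continuous_coe_real_ereal)
  have hIccI : ∀ {x y : ℝ}, x ∈ I → y ∈ I → Icc x y ⊆ I := by
    rintro x y ⟨hx1, hx2⟩ ⟨hy1, hy2⟩ t ⟨ht1, ht2⟩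
    exact ⟨hx1.trans_le ht1, lt_of_le_of_lt (EReal.coe_le_coe_iff.2 ht2) hy2⟩
  have huIccI : ∀ {x y : ℝ}, x ∈ I → y ∈ I → uIcc x y ⊆ I := by
    intro x y hx hy
    rcases le_total x y with h | h
    · rw [uIcc_of_le h]; exact hIccI hx hy
    · rw [uIcc_of_ge h]; exact hIccI hy hx
  have hIooI : ∀ {x : ℝ}, x ∈ I → Ioo a x ⊆ I := by
    rintro x ⟨hx1, hx2⟩ t ⟨ht1, ht2⟩
    exact ⟨ht1, lt_of_le_of_lt (EReal.coe_le_coe_iff.2 ht2.le) hx2⟩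
  have hIle : ∀ x : ℝ, a < x → ∀ y ∈ I, x ≤ y → x ∈ I := by
    intro x hx y hy hxy
    exact ⟨hx, lt_of_le_of_lt (EReal.coe_le_coe_iff.2 hxy) (hsubI' y hy)⟩
  have hIconv : Convex ℝ I := by
    rw [convex_iff_ordConnected]
    exact ⟨fun x hx y hy => hIccI hx hy⟩
  have hspos : ∀ x, 0 < s x := fun x => Real.exp_pos _
  set gg : ℝ → ℝ := fun y => 2 * μ y / σ y ^ 2 with hggdef
  have hggcont : ContinuousOn gg I :=
    (continuousOn_const.mul hμcont).div (hσcont.pow 2) fun x hx => (hσpos x hx).ne'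
  have hggint : ∀ {x y : ℝ}, x ∈ I → y ∈ I → IntervalIntegrable gg volume x y :=
    fun {x y} hx hy => (hggcont.mono (huIccI hx hy)).intervalIntegrable
  have hGderiv : ∀ x ∈ I, HasDerivAt (fun t => ∫ y in x₀..t, gg y) (gg x) x := by
    intro x hx
    exact intervalIntegral.integral_hasDerivAt_right (hggint hx₀ hx)
      (hggcont.stronglyMeasurableAtFilter hIopen x hx)
      (hggcont.continuousAt (hIopen.mem_nhds hx))
  have hsderiv : ∀ x ∈ I, HasDerivAt s (-gg x * s x) x := by
    intro x hx
    have h1 : HasDerivAt (fun t => -(∫ y in x₀..t, gg y)) (-gg x) x := (hGderiv x hx).neg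
    have h2 := h1.exp
    have hse : s = fun t => Real.exp (-(∫ y in x₀..t, gg y)) := by
      funext t; simp [hsdef, sDen, hggdef]
    rw [hse]
    convert h2 using 1
    simp [hse]; ring
  have hscont : ContinuousOn s I := fun x hx =>
    ((hsderiv x hx).continuousAt).continuousWithinAt
  set S1 : ℝ → ℝ := fun t => Real.exp (∫ y in x₀..t, gg y) with hS1def
  have hS1s : ∀ x, S1 x = (s x)⁻¹ := by
    intro x; rw [hS1def, hsdef]; simp [sDen, hggdef, Real.exp_neg]
  have hS1deriv : ∀ x ∈ I, HasDerivAt S1 (gg x * S1 x) x := by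
    intro x hx
    have h2 := (hGderiv x hx).exp
    rw [hS1def]
    convert h2 using 1
    ring
  have hmeq : m = fun x => 2 / (σ x ^ 2 * s x) := by funext t; simp [hmdef, mDen, hsdef]
  have hmpos : ∀ x ∈ I, 0 < m x := by
    intro x hx
    rw [hmeq]
    exact div_pos two_pos (mul_pos (hσpos x hx) (hspos x))
  have hmcont : ContinuousOn m I := by
    rw [hmeq]
    exact continuousOn_const.div ((hσcont.pow 2).mul hscont)
      (fun x hx => (mul_pos (hσpos x hx) (hspos x)).ne')
  have hmi : ∀ x ∈ I, IntegrableOn m (Ioo a x) volume := hMfin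
  have key : ∀ F : ℝ → ℝ, ContinuousOn F I → (∀ x ∈ I, IntegrableOn F (Ioo a x) volume) →
      (∀ x ∈ I, ∀ y ∈ I, x ≤ y →
        (∫ t in Ioo a y, F t) = (∫ t in Ioo a x, F t) + ∫ t in x..y, F t) ∧
      (∀ x ∈ I, HasDerivAt (fun z => ∫ t in Ioo a z, F t) (F x) x) := by
    intro F hFc hFi
    have hFii : ∀ {x y : ℝ}, x ∈ I → y ∈ I → IntervalIntegrable F volume x y :=
      fun {x y} hx hy => (hFc.mono (huIccI hx hy)).intervalIntegrable
    have hadd : ∀ x ∈ I, ∀ y ∈ I, x ≤ y →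
        (∫ t in Ioo a y, F t) = (∫ t in Ioo a x, F t) + ∫ t in x..y, F t := by
      intro x hx y hy hxy
      have hsplit : Ioo a x ∪ Ico x y = Ioo a y :=
        Ioo_union_Ico_eq_Ioo (hsubI x hx) hxy
      have hdisj : Disjoint (Ioo a x) (Ico x y) := by
        apply Set.disjoint_left.2
        rintro t ⟨_, ht2⟩ ⟨ht3, _⟩
        exact absurd ht3 (not_le.2 ht2)
      have h1 : IntegrableOn F (Ioo a x) volume :=
        (hFi y hy).mono_set (by rw [← hsplit]; exact Set.subset_union_left)
      have h2 : IntegrableOn F (Ico x y) volume :=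
        (hFi y hy).mono_set (by rw [← hsplit]; exact Set.subset_union_right)
      rw [← hsplit, setIntegral_union hdisj measurableSet_Ico h1 h2]
      congr 1
      rw [intervalIntegral.integral_of_le hxy, integral_Ico_eq_integral_Ioo,
        integral_Ioc_eq_integral_Ioo]
    refine ⟨hadd, ?_⟩
    intro x hx
    have hF : ∀ y ∈ I,
        (∫ t in Ioo a y, F t) = (∫ t in Ioo a x, F t) + ∫ t in x..y, F t := by
      intro y hy
      rcases le_total x y with h | h
      · exact hadd x hx y hy h
      · have := hadd y hy x hx h
        rw [intervalIntegral.integral_symm]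
        linarith [this]
    have hd : HasDerivAt (fun z => (∫ t in Ioo a x, F t) + ∫ t in x..z, F t) (F x) x := by
      refine HasDerivAt.const_add _ ?_
      exact intervalIntegral.integral_hasDerivAt_right (hFii hx hx)
        (hFc.stronglyMeasurableAtFilter hIopen x hx)
        (hFc.continuousAt (hIopen.mem_nhds hx))
    apply hd.congr_of_eventuallyEq
    filter_upwards [hIopen.mem_nhds hx] with z hz
    exact hF z hz
  obtain ⟨hMadd, hMderiv⟩ := key m hmcont hmi
  have hMeq : ∀ x, M x = ∫ t in Ioo a x, m t := fun x => by rw [hMdef, hmdef]; rfl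
  have hMderiv' : ∀ x ∈ I, HasDerivAt M (m x) x := by
    intro x hx
    apply (hMderiv x hx).congr_of_eventuallyEq
    filter_upwards with z
    rw [hMeq]
  have hMcont : ContinuousOn M I := fun x hx =>
    ((hMderiv' x hx).continuousAt).continuousWithinAt
  have hMpos : ∀ x ∈ I, 0 < M x := by
    intro x hx
    rw [hMeq]
    have hax : a < x := hsubI x hx
    set c : ℝ := (a + x) / 2 with hc
    have hcx : c < x := by rw [hc]; linarith
    have hac : a < c := by rw [hc]; linarith
    have hcI : c ∈ I := hIooI hx ⟨hac, hcx⟩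
    have h1 : (0:ℝ) < ∫ t in c..x, m t := by
      apply intervalIntegral.intervalIntegral_pos_of_pos_on
        ((hmcont.mono (huIccI hcI hx)).intervalIntegrable)
        (fun t ht => hmpos t (hIooI hx ⟨hac.trans ht.1, ht.2⟩)) hcx
    have h2 : (∫ t in c..x, m t) = ∫ t in Ioo c x, m t := by
      rw [intervalIntegral.integral_of_le hcx.le, integral_Ioc_eq_integral_Ioo]
    have h3 : (∫ t in Ioo c x, m t) ≤ ∫ t in Ioo a x, m t := by
      apply setIntegral_mono_set (hmi x hx)
      · filter_upwards [ae_restrict_mem measurableSet_Ioo] with t ht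
        exact (hmpos t (hIooI hx ht)).le
      · exact HasSubset.Subset.eventuallyLE (Set.Ioo_subset_Ioo (le_of_lt hac) le_rfl)
    linarith [h2 ▸ h1]
  obtain ⟨a₁, ha₁I, ha₁x₀, C, hC0, hCb, hμm_int, hNtend⟩ :
      ∃ a₁ ∈ I, a₁ ≤ x₀ ∧ ∃ C : ℝ, 0 < C ∧ (∀ t ∈ Ioo a a₁, |μ t| ≤ C) ∧
      (∀ x ∈ I, IntegrableOn (fun t => μ t * m t) (Ioo a x) volume) ∧
      Tendsto (fun x => ∫ t in Ioo a x, μ t * m t) (𝓝[>] a) (𝓝 0) := by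
    have h1 : ∀ᶠ t in 𝓝[>] a, dist (μ t) μa < 1 :=
      hμa (Metric.ball_mem_nhds μa one_pos)
    obtain ⟨u, hu, husub⟩ := mem_nhdsGT_iff_exists_Ioo_subset.1 h1
    set a₁ : ℝ := min u x₀ with ha₁def
    have ha₁ : a < a₁ := lt_min hu hax₀
    have ha₁x₀ : a₁ ≤ x₀ := min_le_right _ _
    have ha₁I : a₁ ∈ I := hIle a₁ ha₁ x₀ hx₀ ha₁x₀
    set C : ℝ := |μa| + 1 with hCdef
    have hC0 : (0:ℝ) < C := by positivity
    have hCb : ∀ t ∈ Ioo a a₁, |μ t| ≤ C := by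
      intro t ht
      have hd : dist (μ t) μa < 1 := husub ⟨ht.1, lt_of_lt_of_le ht.2 (min_le_left _ _)⟩
      rw [Real.dist_eq] at hd
      calc |μ t| = |(μ t - μa) + μa| := by ring_nf
        _ ≤ |μ t - μa| + |μa| := abs_add_le _ _
        _ ≤ C := by rw [hCdef]; linarith
    have hμm_meas : ∀ x ∈ I, AEStronglyMeasurable (fun t => μ t * m t)
        (volume.restrict (Ioo a x)) := fun x hx =>
      ContinuousOn.aestronglyMeasurable ((hμcont.mul hmcont).mono (hIooI hx)) measurableSet_Ioo
    have hdom : ∀ x ∈ I, x ≤ a₁ → ∀ᵐ t ∂(volume.restrict (Ioo a x)),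
        ‖μ t * m t‖ ≤ ‖C * m t‖ := by
      intro x hx hxa₁
      filter_upwards [ae_restrict_mem measurableSet_Ioo] with t ht
      have htI : t ∈ I := hIooI hx ht
      have ht' : t ∈ Ioo a a₁ := ⟨ht.1, lt_of_lt_of_le ht.2 hxa₁⟩
      rw [Real.norm_eq_abs, Real.norm_eq_abs, abs_mul, abs_mul,
        abs_of_pos (hmpos t htI), abs_of_pos hC0]
      exact mul_le_mul_of_nonneg_right (hCb t ht') (hmpos t htI).le
    have hμm_int : ∀ x ∈ I, IntegrableOn (fun t => μ t * m t) (Ioo a x) volume := by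
      intro x hx
      rcases le_total x a₁ with h | h
      · exact Integrable.mono (IntegrableOn.mono_set ((hmi a₁ ha₁I).const_mul C)
          (Set.Ioo_subset_Ioo le_rfl h)) (hμm_meas x hx) (hdom x hx h)
      · have hsub : Ioo a x ⊆ Ioo a a₁ ∪ Icc a₁ x := by
          rintro t ⟨ht1, ht2⟩
          rcases lt_or_ge t a₁ with h' | h'
          · exact Or.inl ⟨ht1, h'⟩
          · exact Or.inr ⟨h', ht2.le⟩
        refine IntegrableOn.mono_set (IntegrableOn.union ?_ ?_) hsub
        · exact Integrable.mono ((hmi a₁ ha₁I).const_mul C) (hμm_meas a₁ ha₁I)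
            (hdom a₁ ha₁I le_rfl)
        · exact ContinuousOn.integrableOn_Icc ((hμcont.mul hmcont).mono (hIccI ha₁I hx))
    refine ⟨a₁, ha₁I, ha₁x₀, C, hC0, hCb, hμm_int, ?_⟩
    rw [Filter.tendsto_iff_seq_tendsto]
    intro v hv
    have hvmem : ∀ᶠ n in atTop, v n ∈ Ioo a a₁ := hv (Ioo_mem_nhdsGT ha₁)
    have hva : Tendsto v atTop (𝓝 a) := hv.mono_right nhdsWithin_le_nhds
    set f : ℕ → ℝ → ℝ :=
      fun n t => Set.indicator (Ioo a (v n)) (fun t => μ t * m t) t with hfdef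
    have hint : ∀ n, v n ∈ Ioo a a₁ → Integrable (f n) volume := by
      intro n hn
      have hvI : v n ∈ I := hIle (v n) hn.1 a₁ ha₁I hn.2.le
      exact MeasureTheory.IntegrableOn.integrable_indicator (hμm_int (v n) hvI)
        measurableSet_Ioo
    have hmeas : ∀ᶠ n in atTop, AEStronglyMeasurable (f n) volume := by
      filter_upwards [hvmem] with n hn
      exact (hint n hn).aestronglyMeasurable
    have hbound : ∀ᶠ n in atTop, ∀ᵐ t ∂(volume : Measure ℝ),
        ‖f n t‖ ≤ Set.indicator (Ioo a a₁) (fun t => C * m t) t := by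
      filter_upwards [hvmem] with n hn
      refine ae_of_all _ fun t => ?_
      show ‖(Ioo a (v n)).indicator (fun t => μ t * m t) t‖ ≤ _
      by_cases ht : t ∈ Ioo a (v n)
      · rw [Set.indicator_of_mem ht]
        have ht' : t ∈ Ioo a a₁ := ⟨ht.1, lt_of_lt_of_le ht.2 hn.2.le⟩
        rw [Set.indicator_of_mem ht']
        have htI : t ∈ I := hIooI ha₁I ht'
        rw [Real.norm_eq_abs, abs_mul, abs_of_pos (hmpos t htI)]
        exact mul_le_mul_of_nonneg_right (hCb t ht') (hmpos t htI).le
      · rw [Set.indicator_of_notMem ht]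
        simp only [norm_zero]
        by_cases ht' : t ∈ Ioo a a₁
        · rw [Set.indicator_of_mem ht']
          exact (mul_pos hC0 (hmpos t (hIooI ha₁I ht'))).le
        · rw [Set.indicator_of_notMem ht']
    have hbint : Integrable (Set.indicator (Ioo a a₁) (fun t => C * m t)) volume :=
      MeasureTheory.IntegrableOn.integrable_indicator ((hmi a₁ ha₁I).const_mul C)
        measurableSet_Ioo
    have hlim : ∀ᵐ t ∂(volume : Measure ℝ), Tendsto (fun n => f n t) atTop (𝓝 0) := by
      refine ae_of_all _ fun t => ?_
      rcases le_or_gt t a with ht | ht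
      · have hz : ∀ n, f n t = 0 := fun n =>
          Set.indicator_of_notMem (fun h => absurd h.1 (not_lt.2 ht)) _
        simpa [hz] using tendsto_const_nhds
      · have hev : ∀ᶠ n in atTop, f n t = 0 := by
          filter_upwards [hva.eventually_lt_const ht] with n hn
          exact Set.indicator_of_notMem (fun h => absurd h.2 (not_lt.2 hn.le)) _
        exact Tendsto.congr' (hev.mono fun n hn => hn.symm) tendsto_const_nhds
    have hdct := MeasureTheory.tendsto_integral_filter_of_dominated_convergence _
      hmeas hbound hbint hlim
    simp only [MeasureTheory.integral_zero] at hdct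
    refine Tendsto.congr (fun n => ?_) hdct
    show (∫ t, (Ioo a (v n)).indicator (fun t => μ t * m t) t) = _
    rw [MeasureTheory.integral_indicator measurableSet_Ioo]
    rfl
  set N : ℝ → ℝ := fun x => ∫ t in Ioo a x, μ t * m t with hNdef
  obtain ⟨hNadd, hNderiv⟩ := key (fun t => μ t * m t) (hμcont.mul hmcont) hμm_int
  have hSN : ∀ x ∈ I, S1 x = N x := by
    have hD : ∀ x ∈ I, gg x * S1 x = μ x * m x := by
      intro x hx
      rw [hS1s, hggdef, hmeq]
      have h1 : σ x ^ 2 ≠ 0 := (hσpos x hx).ne'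
      have h2 : s x ≠ 0 := (hspos x).ne'
      field_simp
    set h : ℝ → ℝ := fun x => S1 x - N x with hhdef
    have hd : ∀ x ∈ I, HasDerivAt h 0 x := by
      intro x hx
      have h1 : HasDerivAt S1 (μ x * m x) x := by
        have := hS1deriv x hx
        rwa [hD x hx] at this
      have h2 := h1.sub (hNderiv x hx)
      rw [sub_self] at h2
      exact h2
    have hdiff : DifferentiableOn ℝ h I := fun x hx =>
      ((hd x hx).differentiableAt).differentiableWithinAt
    have hfd : ∀ x ∈ I, fderivWithin ℝ h I x = 0 := by
      intro x hx
      have h1 : HasFDerivWithinAt h ((1 : ℝ →L[ℝ] ℝ).smulRight 0) I x :=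
        ((hd x hx).hasFDerivAt).hasFDerivWithinAt
      rw [h1.fderivWithin (hIopen.uniqueDiffOn x hx)]
      ext t; simp
    have hconst : ∀ x ∈ I, h x = h x₀ := fun x hx =>
      hIconv.is_const_of_fderivWithin_eq_zero hdiff hfd hx hx₀
    have hS1a : Tendsto S1 (𝓝[>] a) (𝓝 0) := by
      have := hsa.inv_tendsto_atTop
      exact this.congr fun t => (hS1s t).symm
    have htend : Tendsto h (𝓝[>] a) (𝓝 (h x₀)) := by
      refine Tendsto.congr' ?_ tendsto_const_nhds
      filter_upwards [Ioo_mem_nhdsGT hax₀] with t ht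
      exact (hconst t (hIooI hx₀ ht)).symm
    have h0 : Tendsto h (𝓝[>] a) (𝓝 0) := by
      simpa using hS1a.sub hNtend
    have hx₀0 : h x₀ = 0 := tendsto_nhds_unique htend h0
    intro x hx
    have h2 : S1 x - N x = 0 := (hconst x hx).trans hx₀0
    linarith
  set u : ℝ → ℝ := fun x => 1 / (s x * M x) with hudef
  have hsMpos : ∀ x ∈ I, 0 < s x * M x := fun x hx => mul_pos (hspos x) (hMpos x hx)
  have hupos : ∀ x ∈ I, 0 < u x := fun x hx => by
    rw [hudef]; exact one_div_pos.2 (hsMpos x hx)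
  have hucont : ContinuousOn u I := by
    rw [hudef]
    exact continuousOn_const.div (hscont.mul hMcont) (fun x hx => (hsMpos x hx).ne')
  have huC : ∀ x ∈ I, x ≤ a₁ → u x ≤ C := by
    intro x hx hxa₁
    have hNle : N x ≤ C * M x := by
      rw [hNdef, hMeq]
      have h2 : (∫ t in Ioo a x, C * m t) = C * ∫ t in Ioo a x, m t :=
        MeasureTheory.integral_const_mul C _
      rw [← h2]
      apply setIntegral_mono_on (hμm_int x hx) ((hmi x hx).const_mul C) measurableSet_Ioo
      intro t ht
      have htI : t ∈ I := hIooI hx ht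
      have ht' : t ∈ Ioo a a₁ := ⟨ht.1, lt_of_lt_of_le ht.2 hxa₁⟩
      calc μ t * m t ≤ |μ t| * m t :=
            mul_le_mul_of_nonneg_right (le_abs_self _) (hmpos t htI).le
        _ ≤ C * m t := mul_le_mul_of_nonneg_right (hCb t ht') (hmpos t htI).le
    have hueq : u x = N x / M x := by
      have h4 : (s x)⁻¹ = N x := by rw [← hSN x hx, hS1s]
      show 1 / (s x * M x) = N x / M x
      rw [← h4, one_div, mul_inv, div_eq_mul_inv]
    rw [hueq, div_le_iff₀ (hMpos x hx)]
    linarith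
  obtain ⟨x₂, hx₂I, hx₂a₁, hx₂prop⟩ :
      ∃ x₂, x₂ ∈ I ∧ a₁ ≤ x₂ ∧ ∀ x ∈ I, x₂ ≤ x → (1:ℝ) ≤ s x * M x := by
    by_cases hb : b = ⊤
    · rw [atB, if_pos hb] at hsMb
      obtain ⟨X, hX⟩ := (hsMb.eventually_ge_atTop 1).exists_forall_of_atTop
      refine ⟨max X a₁, ⟨lt_of_lt_of_le (hsubI a₁ ha₁I) (le_max_right _ _), ?_⟩,
        le_max_right _ _, fun x hx hxX => hX x (le_trans (le_max_left _ _) hxX)⟩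
      rw [hb]; exact EReal.coe_lt_top _
    · have hbbot : b ≠ ⊥ := fun h => by
        rw [h] at hab; exact absurd hab (by simp)
      have hbr : ((b.toReal : ℝ) : EReal) = b := EReal.coe_toReal hb hbbot
      rw [atB, if_neg hb] at hsMb
      obtain ⟨l, hl, hlsub⟩ :=
        mem_nhdsLT_iff_exists_Ioo_subset.1 (hsMb.eventually_ge_atTop 1)
      have hlbr : l < b.toReal := hl
      have ha₁br : a₁ < b.toReal := by
        rw [← EReal.coe_lt_coe_iff, hbr]; exact hsubI' a₁ ha₁I
      refine ⟨max a₁ ((l + b.toReal)/2),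
        ⟨lt_of_lt_of_le (hsubI a₁ ha₁I) (le_max_left _ _), ?_⟩,
        le_max_left _ _, ?_⟩
      · rw [← hbr, EReal.coe_lt_coe_iff]
        apply max_lt ha₁br
        simp only [EReal.toReal_coe]
        linarith
      · intro x hx hxX
        have hxbr : x < b.toReal := by
          rw [← EReal.coe_lt_coe_iff, hbr]; exact hsubI' x hx
        have hlx : l < x := by
          have h1 : (l + b.toReal)/2 ≤ x := le_trans (le_max_right _ _) hxX
          linarith
        exact hlsub ⟨hlx, hxbr⟩
  obtain ⟨B, hB⟩ := (isCompact_Icc (a := a₁) (b := x₂)).exists_bound_of_continuousOn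
    (hucont.mono (hIccI ha₁I hx₂I))
  have hbdd : BddAbove (u '' I) := by
    refine ⟨max C (max B 1), ?_⟩
    rintro _ ⟨x, hxI, rfl⟩
    rcases le_total x a₁ with h | h
    · exact le_trans (huC x hxI h) (le_max_left _ _)
    · rcases le_total x x₂ with h' | h'
      · refine le_trans ?_ (le_trans (le_max_left _ _) (le_max_right _ _))
        exact le_trans (le_abs_self _) (hB x ⟨h, h'⟩)
      · refine le_trans ?_ (le_trans (le_max_right _ _) (le_max_right _ _))
        have h1 : (1:ℝ) ≤ s x * M x := hx₂prop x hxI h'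
        show 1 / (s x * M x) ≤ 1
        exact (div_le_one (by linarith)).2 h1
  set z₀ := sSup (u '' I) with hz₀def
  have hz : ∀ x ∈ I, u x ≤ z₀ := fun x hx => le_csSup hbdd ⟨x, hx, rfl⟩
  have hz₀pos : 0 < z₀ := lt_of_lt_of_le (hupos x₀ hx₀) (hz x₀ hx₀)
  have hflow : ∀ t ∈ I, 1/z₀ ≤ M t * s t := by
    intro t ht
    have h1 : 1 / (s t * M t) ≤ z₀ := hz t ht
    have h2 := (one_div_le (hsMpos t ht) hz₀pos).1 h1
    calc 1/z₀ ≤ s t * M t := h2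
      _ = M t * s t := mul_comm _ _
  have hfii : ∀ {x y : ℝ}, x ∈ I → y ∈ I →
      IntervalIntegrable (fun v => M v * s v) volume x y :=
    fun {x y} hx hy => ((hMcont.mul hscont).mono (huIccI hx hy)).intervalIntegrable
  have hxidiff : ∀ w y : ℝ, w ∈ I → y ∈ I →
      xiF μ σ x₀ a y - xiF μ σ x₀ a w = ∫ v in w..y, M v * s v := by
    intro w y hw hy
    have h1 : (∫ v in x₀..w, M v * s v) + (∫ v in w..y, M v * s v)
        = ∫ v in x₀..y, M v * s v :=
      intervalIntegral.integral_add_adjacent_intervals (hfii hx₀ hw) (hfii hw hy)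
    have h2 : xiF μ σ x₀ a y = ∫ v in x₀..y, M v * s v := by
      rw [hMdef, hsdef]; rfl
    have h3 : xiF μ σ x₀ a w = ∫ v in x₀..w, M v * s v := by
      rw [hMdef, hsdef]; rfl
    rw [h2, h3]
    linarith
  have hweak : ∀ w y : ℝ, a < w → w < y → (y : EReal) < b →
      (y - w) / (xiF μ σ x₀ a y - xiF μ σ x₀ a w) ≤ z₀ := by
    intro w y hw hwy hyb
    have hyI : y ∈ I := hmemI (hw.trans hwy) hyb
    have hwI : w ∈ I := hmemI hw (lt_trans (EReal.coe_lt_coe_iff.2 hwy) hyb)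
    have hge : (y - w) / z₀ ≤ xiF μ σ x₀ a y - xiF μ σ x₀ a w := by
      rw [hxidiff w y hwI hyI]
      have h1 : (∫ _ in w..y, 1/z₀) ≤ ∫ v in w..y, M v * s v := by
        apply intervalIntegral.integral_mono_on hwy.le intervalIntegrable_const
          (hfii hwI hyI)
        intro t ht
        exact hflow t (hIccI hwI hyI ht)
      have h2 : (∫ _ in w..y, 1/z₀ : ℝ) = (y - w) * (1/z₀) := by
        rw [intervalIntegral.integral_const, smul_eq_mul]
      rw [h2] at h1
      calc (y - w)/z₀ = (y - w) * (1/z₀) := by ring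
        _ ≤ _ := h1
    have hdpos : 0 < xiF μ σ x₀ a y - xiF μ σ x₀ a w :=
      lt_of_lt_of_le (div_pos (by linarith) hz₀pos) hge
    rw [div_le_iff₀ hdpos]
    rw [div_le_iff₀ hz₀pos] at hge
    linarith
  refine ⟨hweak, ?_⟩
  rintro ⟨xh, hxhI, hmono, hconc⟩ w y hw hwy hyb
  have hyI : y ∈ I := hmemI (hw.trans hwy) hyb
  have hwI : w ∈ I := hmemI hw (lt_trans (EReal.coe_lt_coe_iff.2 hwy) hyb)
  have hIoowy : Ioo w y ⊆ I := fun t ht => hIccI hwI hyI ⟨ht.1.le, ht.2.le⟩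
  have hexv : ∃ v ∈ Ioo w y, 1/z₀ < M v * s v := by
    by_contra hcon
    push_neg at hcon
    have hfeq : ∀ v ∈ Ioo w y, M v * s v = 1/z₀ :=
      fun v hv => le_antisymm (hcon v hv) (hflow v (hIoowy hv))
    have hμeq : ∀ v ∈ Ioo w y, μ v = z₀ := by
      intro v hv
      have hvI : v ∈ I := hIoowy hv
      have hfd : HasDerivAt (fun t => M t * s t)
          (m v * s v + M v * (-gg v * s v)) v :=
        (hMderiv' v hvI).mul (hsderiv v hvI)
      have hfc : HasDerivAt (fun t => M t * s t) 0 v := by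
        apply (hasDerivAt_const v (1/z₀)).congr_of_eventuallyEq
        filter_upwards [isOpen_Ioo.mem_nhds hv] with t ht
        exact hfeq t ht
      have h0 : m v * s v + M v * (-gg v * s v) = 0 := hfd.unique hfc
      have h1 : m v * s v = 2 / σ v ^ 2 := by
        rw [hmeq]
        have h2 : σ v ^ 2 ≠ 0 := (hσpos v hvI).ne'
        have h3 : s v ≠ 0 := (hspos v).ne'
        field_simp
      have h2 : M v * s v = 1/z₀ := hfeq v hv
      have h3 : M v * (-gg v * s v) = -gg v * (M v * s v) := by ring
      rw [h3, h2, h1, hggdef] at h0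
      have hσne : σ v ^ 2 ≠ 0 := (hσpos v hvI).ne'
      have hz₀ne : z₀ ≠ 0 := ne_of_gt hz₀pos
      field_simp at h0
      have h5 : σ v ^ 2 * (z₀ - μ v) = 0 := by
        rw [mul_zero, div_eq_zero_iff] at h0
        rcases h0 with h7 | h7
        · rw [show z₀ - μ v = 0 by linarith]; ring
        · rw [h7]; ring
      rcases mul_eq_zero.1 h5 with h6 | h6
      · exact absurd h6 hσne
      · linarith
    rcases lt_or_ge w xh with hcase | hcase
    · have hwq : w < min y xh := lt_min hwy hcase
      have hqy : min y xh ≤ y := min_le_left _ _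
      have hqxh : min y xh ≤ xh := min_le_right _ _
      have haw : a < w := hw
      set p1 : ℝ := w + (min y xh - w)/3 with hp1
      set p2 : ℝ := w + 2*(min y xh - w)/3 with hp2
      have hp1wy : p1 ∈ Ioo w y := ⟨by rw [hp1]; linarith, by rw [hp1]; linarith⟩
      have hp2wy : p2 ∈ Ioo w y := ⟨by rw [hp2]; linarith, by rw [hp2]; linarith⟩
      have hp1m : p1 ∈ Ioo a xh := ⟨by rw [hp1]; linarith, by rw [hp1]; linarith⟩
      have hp2m : p2 ∈ Ioo a xh := ⟨by rw [hp2]; linarith, by rw [hp2]; linarith⟩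
      have hlt : μ p1 < μ p2 := hmono hp1m hp2m (by rw [hp1, hp2]; linarith)
      rw [hμeq p1 hp1wy, hμeq p2 hp2wy] at hlt
      exact lt_irrefl _ hlt
    · set v1 : ℝ := w + (y - w)/2 with hv1
      set v2 : ℝ := w + 3*(y - w)/4 with hv2
      have hv1wy : v1 ∈ Ioo w y := ⟨by rw [hv1]; linarith, by rw [hv1]; linarith⟩
      have hv2wy : v2 ∈ Ioo w y := ⟨by rw [hv2]; linarith, by rw [hv2]; linarith⟩
      have hv1v2 : v1 < v2 := by rw [hv1, hv2]; linarith
      have hv1I : v1 ∈ I := hIoowy hv1wy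
      have hμv1 : μ v1 = z₀ := hμeq v1 hv1wy
      have hμv2 : μ v2 = z₀ := hμeq v2 hv2wy
      have haxh : a < xh := hsubI xh hxhI
      have hxhv1 : xh < v1 := lt_of_le_of_lt hcase hv1wy.1
      have hv2J : v2 ∈ {x : ℝ | xh < x ∧ (x : EReal) < b} :=
        ⟨hxhv1.trans hv1v2, hsubI' v2 (hIoowy hv2wy)⟩
      have hμle1 : ∀ t ∈ Ioo xh v1, μ t ≤ z₀ := by
        intro t ht
        have htJ : t ∈ {x : ℝ | xh < x ∧ (x : EReal) < b} :=
          ⟨ht.1, hsubI' t (hIooI hv1I ⟨haxh.trans ht.1, ht.2⟩)⟩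
        have hsl := hconc.slope_anti_adjacent htJ hv2J ht.2 hv1v2
        have hs0 : (μ v2 - μ v1) / (v2 - v1) = 0 := by
          rw [hμv1, hμv2]; simp
        rw [hs0] at hsl
        have h2 : 0 ≤ μ v1 - μ t := by
          by_contra hc
          push_neg at hc
          have : (μ v1 - μ t)/(v1 - t) < 0 :=
            div_neg_of_neg_of_pos (by linarith) (by linarith [ht.2])
          linarith
        linarith [hμv1 ▸ h2]
      have hμxh : μ xh ≤ z₀ := by
        have htend : Tendsto μ (𝓝[>] xh) (𝓝 (μ xh)) :=
          ((hμcont.continuousAt (hIopen.mem_nhds hxhI)).tendsto).mono_left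
            nhdsWithin_le_nhds
        refine le_of_tendsto htend ?_
        filter_upwards [Ioo_mem_nhdsGT hxhv1] with t ht
        exact hμle1 t ht
      have hμlt : ∀ t ∈ Ioo a xh, μ t < z₀ := by
        intro t ht
        have hmid1 : (t + xh)/2 ∈ Ioo a xh := ⟨by linarith [ht.1], by linarith [ht.2]⟩
        have h1 : μ t < μ ((t + xh)/2) := hmono ht hmid1 (by linarith [ht.2])
        have h2 : μ ((t + xh)/2) ≤ μ xh := by
          have htend : Tendsto μ (𝓝[<] xh) (𝓝 (μ xh)) :=
            ((hμcont.continuousAt (hIopen.mem_nhds hxhI)).tendsto).mono_left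
              nhdsWithin_le_nhds
          refine ge_of_tendsto htend ?_
          filter_upwards [Ioo_mem_nhdsLT
            (show (t + xh)/2 < xh by linarith [ht.2])] with r hr
          exact (hmono hmid1 ⟨lt_trans hmid1.1 hr.1, hr.2⟩ hr.1).le
        linarith
      have hμlev1 : ∀ t ∈ Ioo a v1, μ t ≤ z₀ := by
        intro t ht
        rcases lt_trichotomy t xh with h | h | h
        · exact (hμlt t ⟨ht.1, h⟩).le
        · rw [h]; exact hμxh
        · exact hμle1 t ⟨h, ht.2⟩
      have hint1 : IntegrableOn (fun t => z₀ * m t - μ t * m t) (Ioo a v1) volume :=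
        ((hmi v1 hv1I).const_mul z₀).sub (hμm_int v1 hv1I)
      set p : ℝ := a + (xh - a)/3 with hp
      set q : ℝ := a + (xh - a)/2 with hqd
      have hpq : p < q := by rw [hp, hqd]; linarith
      have hpm : p ∈ Ioo a xh := ⟨by rw [hp]; linarith, by rw [hp]; linarith⟩
      have hqm : q ∈ Ioo a xh := ⟨by rw [hqd]; linarith, by rw [hqd]; linarith⟩
      have hIooaxhI : Ioo a xh ⊆ I := hIooI hxhI
      have hpI : p ∈ I := hIooaxhI hpm
      have hqI : q ∈ I := hIooaxhI hqm
      have hpos1 : 0 < ∫ t in p..q, z₀ * m t - μ t * m t := by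
        apply intervalIntegral.intervalIntegral_pos_of_pos_on
        · exact (((continuousOn_const.mul hmcont).sub (hμcont.mul hmcont)).mono
            (huIccI hpI hqI)).intervalIntegrable
        · intro t ht
          have htm : t ∈ Ioo a xh := ⟨lt_trans hpm.1 ht.1, lt_trans ht.2 hqm.2⟩
          have htI : t ∈ I := hIooaxhI htm
          have h1 := hμlt t htm
          have hm := hmpos t htI
          nlinarith
        · exact hpq
      have heq1 : (∫ t in p..q, z₀ * m t - μ t * m t)
          = ∫ t in Ioo p q, z₀ * m t - μ t * m t := by
        rw [intervalIntegral.integral_of_le hpq.le, integral_Ioc_eq_integral_Ioo]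
      have hsub1 : Ioo p q ⊆ Ioo a v1 :=
        Set.Ioo_subset_Ioo hpm.1.le (le_trans hqm.2.le (le_of_lt hxhv1))
      have hmono1 : (∫ t in Ioo p q, z₀ * m t - μ t * m t)
          ≤ ∫ t in Ioo a v1, z₀ * m t - μ t * m t := by
        apply setIntegral_mono_set hint1
        · filter_upwards [ae_restrict_mem measurableSet_Ioo] with t ht
          have htI : t ∈ I := hIooI hv1I ht
          have h1 := hμlev1 t ht
          have h2 := (hmpos t htI).le
          show (0:ℝ) ≤ z₀ * m t - μ t * m t
          nlinarith
        · exact HasSubset.Subset.eventuallyLE hsub1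
      have hsplit2 : (∫ t in Ioo a v1, z₀ * m t - μ t * m t)
          = z₀ * M v1 - N v1 := by
        rw [integral_sub ((hmi v1 hv1I).const_mul z₀) (hμm_int v1 hv1I)]
        rw [hNdef, hMeq]
        rw [MeasureTheory.integral_const_mul]
      have hlt2 : N v1 < z₀ * M v1 := by
        have h5 := lt_of_lt_of_le (heq1 ▸ hpos1) hmono1
        rw [hsplit2] at h5
        linarith
      have hNv1 : N v1 = z₀ * M v1 := by
        have h2 : M v1 * s v1 = 1/z₀ := hfeq v1 hv1wy
        have h3 : (s v1)⁻¹ = z₀ * M v1 := by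
          have hsne : s v1 ≠ 0 := (hspos v1).ne'
          have hz₀ne : z₀ ≠ 0 := ne_of_gt hz₀pos
          field_simp at h2 ⊢
          nlinarith [h2]
        rw [← hSN v1 hv1I, hS1s, h3]
      linarith
  obtain ⟨v, hv, hvlt⟩ := hexv
  have hgt : (y - w)/z₀ < xiF μ σ x₀ a y - xiF μ σ x₀ a w := by
    rw [hxidiff w y hwI hyI]
    have h1 : (∫ _ in w..y, 1/z₀) < ∫ t in w..y, M t * s t := by
      apply intervalIntegral.integral_lt_integral_of_continuousOn_of_le_of_exists_lt hwy
        continuousOn_const ((hMcont.mul hscont).mono (hIccI hwI hyI))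
        (fun t ht => hflow t (hIccI hwI hyI (Set.Ioc_subset_Icc_self ht)))
        ⟨v, ⟨hv.1.le, hv.2.le⟩, hvlt⟩
    have h2 : (∫ _ in w..y, 1/z₀ : ℝ) = (y - w) * (1/z₀) := by
      rw [intervalIntegral.integral_const, smul_eq_mul]
    rw [h2] at h1
    calc (y - w)/z₀ = (y - w) * (1/z₀) := by ring
      _ < _ := h1
  have hdpos : 0 < xiF μ σ x₀ a y - xiF μ σ x₀ a w :=
    lt_trans (div_pos (by linarith) hz₀pos) hgt
  rw [div_lt_iff₀ hdpos]
  rw [div_lt_iff₀ hz₀pos] at hgt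
  linarith
end
end

section
/- Suppose lim_{x→a⁺} s(x) = ∞, μ extends continuously to x = a with a finite value μ(a), and the left boundary a is natural in the sense that ∫_a^{x₀} M[a,v] s(v) dv = ∞ (so ξ(w) → −∞ as w → a⁺). Then for any fixed y₀ ∈ (a,b): lim_{w→a⁺} (y₀ − w)/(ξ(y₀) − ξ(w)) = 0, lim_{w→a⁺} w/ξ(w) = 0, and (y − w)/(ξ(y) − ξ(w)) → 0 as (w,y) → (a,a) with a < w < y. -/
open MeasureTheory Filter Set Topology
open scoped Classical

noncomputable section

theorem statement7    (a : ℝ) (b : EReal) (hab : (a : EReal) < b)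
    (μ σ : ℝ → ℝ) (x₀ : ℝ) (hx₀ : x₀ ∈ stInt a b)
    (hμcont : ContinuousOn μ (stInt a b)) (hσcont : ContinuousOn σ (stInt a b))
    (hσpos : ∀ x ∈ stInt a b, 0 < (σ x) ^ 2)
    (hMfin : ∀ x ∈ stInt a b, IntegrableOn (mDen μ σ x₀) (Set.Ioo a x))
    (hsa : Tendsto (sDen μ σ x₀) (𝓝[>] a) atTop)
    (μa : ℝ) (hμa : Tendsto μ (𝓝[>] a) (𝓝 μa))
    (hanat : Tendsto (xiF μ σ x₀ a) (𝓝[>] a) atBot)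
    :
    (∀ y₀ ∈ stInt a b,
      Tendsto (fun w => (y₀ - w) / (xiF μ σ x₀ a y₀ - xiF μ σ x₀ a w)) (𝓝[>] a) (𝓝 0)) ∧
    Tendsto (fun w => w / xiF μ σ x₀ a w) (𝓝[>] a) (𝓝 0) ∧
    Tendsto (fun q : ℝ × ℝ => (q.2 - q.1) / (xiF μ σ x₀ a q.2 - xiF μ σ x₀ a q.1))
      (((𝓝[>] a) ×ˢ (𝓝[>] a)) ⊓ 𝓟 {q : ℝ × ℝ | q.1 < q.2 ∧ (q.2 : EReal) < b}) (𝓝 0) := by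
  set s : ℝ → ℝ := sDen μ σ x₀ with hs_def
  set m : ℝ → ℝ := mDen μ σ x₀ with hm_def
  set M : ℝ → ℝ := Mab μ σ x₀ a with hM_def
  set ξ : ℝ → ℝ := xiF μ σ x₀ a with hξ_def
  -- basic structural facts
  have hIopen : IsOpen (stInt a b) := by
    apply IsOpen.inter (isOpen_lt continuous_const continuous_id)
    exact isOpen_lt (EReal.continuous_coe_iff.mpr continuous_id) continuous_const |>.preimage
      continuous_id
  have hsub : ∀ {p q : ℝ}, p ∈ stInt a b → q ∈ stInt a b → uIcc p q ⊆ stInt a b := by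
    intro p q hp hq z hz
    rw [Set.uIcc_eq_union] at hz
    constructor
    · rcases hz with h | h
      · exact lt_of_lt_of_le hp.1 h.1
      · exact lt_of_lt_of_le hq.1 h.1
    · rcases hz with h | h
      · exact lt_of_le_of_lt (EReal.coe_le_coe_iff.2 h.2) hq.2
      · exact lt_of_le_of_lt (EReal.coe_le_coe_iff.2 h.2) hp.2
  have hspos : ∀ x, 0 < s x := fun x => Real.exp_pos _
  have hmnn : ∀ x, 0 ≤ m x := fun x =>
    div_nonneg (by norm_num) (mul_nonneg (sq_nonneg _) (hspos x).le)
  -- the exponent integrand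
  set g : ℝ → ℝ := fun y => 2 * μ y / σ y ^ 2 with hg_def
  have hgcont : ContinuousOn g (stInt a b) :=
    (continuousOn_const.mul hμcont).div (hσcont.pow 2) (fun x hx => (hσpos x hx).ne')
  set I : ℝ → ℝ := fun x => ∫ y in x₀..x, g y with hI_def
  have hIderiv : ∀ x ∈ stInt a b, HasDerivAt I (g x) x := by
    intro x hx
    exact intervalIntegral.integral_hasDerivAt_right
      ((hgcont.mono (hsub hx₀ hx)).intervalIntegrable)
      (hgcont.stronglyMeasurableAtFilter hIopen x hx)
      (hgcont.continuousAt (hIopen.mem_nhds hx))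
  have hIcont : ContinuousOn I (stInt a b) :=
    fun x hx => ((hIderiv x hx).continuousAt).continuousWithinAt
  have hseq : ∀ x, s x = Real.exp (-(I x)) := fun x => rfl
  set S : ℝ → ℝ := fun x => Real.exp (I x) with hS_def
  have hSpos : ∀ x, 0 < S x := fun x => Real.exp_pos _
  have hsS : ∀ x, s x = (S x)⁻¹ := by
    intro x; rw [hseq, Real.exp_neg]
  have hscont : ContinuousOn s (stInt a b) := by
    have : ContinuousOn (fun x => Real.exp (-(I x))) (stInt a b) :=
      Real.continuous_exp.comp_continuousOn hIcont.neg
    exact this.congr (fun x _ => hseq x)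
  have hmcont : ContinuousOn m (stInt a b) := by
    have : ContinuousOn (fun x => 2 / (σ x ^ 2 * s x)) (stInt a b) :=
      continuousOn_const.div ((hσcont.pow 2).mul hscont)
        (fun x hx => (mul_pos (hσpos x hx) (hspos x)).ne')
    exact this
  have hSderiv : ∀ x ∈ stInt a b, HasDerivAt S (μ x * m x) x := by
    intro x hx
    have h1 : HasDerivAt S (Real.exp (I x) * g x) x := (hIderiv x hx).exp
    have h2 : Real.exp (I x) * g x = μ x * m x := by
      rw [hg_def]
      have hx2 : m x = 2 / (σ x ^ 2 * s x) := rfl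
      rw [hx2, hseq, Real.exp_neg]
      field_simp
    rwa [h2] at h1
  have hScont : ContinuousOn S (stInt a b) :=
    fun x hx => ((hSderiv x hx).continuousAt).continuousWithinAt
  have hSftc : ∀ w x : ℝ, w ∈ stInt a b → x ∈ stInt a b → w ≤ x →
      ∫ y in w..x, μ y * m y = S x - S w := by
    intro w x hw hx hwx
    exact intervalIntegral.integral_eq_sub_of_hasDerivAt
      (fun y hy => hSderiv y (hsub hw hx hy))
      (((hμcont.mul hmcont).mono (hsub hw hx)).intervalIntegrable)
  -- facts about M
  have hMnn : ∀ x, 0 ≤ M x := fun x =>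
    setIntegral_nonneg measurableSet_Ioo (fun u _ => hmnn u)
  have hMsplit : ∀ w x : ℝ, w ∈ stInt a b → x ∈ stInt a b → w ≤ x →
      M x = M w + ∫ u in w..x, m u := by
    intro w x hw hx hwx
    rw [intervalIntegral.integral_of_le hwx]
    have hIco : IntegrableOn m (Ico w x) := by
      apply (hMfin x hx).mono_set
      intro z hz; exact ⟨lt_of_lt_of_le hw.1 hz.1, hz.2⟩
    have hunion : Ioo a w ∪ Ico w x = Ioo a x := Set.Ioo_union_Ico_eq_Ioo hw.1 hwx
    have hdisj : Disjoint (Ioo a w) (Ico w x) :=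
      Set.disjoint_left.mpr fun z hz1 hz2 => absurd hz1.2 (not_lt.2 hz2.1)
    have hU := MeasureTheory.setIntegral_union hdisj measurableSet_Ico (hMfin w hw) hIco
    rw [hM_def, Mab, Mab, ← hm_def, ← hunion, hU,
      MeasureTheory.integral_Ico_eq_integral_Ioo]
    simp [MeasureTheory.integral_Ioc_eq_integral_Ioo]
  -- continuity of M
  have hMcont : ContinuousOn M (stInt a b) := by
    intro x hx
    set p : ℝ := (a + x)/2 with hp_def
    have hwmem : p ∈ stInt a b := by
      constructor
      · show a < p
        rw [hp_def]; linarith [hx.1]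
      · exact lt_trans (EReal.coe_lt_coe_iff.2 (by rw [hp_def]; linarith [hx.1])) hx.2
    have hwx : p < x := by rw [hp_def]; linarith [hx.1]
    have hd : HasDerivAt (fun z => M p + ∫ u in p..z, m u) (m x) x := by
      have := intervalIntegral.integral_hasDerivAt_right
        ((hmcont.mono (hsub hwmem hx)).intervalIntegrable)
        (hmcont.stronglyMeasurableAtFilter hIopen x hx)
        (hmcont.continuousAt (hIopen.mem_nhds hx))
      exact this.const_add _
    apply ContinuousAt.continuousWithinAt
    refine hd.continuousAt.congr ?_
    filter_upwards [hIopen.mem_nhds hx, isOpen_Ioi.mem_nhds hwx] with z hz1 hz2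
    exact (hMsplit _ z hwmem hz1 (le_of_lt hz2)).symm
  -- M tends to 0 at a⁺
  have hM0 : Tendsto M (𝓝[>] a) (𝓝 0) := by
    have h0 : Tendsto (fun w => ∫ u in Ioo a x₀, (Ioo a w).indicator m u) (𝓝[>] a)
        (𝓝 (∫ _u in Ioo a x₀, (0:ℝ))) := by
      apply MeasureTheory.tendsto_integral_filter_of_dominated_convergence m
      · filter_upwards [Ioo_mem_nhdsGT_of_mem ⟨le_refl a, hx₀.1⟩] with w hw
        rw [aestronglyMeasurable_indicator_iff measurableSet_Ioo,
          Measure.restrict_restrict measurableSet_Ioo,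
          inter_eq_left.2 (Set.Ioo_subset_Ioo le_rfl hw.2.le)]
        exact (hMfin w ⟨hw.1, lt_trans (EReal.coe_lt_coe_iff.2 hw.2) hx₀.2⟩).aestronglyMeasurable
      · filter_upwards with w
        apply Eventually.of_forall
        intro u
        by_cases hu : u ∈ Ioo a w
        · rw [Set.indicator_of_mem hu, Real.norm_eq_abs, abs_of_nonneg (hmnn u)]
        · rw [Set.indicator_of_notMem hu]
          simpa using hmnn u
      · exact hMfin x₀ hx₀
      · rw [ae_restrict_iff' measurableSet_Ioo]
        apply Eventually.of_forall
        intro u hu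
        apply Tendsto.congr' _ tendsto_const_nhds
        filter_upwards [Ioo_mem_nhdsGT_of_mem ⟨le_refl a, hu.1⟩] with w hw
        exact (Set.indicator_of_notMem (fun hmem => absurd hmem.2 (not_lt.2 hw.2.le)) m).symm
    rw [MeasureTheory.integral_zero] at h0
    apply Tendsto.congr' _ h0
    filter_upwards [Ioo_mem_nhdsGT_of_mem ⟨le_refl a, hx₀.1⟩] with w hw
    rw [MeasureTheory.setIntegral_indicator measurableSet_Ioo,
      inter_eq_right.2 (Set.Ioo_subset_Ioo le_rfl hw.2.le)]
    rfl
  -- S tends to 0 at a⁺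
  have hS0 : Tendsto S (𝓝[>] a) (𝓝 0) := by
    have := hsa.inv_tendsto_atTop
    apply this.congr
    intro x
    rw [Pi.inv_apply, hsS x, inv_inv]
  -- difference formula for ξ
  have hMscont : ContinuousOn (fun v => M v * s v) (stInt a b) := hMcont.mul hscont
  have hξdiff : ∀ w y : ℝ, w ∈ stInt a b → y ∈ stInt a b →
      ξ y - ξ w = ∫ v in w..y, M v * s v := by
    intro w y hw hy
    exact intervalIntegral.integral_interval_sub_left
      ((hMscont.mono (hsub hx₀ hy)).intervalIntegrable)
      ((hMscont.mono (hsub hx₀ hw)).intervalIntegrable)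
  -- upper bound : eventually S x ≤ C * M x when eventually μ ≤ C
  have hup : ∀ C : ℝ, (∀ᶠ x in 𝓝[>] a, μ x ≤ C) → ∀ᶠ x in 𝓝[>] a, S x ≤ C * M x := by
    intro C hC
    obtain ⟨u, hu, hsubU⟩ := mem_nhdsGT_iff_exists_Ioo_subset.1
      (inter_mem hC (Ioo_mem_nhdsGT_of_mem ⟨le_refl a, hx₀.1⟩))
    filter_upwards [Ioo_mem_nhdsGT_of_mem ⟨le_refl a, hu⟩] with x hxu
    have hxI : x ∈ stInt a b := ⟨hxu.1, lt_trans (EReal.coe_lt_coe_iff.2 (hsubU hxu).2.2) hx₀.2⟩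
    have hev : ∀ᶠ w in 𝓝[>] a, S x ≤ S w + C * (M x - M w) := by
      filter_upwards [Ioo_mem_nhdsGT_of_mem ⟨le_refl a, hxu.1⟩] with w hwx
      have hwI : w ∈ stInt a b := ⟨hwx.1, lt_trans (EReal.coe_lt_coe_iff.2 hwx.2) hxI.2⟩
      have h1 : ∫ y in w..x, μ y * m y ≤ ∫ y in w..x, C * m y := by
        apply intervalIntegral.integral_mono_on hwx.2.le
          ((hμcont.mul hmcont).mono (hsub hwI hxI)).intervalIntegrable
          ((continuousOn_const.mul (hmcont.mono (hsub hwI hxI)))).intervalIntegrable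
        intro y hy
        have hyu : y ∈ Ioo a u := ⟨lt_of_lt_of_le hwx.1 hy.1, lt_of_le_of_lt hy.2 hxu.2⟩
        exact mul_le_mul_of_nonneg_right (hsubU hyu).1 (hmnn y)
      have h2 : ∫ y in w..x, C * m y = C * (M x - M w) := by
        rw [intervalIntegral.integral_const_mul]
        have h3 := hMsplit w x hwI hxI hwx.2.le
        have h4 : ∫ u in w..x, m u = M x - M w := by linarith
        rw [h4]
      have h5 := hSftc w x hwI hxI hwx.2.le
      linarith
    have hlim : Tendsto (fun w => S w + C * (M x - M w)) (𝓝[>] a)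
        (𝓝 (0 + C * (M x - 0))) :=
      hS0.add (tendsto_const_nhds.mul (tendsto_const_nhds.sub hM0))
    have := ge_of_tendsto hlim hev
    linarith
  -- lower bound : eventually c * M x ≤ S x when eventually c ≤ μ
  have hlo : ∀ c : ℝ, (∀ᶠ x in 𝓝[>] a, c ≤ μ x) → ∀ᶠ x in 𝓝[>] a, c * M x ≤ S x := by
    intro c hc
    obtain ⟨u, hu, hsubU⟩ := mem_nhdsGT_iff_exists_Ioo_subset.1
      (inter_mem hc (Ioo_mem_nhdsGT_of_mem ⟨le_refl a, hx₀.1⟩))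
    filter_upwards [Ioo_mem_nhdsGT_of_mem ⟨le_refl a, hu⟩] with x hxu
    have hxI : x ∈ stInt a b := ⟨hxu.1, lt_trans (EReal.coe_lt_coe_iff.2 (hsubU hxu).2.2) hx₀.2⟩
    have hev : ∀ᶠ w in 𝓝[>] a, S w + c * (M x - M w) ≤ S x := by
      filter_upwards [Ioo_mem_nhdsGT_of_mem ⟨le_refl a, hxu.1⟩] with w hwx
      have hwI : w ∈ stInt a b := ⟨hwx.1, lt_trans (EReal.coe_lt_coe_iff.2 hwx.2) hxI.2⟩
      have h1 : ∫ y in w..x, c * m y ≤ ∫ y in w..x, μ y * m y := by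
        apply intervalIntegral.integral_mono_on hwx.2.le
          ((continuousOn_const.mul (hmcont.mono (hsub hwI hxI)))).intervalIntegrable
          ((hμcont.mul hmcont).mono (hsub hwI hxI)).intervalIntegrable
        intro y hy
        have hyu : y ∈ Ioo a u := ⟨lt_of_lt_of_le hwx.1 hy.1, lt_of_le_of_lt hy.2 hxu.2⟩
        exact mul_le_mul_of_nonneg_right (hsubU hyu).1 (hmnn y)
      have h2 : ∫ y in w..x, c * m y = c * (M x - M w) := by
        rw [intervalIntegral.integral_const_mul]
        have h3 := hMsplit w x hwI hxI hwx.2.le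
        have h4 : ∫ u in w..x, m u = M x - M w := by linarith
        rw [h4]
      have h5 := hSftc w x hwI hxI hwx.2.le
      linarith
    have hlim : Tendsto (fun w => S w + c * (M x - M w)) (𝓝[>] a)
        (𝓝 (0 + c * (M x - 0))) :=
      hS0.add (tendsto_const_nhds.mul (tendsto_const_nhds.sub hM0))
    have := le_of_tendsto hlim hev
    linarith
  -- μa must vanish
  have hμa0 : μa = 0 := by
    rcases lt_trichotomy μa 0 with hneg | h0 | hpos
    · exfalso
      have hev : ∀ᶠ x in 𝓝[>] a, μ x ≤ μa/2 := by
        filter_upwards [hμa.eventually_lt_const (by linarith : μa < μa/2)] with x hx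
        exact hx.le
      obtain ⟨x, hx⟩ := (hup (μa/2) hev).exists
      have h1 := hSpos x
      have h2 : μa/2 * M x ≤ 0 := mul_nonpos_of_nonpos_of_nonneg (by linarith) (hMnn x)
      linarith
    · exact h0
    · exfalso
      have hev : ∀ᶠ x in 𝓝[>] a, μa/2 ≤ μ x := by
        filter_upwards [hμa.eventually_const_lt (by linarith : μa/2 < μa)] with x hx
        exact hx.le
      obtain ⟨u, hu, hsubU⟩ := mem_nhdsGT_iff_exists_Ioo_subset.1
        (inter_mem (hlo (μa/2) hev) (Ioo_mem_nhdsGT_of_mem ⟨le_refl a, hx₀.1⟩))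
      have hau : a < u := hu
      have hx1u : (a+u)/2 ∈ Ioo a u := ⟨by linarith, by linarith⟩
      set x1 := (a + u)/2 with hx1_def
      have hx1I : x1 ∈ stInt a b :=
        ⟨hx1u.1, lt_trans (EReal.coe_lt_coe_iff.2 (hsubU hx1u).2.2) hx₀.2⟩
      have hbound : ∀ v ∈ Ioo a u, M v * s v ≤ 2/μa := by
        intro v hv
        have h1 : (μa/2) * M v ≤ S v := (hsubU hv).1
        have h2 := mul_le_mul_of_nonneg_right h1 (hspos v).le
        have h3 : s v * S v = 1 := by
          rw [hsS v]
          field_simp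
          exact div_self (hSpos v).ne'
        rw [le_div_iff₀ hpos]
        nlinarith [h2, h3]
      have hev2 : ∀ᶠ w in 𝓝[>] a, ξ x1 - (2/μa) * (x1 - a) ≤ ξ w := by
        filter_upwards [Ioo_mem_nhdsGT_of_mem ⟨le_refl a, hx1u.1⟩] with w hw
        have hwI : w ∈ stInt a b := ⟨hw.1, lt_trans (EReal.coe_lt_coe_iff.2 hw.2) hx1I.2⟩
        have hd := hξdiff w x1 hwI hx1I
        have hle : ∫ v in w..x1, M v * s v ≤ ∫ v in w..x1, (2/μa : ℝ) := by
          apply intervalIntegral.integral_mono_on hw.2.le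
            ((hMscont.mono (hsub hwI hx1I)).intervalIntegrable)
            intervalIntegrable_const
          intro v hv
          exact hbound v ⟨lt_of_lt_of_le hw.1 hv.1, lt_of_le_of_lt hv.2 hx1u.2⟩
        rw [intervalIntegral.integral_const, smul_eq_mul] at hle
        have h6 : ξ x1 - ξ w ≤ (x1 - w) * (2/μa) := by
          rw [hd]; exact hle
        have h2μa : (0:ℝ) ≤ 2/μa := by positivity
        nlinarith [mul_le_mul_of_nonneg_right (by linarith [hw.1] : x1 - w ≤ x1 - a) h2μa]
      obtain ⟨w, hw1, hw2⟩ :=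
        ((tendsto_atBot.1 hanat (ξ x1 - (2/μa)*(x1-a) - 1)).and hev2).exists
      linarith
  rw [hμa0] at hμa
  -- the key divergence
  have hkey : Tendsto (fun x => M x * s x) (𝓝[>] a) atTop := by
    rw [tendsto_atTop]
    intro b0
    have hC : (0:ℝ) < max b0 1 := lt_max_of_lt_right one_pos
    have hμsmall : ∀ᶠ x in 𝓝[>] a, μ x ≤ (max b0 1)⁻¹ := by
      filter_upwards [hμa.eventually_lt_const (inv_pos.2 hC)] with x hx
      exact hx.le
    filter_upwards [hup (max b0 1)⁻¹ hμsmall] with x hx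
    have hSx := hSpos x
    have hMx : 0 < M x := by
      by_contra h
      push_neg at h
      have : (max b0 1)⁻¹ * M x ≤ 0 := mul_nonpos_of_nonneg_of_nonpos (by positivity) h
      linarith
    have h3 : s x * S x = 1 := by
      rw [hsS x]
      field_simp
    have h4 : max b0 1 * S x ≤ M x := by
      calc max b0 1 * S x ≤ max b0 1 * ((max b0 1)⁻¹ * M x) :=
        mul_le_mul_of_nonneg_left hx hC.le
        _ = M x := by field_simp
    have h5 : max b0 1 ≤ M x * s x := by
      nlinarith [mul_le_mul_of_nonneg_right h4 (hspos x).le, h3]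
    exact le_trans (le_max_left _ _) h5
  -- conclusions
  refine ⟨?_, ?_, ?_⟩
  · intro y₀ hy₀
    have h2 : Tendsto (fun w => -ξ w) (𝓝[>] a) atTop := tendsto_neg_atBot_atTop.comp hanat
    have h1 : Tendsto (fun w => ξ y₀ - ξ w) (𝓝[>] a) atTop := by
      simpa [sub_eq_add_neg] using tendsto_atTop_add_const_left (𝓝[>] a) (ξ y₀) h2
    have h3 : Tendsto (fun w => (y₀ - w)) (𝓝[>] a) (𝓝 (y₀ - a)) :=
      tendsto_const_nhds.sub (tendsto_id.mono_left nhdsWithin_le_nhds)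
    have h4 := h3.mul h1.inv_tendsto_atTop
    simpa [div_eq_mul_inv] using h4
  · have h1 : Tendsto (fun w => -ξ w) (𝓝[>] a) atTop := tendsto_neg_atBot_atTop.comp hanat
    have h2 : Tendsto (fun w => (ξ w)⁻¹) (𝓝[>] a) (𝓝 0) := by
      have h3 := h1.inv_tendsto_atTop.neg
      simpa [inv_neg] using h3
    have hida : Tendsto (fun w : ℝ => w) (𝓝[>] a) (𝓝 a) := tendsto_id.mono_left nhdsWithin_le_nhds
    simpa [div_eq_mul_inv] using hida.mul h2
  · rw [Metric.tendsto_nhds]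
    intro ε hε
    have h2ε : (0:ℝ) < 2/ε := by positivity
    obtain ⟨u, hu, hsubU⟩ := mem_nhdsGT_iff_exists_Ioo_subset.1
      (inter_mem (tendsto_atTop.1 hkey (2/ε)) (Ioo_mem_nhdsGT_of_mem ⟨le_refl a, hx₀.1⟩))
    have hA : {q : ℝ × ℝ | q.1 ∈ Ioo a u ∧ q.2 ∈ Ioo a u} ∈
        (((𝓝[>] a) ×ˢ (𝓝[>] a)) ⊓ 𝓟 {q : ℝ × ℝ | q.1 < q.2 ∧ (q.2 : EReal) < b}) :=
      mem_inf_of_left (prod_mem_prod (Ioo_mem_nhdsGT_of_mem ⟨le_refl a, hu⟩)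
        (Ioo_mem_nhdsGT_of_mem ⟨le_refl a, hu⟩))
    have hB : {q : ℝ × ℝ | q.1 < q.2 ∧ (q.2 : EReal) < b} ∈
        (((𝓝[>] a) ×ˢ (𝓝[>] a)) ⊓ 𝓟 {q : ℝ × ℝ | q.1 < q.2 ∧ (q.2 : EReal) < b}) :=
      mem_inf_of_right (mem_principal_self _)
    filter_upwards [hA, hB] with q hq1 hq2
    obtain ⟨hw, hy⟩ := hq1
    obtain ⟨hwy, hyb⟩ := hq2
    have hyI : q.2 ∈ stInt a b := ⟨hy.1, hyb⟩
    have hwI : q.1 ∈ stInt a b := ⟨hw.1, lt_trans (EReal.coe_lt_coe_iff.2 hwy) hyb⟩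
    have hd := hξdiff q.1 q.2 hwI hyI
    have hlow : (2/ε) * (q.2 - q.1) ≤ ξ q.2 - ξ q.1 := by
      rw [hd]
      have h1 : ∫ v in q.1..q.2, (2/ε : ℝ) ≤ ∫ v in q.1..q.2, M v * s v := by
        apply intervalIntegral.integral_mono_on hwy.le intervalIntegrable_const
          ((hMscont.mono (hsub hwI hyI)).intervalIntegrable)
        intro v hv
        exact (hsubU ⟨lt_of_lt_of_le hw.1 hv.1, lt_of_le_of_lt hv.2 hy.2⟩).1
      rw [intervalIntegral.integral_const, smul_eq_mul] at h1
      linarith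
    have hwy' : (0:ℝ) < q.2 - q.1 := by linarith
    have hpos : 0 < ξ q.2 - ξ q.1 := lt_of_lt_of_le (by positivity) hlow
    rw [Real.dist_eq, sub_zero, abs_of_nonneg (le_of_lt (div_pos hwy' hpos))]
    rw [div_lt_iff₀ hpos]
    have h7 : ε * ((2/ε) * (q.2 - q.1)) = 2*(q.2 - q.1) := by
      field_simp
    linarith [mul_le_mul_of_nonneg_left hlow hε.le, h7, hwy']
end
end

section
/- Suppose lim_{x→a⁺} s(x) = ∞. Then (g(y) − g(w))/(ξ(y) − ξ(w)) → c(a) as (w,y) → (a,a) with a < w < y < b. If moreover the left boundary a is natural in the sense that ∫_a^{x₀} M[a,v] s(v) dv = ∞ (so ξ(w) → −∞ as w → a⁺), then for any fixed y₀ ∈ (a,b): lim_{w→a⁺} g(w)/ξ(w) = c(a) and lim_{w→a⁺} (g(y₀) − g(w))/(ξ(y₀) − ξ(w)) = c(a). -/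
open MeasureTheory Filter Set Topology
open scoped Classical

noncomputable section

theorem statement9    (a : ℝ) (b : EReal) (hab : (a : EReal) < b)
    (μ σ : ℝ → ℝ) (x₀ : ℝ) (hx₀ : x₀ ∈ stInt a b)
    (hμcont : ContinuousOn μ (stInt a b)) (hσcont : ContinuousOn σ (stInt a b))
    (hσpos : ∀ x ∈ stInt a b, 0 < (σ x) ^ 2)
    (hMfin : ∀ x ∈ stInt a b, IntegrableOn (mDen μ σ x₀) (Set.Ioo a x))
    (hsa : Tendsto (sDen μ σ x₀) (𝓝[>] a) atTop)
    (c : ℝ → ℝ) (hccont : ContinuousOn c (stInt a b))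
    (hcnn : ∀ x ∈ stInt a b, 0 ≤ c x) (hcmono : MonotoneOn c (stInt a b))
    (ca cb : ℝ) (hca : Tendsto c (𝓝[>] a) (𝓝 ca)) (hcb : Tendsto c (atB b) (𝓝 cb))
    (hca0 : 0 ≤ ca) (hcacb : ca < cb)
    :
    Tendsto (fun q : ℝ × ℝ =>
        (gF μ σ c x₀ a q.2 - gF μ σ c x₀ a q.1) / (xiF μ σ x₀ a q.2 - xiF μ σ x₀ a q.1))
      (((𝓝[>] a) ×ˢ (𝓝[>] a)) ⊓ 𝓟 {q : ℝ × ℝ | q.1 < q.2 ∧ (q.2 : EReal) < b}) (𝓝 ca) ∧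
    (Tendsto (xiF μ σ x₀ a) (𝓝[>] a) atBot →
      ∀ y₀ ∈ stInt a b,
        Tendsto (fun w => gF μ σ c x₀ a w / xiF μ σ x₀ a w) (𝓝[>] a) (𝓝 ca) ∧
        Tendsto (fun w => (gF μ σ c x₀ a y₀ - gF μ σ c x₀ a w) /
            (xiF μ σ x₀ a y₀ - xiF μ σ x₀ a w)) (𝓝[>] a) (𝓝 ca)) := by

  have hne : (𝓝[>] a).NeBot := nhdsGT_neBot a
  have hIooS : ∀ {x : ℝ}, x ∈ stInt a b → Set.Ioo a x ⊆ stInt a b := by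
    intro x hx u hu
    exact ⟨hu.1, lt_trans (EReal.coe_lt_coe_iff.2 hu.2) hx.2⟩
  have hmemS : ∀ {x y z : ℝ}, x ∈ stInt a b → y ∈ stInt a b → min x y ≤ z → z ≤ max x y →
      z ∈ stInt a b := by
    intro x y z hx hy h1 h2
    refine ⟨lt_of_lt_of_le (lt_min hx.1 hy.1) h1, ?_⟩
    rcases le_total x y with h | h
    · rw [max_eq_right h] at h2
      exact lt_of_le_of_lt (EReal.coe_le_coe_iff.2 h2) hy.2
    · rw [max_eq_left h] at h2
      exact lt_of_le_of_lt (EReal.coe_le_coe_iff.2 h2) hx.2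
  have huIcc : ∀ {x y : ℝ}, x ∈ stInt a b → y ∈ stInt a b → Set.uIcc x y ⊆ stInt a b := by
    intro x y hx hy z hz
    rw [Set.mem_uIcc] at hz
    rcases hz with ⟨h1, h2⟩ | ⟨h1, h2⟩
    · exact hmemS hx hy (le_trans (min_le_left _ _) h1) (le_trans h2 (le_max_right _ _))
    · exact hmemS hx hy (le_trans (min_le_right _ _) h1) (le_trans h2 (le_max_left _ _))
  have hSopen : IsOpen (stInt a b) := by
    have : stInt a b = Set.Ioi a ∩ (fun x : ℝ => (x : EReal)) ⁻¹' Set.Iio b := rfl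
    rw [this]
    exact isOpen_Ioi.inter (isOpen_Iio.preimage continuous_coe_real_ereal)
  have hs_pos : ∀ x, 0 < sDen μ σ x₀ x := fun x => Real.exp_pos _
  have hm_pos : ∀ x ∈ stInt a b, 0 < mDen μ σ x₀ x :=
    fun x hx => div_pos two_pos (mul_pos (hσpos x hx) (hs_pos x))
  have hh_cont : ContinuousOn (fun y => 2 * μ y / (σ y) ^ 2) (stInt a b) :=
    (continuousOn_const.mul hμcont).div (hσcont.pow 2) (fun x hx => (hσpos x hx).ne')
  have hh_ii : ∀ {p q : ℝ}, p ∈ stInt a b → q ∈ stInt a b →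
      IntervalIntegrable (fun y => 2 * μ y / (σ y) ^ 2) volume p q :=
    fun hp hq => (hh_cont.mono (huIcc hp hq)).intervalIntegrable
  have hF_cont : ContinuousOn (fun x => ∫ y in x₀..x, 2 * μ y / (σ y) ^ 2) (stInt a b) := by
    intro x hx
    exact ((intervalIntegral.integral_hasDerivAt_right (hh_ii hx₀ hx)
      ((hh_cont.stronglyMeasurableAtFilter hSopen) x hx)
      (hh_cont.continuousAt (hSopen.mem_nhds hx))).continuousAt).continuousWithinAt
  have hs_cont : ContinuousOn (sDen μ σ x₀) (stInt a b) := by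
    show ContinuousOn (fun x => Real.exp (-(∫ y in x₀..x, 2 * μ y / (σ y) ^ 2))) (stInt a b)
    exact Real.continuous_exp.comp_continuousOn hF_cont.neg
  have hca_le : ∀ x ∈ stInt a b, ca ≤ c x := by
    intro x hx
    refine le_of_tendsto hca ?_
    filter_upwards [Ioo_mem_nhdsGT hx.1] with t ht
    exact hcmono (hIooS hx ht) hx ht.2.le
  have hcm_int : ∀ x ∈ stInt a b,
      IntegrableOn (fun u => c u * mDen μ σ x₀ u) (Set.Ioo a x) := by
    intro x hx
    have hmeas : AEStronglyMeasurable (fun u => c u * mDen μ σ x₀ u)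
        (volume.restrict (Set.Ioo a x)) :=
      ((hccont.mono (hIooS hx)).aestronglyMeasurable measurableSet_Ioo).mul
        (hMfin x hx).aestronglyMeasurable
    refine Integrable.mono' ((hMfin x hx).const_mul (c x)) hmeas ?_
    filter_upwards [ae_restrict_mem measurableSet_Ioo] with u hu
    have huS := hIooS hx hu
    have h1 : 0 ≤ c u := le_trans hca0 (hca_le u huS)
    have h2 : c u ≤ c x := hcmono huS hx hu.2.le
    have h3 : 0 < mDen μ σ x₀ u := hm_pos u huS
    rw [Real.norm_eq_abs, abs_of_nonneg (mul_nonneg h1 h3.le)]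
    exact mul_le_mul_of_nonneg_right h2 h3.le
  have hM_pos : ∀ x ∈ stInt a b, 0 < Mab μ σ x₀ a x := by
    intro x hx
    have hnn : 0 ≤ᵐ[volume.restrict (Set.Ioo a x)] mDen μ σ x₀ := by
      filter_upwards [ae_restrict_mem measurableSet_Ioo] with u hu
      exact (hm_pos u (hIooS hx hu)).le
    rw [show Mab μ σ x₀ a x = ∫ u in Set.Ioo a x, mDen μ σ x₀ u from rfl,
      setIntegral_pos_iff_support_of_nonneg_ae hnn (hMfin x hx)]
    refine lt_of_lt_of_le ((Measure.measure_Ioo_pos _).mpr hx.1)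
      (measure_mono (fun u hu => ⟨(hm_pos u (hIooS hx hu)).ne', hu⟩))
  have hM_mono : ∀ {x y : ℝ}, x ∈ stInt a b → y ∈ stInt a b → x ≤ y →
      Mab μ σ x₀ a x ≤ Mab μ σ x₀ a y := by
    intro x y hx hy hxy
    refine setIntegral_mono_set (hMfin y hy) ?_
      (HasSubset.Subset.eventuallyLE (Set.Ioo_subset_Ioo_right hxy))
    filter_upwards [ae_restrict_mem measurableSet_Ioo] with u hu
      using (hm_pos u (hIooS hy hu)).le
  have hI_nonneg : ∀ x ∈ stInt a b, 0 ≤ ∫ u in Set.Ioo a x, c u * mDen μ σ x₀ u := by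
    intro x hx
    refine setIntegral_nonneg measurableSet_Ioo (fun u hu => ?_)
    exact mul_nonneg (le_trans hca0 (hca_le u (hIooS hx hu))) (hm_pos u (hIooS hx hu)).le
  have hI_mono : ∀ {x y : ℝ}, x ∈ stInt a b → y ∈ stInt a b → x ≤ y →
      (∫ u in Set.Ioo a x, c u * mDen μ σ x₀ u) ≤ ∫ u in Set.Ioo a y, c u * mDen μ σ x₀ u := by
    intro x y hx hy hxy
    refine setIntegral_mono_set (hcm_int y hy) ?_
      (HasSubset.Subset.eventuallyLE (Set.Ioo_subset_Ioo_right hxy))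
    filter_upwards [ae_restrict_mem measurableSet_Ioo] with u hu
    exact mul_nonneg (le_trans hca0 (hca_le u (hIooS hy hu))) (hm_pos u (hIooS hy hu)).le
  have hI_bounds : ∀ {v δ : ℝ}, v ∈ stInt a b → δ ∈ stInt a b → v ≤ δ →
      ca * Mab μ σ x₀ a v ≤ (∫ u in Set.Ioo a v, c u * mDen μ σ x₀ u) ∧
      (∫ u in Set.Ioo a v, c u * mDen μ σ x₀ u) ≤ c δ * Mab μ σ x₀ a v := by
    intro v δ hv hδ hvδ
    constructor
    · rw [show Mab μ σ x₀ a v = ∫ u in Set.Ioo a v, mDen μ σ x₀ u from rfl,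
        ← integral_const_mul]
      refine setIntegral_mono_on ((hMfin v hv).const_mul ca) (hcm_int v hv)
        measurableSet_Ioo (fun u hu => ?_)
      exact mul_le_mul_of_nonneg_right (hca_le u (hIooS hv hu)) (hm_pos u (hIooS hv hu)).le
    · rw [show Mab μ σ x₀ a v = ∫ u in Set.Ioo a v, mDen μ σ x₀ u from rfl,
        ← integral_const_mul]
      refine setIntegral_mono_on (hcm_int v hv) ((hMfin v hv).const_mul (c δ))
        measurableSet_Ioo (fun u hu => ?_)
      exact mul_le_mul_of_nonneg_right
        (hcmono (hIooS hv hu) hδ (le_trans hu.2.le hvδ)) (hm_pos u (hIooS hv hu)).le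
  -- general interval integrability for monotone-nonneg `f` times `s`
  have hii : ∀ (f : ℝ → ℝ),
      (∀ {x y : ℝ}, x ∈ stInt a b → y ∈ stInt a b → x ≤ y → f x ≤ f y) →
      (∀ x ∈ stInt a b, 0 ≤ f x) →
      ∀ {p q : ℝ}, p ∈ stInt a b → q ∈ stInt a b →
      IntervalIntegrable (fun v => f v * sDen μ σ x₀ v) volume p q := by
    intro f hfmono hfnn p q hp hq
    rw [intervalIntegrable_iff]
    refine IntegrableOn.mono_set ?_ Set.uIoc_subset_uIcc
    obtain ⟨C, hC⟩ := isCompact_uIcc.exists_bound_of_continuousOn (hs_cont.mono (huIcc hp hq))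
    have hmeasf : AEMeasurable f (volume.restrict (Set.uIcc p q)) :=
      aemeasurable_restrict_of_monotoneOn measurableSet_uIcc
        (fun x hx y hy hxy => hfmono (huIcc hp hq hx) (huIcc hp hq hy) hxy)
    have hmeas : AEStronglyMeasurable (fun v => f v * sDen μ σ x₀ v)
        (volume.restrict (Set.uIcc p q)) :=
      (hmeasf.mul ((hs_cont.mono (huIcc hp hq)).aestronglyMeasurable
        measurableSet_uIcc).aemeasurable).aestronglyMeasurable
    have hrS : p ⊔ q ∈ stInt a b := by
      rcases le_total p q with h | h
      · rw [sup_eq_right.2 h]; exact hq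
      · rw [sup_eq_left.2 h]; exact hp
    refine Integrable.mono' (g := fun _ => f (p ⊔ q) * C)
      (integrableOn_const isCompact_uIcc.measure_lt_top.ne) hmeas ?_
    filter_upwards [ae_restrict_mem measurableSet_uIcc] with v hv
    have hvS := huIcc hp hq hv
    have h1 : 0 ≤ f v := hfnn v hvS
    have h2 : f v ≤ f (p ⊔ q) := hfmono hvS hrS hv.2
    have h3 : sDen μ σ x₀ v ≤ C := le_trans (le_abs_self _) (hC v hv)
    calc ‖f v * sDen μ σ x₀ v‖ = f v * sDen μ σ x₀ v := by
          rw [Real.norm_eq_abs, abs_of_nonneg (mul_nonneg h1 (hs_pos v).le)]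
      _ ≤ f (p ⊔ q) * C := mul_le_mul h2 h3 (hs_pos v).le (le_trans h1 h2)
  have hξii : ∀ {p q : ℝ}, p ∈ stInt a b → q ∈ stInt a b →
      IntervalIntegrable (fun v => Mab μ σ x₀ a v * sDen μ σ x₀ v) volume p q :=
    fun hp hq => hii (Mab μ σ x₀ a) (fun hx hy h => hM_mono hx hy h)
      (fun x hx => (hM_pos x hx).le) hp hq
  have hgii : ∀ {p q : ℝ}, p ∈ stInt a b → q ∈ stInt a b →
      IntervalIntegrable
        (fun v => (∫ u in Set.Ioo a v, c u * mDen μ σ x₀ u) * sDen μ σ x₀ v) volume p q :=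
    fun hp hq => hii (fun x => ∫ u in Set.Ioo a x, c u * mDen μ σ x₀ u)
      (fun hx hy h => hI_mono hx hy h) hI_nonneg hp hq
  have hξdiff : ∀ {w y : ℝ}, w ∈ stInt a b → y ∈ stInt a b →
      xiF μ σ x₀ a y - xiF μ σ x₀ a w
        = ∫ v in w..y, Mab μ σ x₀ a v * sDen μ σ x₀ v := by
    intro w y hw hy
    exact intervalIntegral.integral_interval_sub_left (hξii hx₀ hy) (hξii hx₀ hw)
  have hgdiff : ∀ {w y : ℝ}, w ∈ stInt a b → y ∈ stInt a b →
      gF μ σ c x₀ a y - gF μ σ c x₀ a w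
        = ∫ v in w..y, (∫ u in Set.Ioo a v, c u * mDen μ σ x₀ u) * sDen μ σ x₀ v := by
    intro w y hw hy
    exact intervalIntegral.integral_interval_sub_left (hgii hx₀ hy) (hgii hx₀ hw)
  have hξ_pos : ∀ {w y : ℝ}, w ∈ stInt a b → y ∈ stInt a b → w < y →
      0 < xiF μ σ x₀ a y - xiF μ σ x₀ a w := by
    intro w y hw hy hwy
    rw [hξdiff hw hy]
    refine intervalIntegral.intervalIntegral_pos_of_pos_on (hξii hw hy) (fun v hv => ?_) hwy
    have hvS : v ∈ stInt a b :=
      hmemS hw hy (le_trans (min_le_left _ _) hv.1.le) (le_trans hv.2.le (le_max_right _ _))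
    exact mul_pos (hM_pos v hvS) (hs_pos v)
  have hsand : ∀ {δ w y : ℝ}, δ ∈ stInt a b → a < w → w < y → y ≤ δ →
      ca * (xiF μ σ x₀ a y - xiF μ σ x₀ a w) ≤ gF μ σ c x₀ a y - gF μ σ c x₀ a w ∧
      gF μ σ c x₀ a y - gF μ σ c x₀ a w ≤ c δ * (xiF μ σ x₀ a y - xiF μ σ x₀ a w) := by
    intro δ w y hδ haw hwy hyδ
    have hyS : y ∈ stInt a b :=
      ⟨lt_trans haw hwy, lt_of_le_of_lt (EReal.coe_le_coe_iff.2 hyδ) hδ.2⟩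
    have hwS : w ∈ stInt a b := ⟨haw, lt_trans (EReal.coe_lt_coe_iff.2 hwy) hyS.2⟩
    rw [hgdiff hwS hyS, hξdiff hwS hyS]
    have hIcc : ∀ v ∈ Set.Icc w y, v ∈ stInt a b := fun v hv =>
      hmemS hwS hyS (le_trans (min_le_left _ _) hv.1) (le_trans hv.2 (le_max_right _ _))
    constructor
    · rw [← intervalIntegral.integral_const_mul]
      refine intervalIntegral.integral_mono_on hwy.le ((hξii hwS hyS).const_mul ca)
        (hgii hwS hyS) (fun v hv => ?_)
      have hvS := hIcc v hv
      have h1 := (hI_bounds hvS hδ (le_trans hv.2 hyδ)).1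
      calc ca * (Mab μ σ x₀ a v * sDen μ σ x₀ v)
          = (ca * Mab μ σ x₀ a v) * sDen μ σ x₀ v := by ring
        _ ≤ _ := mul_le_mul_of_nonneg_right h1 (hs_pos v).le
    · rw [← intervalIntegral.integral_const_mul]
      refine intervalIntegral.integral_mono_on hwy.le (hgii hwS hyS)
        ((hξii hwS hyS).const_mul (c δ)) (fun v hv => ?_)
      have hvS := hIcc v hv
      have h1 := (hI_bounds hvS hδ (le_trans hv.2 hyδ)).2
      calc (∫ u in Set.Ioo a v, c u * mDen μ σ x₀ u) * sDen μ σ x₀ v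
          ≤ (c δ * Mab μ σ x₀ a v) * sDen μ σ x₀ v :=
            mul_le_mul_of_nonneg_right h1 (hs_pos v).le
        _ = c δ * (Mab μ σ x₀ a v * sDen μ σ x₀ v) := by ring
  constructor
  · rw [Metric.tendsto_nhds]
    intro ε hε
    obtain ⟨δ, hδIoo, hδc⟩ : ∃ δ, δ ∈ Set.Ioo a x₀ ∧ c δ < ca + ε := by
      have h1 : ∀ᶠ t in 𝓝[>] a, c t < ca + ε :=
        hca (Iio_mem_nhds (by linarith))
      have h2 : ∀ᶠ t in 𝓝[>] a, t ∈ Set.Ioo a x₀ :=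
        Ioo_mem_nhdsGT hx₀.1
      exact (h2.and h1).exists
    have hδS : δ ∈ stInt a b := hIooS hx₀ hδIoo
    have hmemIoo : Set.Ioo a δ ∈ 𝓝[>] a := Ioo_mem_nhdsGT hδIoo.1
    rw [Filter.eventually_inf_principal]
    filter_upwards [Filter.prod_mem_prod hmemIoo hmemIoo] with q hq hq2
    obtain ⟨hq1, hq2'⟩ := hq
    obtain ⟨hlt, hb⟩ := hq2
    have hwS : q.1 ∈ stInt a b := hIooS hδS hq1
    have hyS : q.2 ∈ stInt a b := hIooS hδS hq2'
    have hsw := hsand hδS hq1.1 hlt hq2'.2.le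
    have hξp : 0 < xiF μ σ x₀ a q.2 - xiF μ σ x₀ a q.1 := hξ_pos hwS hyS hlt
    have hr1 : ca ≤ (gF μ σ c x₀ a q.2 - gF μ σ c x₀ a q.1) /
        (xiF μ σ x₀ a q.2 - xiF μ σ x₀ a q.1) := (le_div_iff₀ hξp).2 hsw.1
    have hr2 : (gF μ σ c x₀ a q.2 - gF μ σ c x₀ a q.1) /
        (xiF μ σ x₀ a q.2 - xiF μ σ x₀ a q.1) ≤ c δ := (div_le_iff₀ hξp).2 hsw.2
    rw [Real.dist_eq, abs_sub_lt_iff]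
    constructor <;> linarith
  · intro hξbot y₀ hy₀
    have L : ∀ y₁ ∈ stInt a b,
        Tendsto (fun w => (gF μ σ c x₀ a y₁ - gF μ σ c x₀ a w) /
          (xiF μ σ x₀ a y₁ - xiF μ σ x₀ a w)) (𝓝[>] a) (𝓝 ca) := by
      intro y₁ hy₁
      rw [Metric.tendsto_nhds]
      intro ε hε
      have hε' : 0 < ε / 2 := by linarith
      obtain ⟨δ, hδIoo, hδc⟩ : ∃ δ, δ ∈ Set.Ioo a (min x₀ y₁) ∧ c δ < ca + ε / 2 := by
        have h1 : ∀ᶠ t in 𝓝[>] a, c t < ca + ε / 2 := hca (Iio_mem_nhds (by linarith))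
        have h2 : ∀ᶠ t in 𝓝[>] a, t ∈ Set.Ioo a (min x₀ y₁) :=
          Ioo_mem_nhdsGT (lt_min hx₀.1 hy₁.1)
        exact (h2.and h1).exists
      have hδy₁ : δ < y₁ := lt_of_lt_of_le hδIoo.2 (min_le_right _ _)
      have hδS : δ ∈ stInt a b := ⟨hδIoo.1, lt_trans (EReal.coe_lt_coe_iff.2 hδy₁) hy₁.2⟩
      set A := gF μ σ c x₀ a y₁ - gF μ σ c x₀ a δ with hA
      set B := xiF μ σ x₀ a y₁ - xiF μ σ x₀ a δ with hB
      have hBpos : 0 < B := hξ_pos hδS hy₁ hδy₁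
      set K := |A - ca * B| / (ε / 2) + 1 with hK
      have hKpos : 0 < K := by positivity
      have hKval : (ε / 2) * K = |A - ca * B| + ε / 2 := by
        rw [hK]
        field_simp
      have hev2 : ∀ᶠ w in 𝓝[>] a, xiF μ σ x₀ a w < xiF μ σ x₀ a y₁ - K :=
        hξbot.eventually (eventually_lt_atBot _)
      filter_upwards [Ioo_mem_nhdsGT hδIoo.1, hev2] with w hw hwK
      have hwS : w ∈ stInt a b := ⟨hw.1, lt_trans (EReal.coe_lt_coe_iff.2 hw.2) hδS.2⟩
      set D := xiF μ σ x₀ a δ - xiF μ σ x₀ a w with hD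
      have hDpos : 0 < D := hξ_pos hwS hδS hw.2
      have hsw := hsand hδS hw.1 hw.2 (le_refl δ)
      have hden : xiF μ σ x₀ a y₁ - xiF μ σ x₀ a w = B + D := by rw [hB, hD]; ring
      have hnum : gF μ σ c x₀ a y₁ - gF μ σ c x₀ a w
          = A + (gF μ σ c x₀ a δ - gF μ σ c x₀ a w) := by rw [hA]; ring
      set G := gF μ σ c x₀ a δ - gF μ σ c x₀ a w with hG
      have hdenK : K < B + D := by
        have : K < xiF μ σ x₀ a y₁ - xiF μ σ x₀ a w := by linarith
        linarith [hden ▸ this]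
      have hdenpos : 0 < B + D := lt_trans hKpos hdenK
      have h2 : |G - ca * D| ≤ (ε / 2) * D := by
        rw [abs_le]
        constructor <;> nlinarith [hsw.1, hsw.2, hDpos.le, hδc.le]
      rw [Real.dist_eq, hnum, hden]
      have heq : (A + G) / (B + D) - ca = (A - ca * B + (G - ca * D)) / (B + D) := by
        field_simp
        ring
      rw [heq, abs_div, abs_of_pos hdenpos, div_lt_iff₀ hdenpos]
      have h3 : |A - ca * B + (G - ca * D)| ≤ |A - ca * B| + (ε / 2) * D :=
        le_trans (abs_add_le _ _) (by linarith [abs_add_le (A - ca * B) (G - ca * D), h2])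
      have h4 : (ε / 2) * K < (ε / 2) * (B + D) := mul_lt_mul_of_pos_left hdenK hε'
      have e1 : (ε / 2) * (B + D) = (ε / 2) * B + (ε / 2) * D := by ring
      have e2 : ε * (B + D) = (ε / 2) * B + (ε / 2) * B + ((ε / 2) * D + (ε / 2) * D) := by ring
      have hBε : 0 < (ε / 2) * B := mul_pos hε' hBpos
      have hDε : 0 < (ε / 2) * D := mul_pos hε' hDpos
      calc |A - ca * B + (G - ca * D)| ≤ |A - ca * B| + (ε / 2) * D := h3
        _ < ε * (B + D) := by linarith [hKval, h4, e1, e2, hBε, hDε, hε']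
    refine ⟨(L x₀ hx₀).congr (fun w => ?_), L y₀ hy₀⟩
    have hg0 : gF μ σ c x₀ a x₀ = 0 := intervalIntegral.integral_same
    have hξ0 : xiF μ σ x₀ a x₀ = 0 := intervalIntegral.integral_same
    rw [hg0, hξ0, zero_sub, zero_sub, neg_div_neg_eq]
end
end
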